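/- arXiv:2103.09132 — 10 statements merged into one kernel-verified Lean document; each statement's English description precedes it below -/
import Mathlib

section
/- Let M be a lattice of rank r ≥ 2 and let 𝔬 ∈ M satisfy (𝔬.𝔬) = 3. Suppose (𝔬, e₁, …, e_{r−1}) is a basis of M. Then 𝔬 is a distinguished element of M if and only if the integer (eᵢ.eᵢ) − (𝔬.eᵢ) is even for every 1 ≤ i ≤ r − 1. -/
/-- Let `M` be a lattice of rank `r = n + 1 ≥ 2` with nondegenerate symmetric
bilinear form `B`, and let `(𝔬, e₁, …, eₙ)` be a basis of `M` (here `𝔬 = b 0`,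
`eᵢ = b i.succ`) with `(𝔬.𝔬) = 3`.  Then `𝔬` is a distinguished element of `M`
(i.e. the orthogonal complement `⟨𝔬⟩⊥` is even) if and only if
`(eᵢ.eᵢ) − (𝔬.eᵢ)` is even for every `i`. -/
theorem distinguished_iff_even_diagonal
    {M : Type*} [AddCommGroup M] [Module ℤ M]
    (n : ℕ) (hn : 1 ≤ n)
    (B : M →ₗ[ℤ] M →ₗ[ℤ] ℤ)
    (hsymm : ∀ x y : M, B x y = B y x)
    (hnondeg : ∀ x : M, (∀ y : M, B x y = 0) → x = 0)
    (b : Module.Basis (Fin (n + 1)) ℤ M)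
    (o : M) (ho : b 0 = o) (ho3 : B o o = 3) :
    (∀ x : M, B x o = 0 → Even (B x x)) ↔
      ∀ i : Fin n, Even (B (b i.succ) (b i.succ) - B o (b i.succ)) := by
  have key : ∀ z : ℤ, Even z ↔ ((z : ZMod 2) = 0) := fun z => by
    rw [show Even z ↔ (2:ℤ) ∣ z from ⟨fun ⟨k,hk⟩ => ⟨k, by omega⟩, fun ⟨k,hk⟩ => ⟨k, by omega⟩⟩,
      ← show ((2:ℕ):ℤ) = 2 by norm_num, ← ZMod.intCast_zmod_eq_zero_iff_dvd]
  have sq2 : ∀ x : ZMod 2, x * x = x := by decide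
  constructor
  · intro h i
    set a := B o (b i.succ) with ha
    set q := B (b i.succ) (b i.succ) with hq
    have hx0 : B ((3:ℤ) • b i.succ - a • o) o = 0 := by
      simp only [map_sub, LinearMap.sub_apply]
      simp [Int.cast_smul_eq_zsmul, hsymm (b i.succ) o, ho3, ← ha]
      ring
    have he := h _ hx0
    have hxx : B ((3:ℤ) • b i.succ - a • o) ((3:ℤ) • b i.succ - a • o)
        = 9 * q - 3 * (a * a) := by
      simp only [map_sub, LinearMap.sub_apply]
      simp [Int.cast_smul_eq_zsmul, hsymm (b i.succ) o, ho3, ← ha, ← hq]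
      ring
    rw [hxx, key] at he
    rw [key]
    push_cast at he ⊢
    rw [sq2] at he
    have h9 : (9 : ZMod 2) = 1 := by decide
    have h3 : (3 : ZMod 2) = 1 := by decide
    rw [h9, h3, one_mul, one_mul] at he
    linear_combination he
  · intro h x hxo
    set Q : M → ZMod 2 := fun y => ((B y y : ℤ) : ZMod 2) with hQ
    have hadd : ∀ y z : M, Q (y + z) = Q y + Q z := by
      intro y z
      have hyz : B (y+z) (y+z) = B y y + B z z + 2 * B y z := by
        simp only [map_add, LinearMap.add_apply, hsymm z y]; ring
      simp only [hQ, hyz]; push_cast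
      have h2 : (2 : ZMod 2) = 0 := by decide
      rw [h2]; ring
    have hsmul : ∀ (c : ℤ) (y : M), Q (c • y) = (c : ZMod 2) * Q y := by
      intro c y
      have hc : B (c • y) (c • y) = c * (c * B y y) := by
        simp [Int.cast_smul_eq_zsmul]
      simp only [hQ, hc]; push_cast
      rw [← mul_assoc, sq2]
    have hQ0 : Q 0 = 0 := by simp [hQ]
    have hQsum : ∀ (s : Finset (Fin (n+1))) (g : Fin (n+1) → M),
        Q (∑ j ∈ s, g j) = ∑ j ∈ s, Q (g j) := by
      intro s g
      induction s using Finset.induction_on with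
      | empty => simpa using hQ0
      | insert _ _ hj ih => rw [Finset.sum_insert hj, Finset.sum_insert hj, hadd, ih]
    have hFx : Q x = ∑ j, ((b.repr x j : ℤ) : ZMod 2) * Q (b j) := by
      conv_lhs => rw [← b.sum_repr x]
      rw [hQsum]
      refine Finset.sum_congr rfl fun j _ => ?_
      have hs := hsmul (b.repr x j) (b j)
      rw [← Int.cast_smul_eq_zsmul ℤ] at hs
      exact hs
    have hF0 : Q (b 0) = 1 := by
      simp only [hQ, ho, ho3]; decide
    have hFi : ∀ i : Fin n, Q (b i.succ) = ((B o (b i.succ) : ℤ) : ZMod 2) := by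
      intro i
      have := (key _).mp (h i)
      push_cast at this
      simp only [hQ]
      linear_combination this
    have hBxo : B x o = ∑ j, b.repr x j * B (b j) o := by
      conv_lhs => rw [← b.sum_repr x]
      simp [Int.cast_smul_eq_zsmul, -Module.Basis.sum_repr]
    have hc : (0 : ZMod 2)
        = ∑ j, ((b.repr x j : ℤ) : ZMod 2) * ((B (b j) o : ℤ) : ZMod 2) := by
      have h1 := hBxo
      rw [hxo] at h1
      have h2 := congrArg (fun z : ℤ => ((z : ZMod 2))) h1
      push_cast at h2
      simpa using h2
    rw [key]
    show Q x = 0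
    rw [hFx, Fin.sum_univ_succ, hF0, mul_one]
    have hc' : (0 : ZMod 2) = ((b.repr x 0 : ℤ) : ZMod 2)
        + ∑ i : Fin n, ((b.repr x i.succ : ℤ) : ZMod 2) * ((B o (b i.succ) : ℤ) : ZMod 2) := by
      rw [hc, Fin.sum_univ_succ, ho, ho3]
      have h3 : ((3:ℤ) : ZMod 2) = 1 := by decide
      rw [h3, mul_one]
      congr 1
      exact Finset.sum_congr rfl fun i _ => by rw [hsymm (b i.succ) o]
    rw [show (∑ i : Fin n, ((b.repr x i.succ : ℤ) : ZMod 2) * Q (b i.succ))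
        = ∑ i : Fin n, ((b.repr x i.succ : ℤ) : ZMod 2) * ((B o (b i.succ) : ℤ) : ZMod 2)
      from Finset.sum_congr rfl fun i _ => by rw [hFi]]
    linear_combination hc'.symm
end

section
/- Let M be a rank three positive definite lattice containing a distinguished element 𝔬. Then disc(M) ≡ 0 or 1 (mod 4). -/
set_option maxRecDepth 100000 in
set_option maxHeartbeats 2000000 in
private theorem core_disc_aux : ∀ (g11 g22 g33 g12 g13 g23 : ZMod 4) (b1 b2 b3 : Bool),
    (cond b1 1 0 : ZMod 4) * (g11*(cond b1 1 0)+g12*(cond b2 1 0)+g13*(cond b3 1 0)) + (cond b2 1 0)*(g12*(cond b1 1 0)+g22*(cond b2 1 0)+g23*(cond b3 1 0)) + (cond b3 1 0)*(g13*(cond b1 1 0)+g23*(cond b2 1 0)+g33*(cond b3 1 0)) = 3 →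
    2*((g11*(cond b1 1 0)+g12*(cond b2 1 0)+g13*(cond b3 1 0)) - g11) = 0 →
    2*((g12*(cond b1 1 0)+g22*(cond b2 1 0)+g23*(cond b3 1 0)) - g22) = 0 →
    2*((g13*(cond b1 1 0)+g23*(cond b2 1 0)+g33*(cond b3 1 0)) - g33) = 0 →
    g11*(g22*g33-g23*g23)-g12*(g12*g33-g23*g13)+g13*(g12*g23-g22*g13) = 0 ∨
    g11*(g22*g33-g23*g23)-g12*(g12*g33-g23*g13)+g13*(g12*g23-g22*g13) = 1 := by decide

/-- Let `M` be a rank three positive definite lattice containing a distinguished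
element `𝔬` (i.e. `(𝔬.𝔬) = 3` and `⟨𝔬⟩⊥` is even).  Then the discriminant of `M`
(the determinant of the Gram matrix with respect to any basis) is `≡ 0` or `1 (mod 4)`. -/
theorem disc_rank_three_distinguished_mod_four
    {M : Type*} [AddCommGroup M] [Module ℤ M]
    (B : M →ₗ[ℤ] M →ₗ[ℤ] ℤ)
    (hsymm : ∀ x y : M, B x y = B y x)
    (hpos : ∀ x : M, x ≠ 0 → 0 < B x x)
    (o : M) (ho3 : B o o = 3)
    (hoEven : ∀ x : M, B x o = 0 → Even (B x x))
    (b : Module.Basis (Fin 3) ℤ M) :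
    (Matrix.of fun i j => B (b i) (b j)).det % 4 = 0 ∨
    (Matrix.of fun i j => B (b i) (b j)).det % 4 = 1 := by
  have hsum : b.repr o 0 • b 0 + b.repr o 1 • b 1 + b.repr o 2 • b 2 = o := by
    have := b.sum_repr o
    rw [Fin.sum_univ_three] at this
    simpa only [← Int.cast_smul_eq_zsmul ℤ, Int.cast_id] using this
  set a0 := b.repr o 0 with ha0d
  set a1 := b.repr o 1 with ha1d
  set a2 := b.repr o 2 with ha2d
  have hv : ∀ i : Fin 3, B (b i) o =
      B (b i) (b 0) * a0 + B (b i) (b 1) * a1 + B (b i) (b 2) * a2 := by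
    intro i
    rw [← hsum]
    simp [map_add, map_smul, smul_eq_mul]
    ring
  have h3 : a0 * B (b 0) o + a1 * B (b 1) o + a2 * B (b 2) o = 3 := by
    have h := congrArg (fun x => B x o) hsum
    simpa [map_add, map_smul, smul_eq_mul, LinearMap.add_apply, LinearMap.smul_apply] using
      h.trans ho3
  have hEv : ∀ i : Fin 3, Even (9 * B (b i) (b i) - 3 * (B (b i) o * B (b i) o)) := by
    intro i
    have h0 : B ((3:ℤ) • b i - (B (b i) o) • o) o = 0 := by
      simp [map_sub, map_smul, smul_eq_mul, ho3]; ring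
    have hE := hoEven _ h0
    have heq : B ((3:ℤ) • b i - (B (b i) o) • o) ((3:ℤ) • b i - (B (b i) o) • o)
        = 9 * B (b i) (b i) - 3 * (B (b i) o * B (b i) o) := by
      simp [map_sub, map_smul, smul_eq_mul, LinearMap.sub_apply, LinearMap.smul_apply, ho3]
      rw [hsymm o (b i)]
      ring
    rwa [heq] at hE
  -- parity: B (b i) (b i) ≡ B (b i) o  (mod 2)
  have hpar : ∀ i : Fin 3, (B (b i) (b i) - B (b i) o) % 2 = 0 := by
    intro i
    obtain ⟨m, hm⟩ := hEv i
    have hvv : (B (b i) o * B (b i) o) % 2 = B (b i) o % 2 := by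
      rcases Int.even_or_odd (B (b i) o) with ⟨k, hk⟩ | ⟨k, hk⟩ <;> rw [hk] <;> ring_nf <;> omega
    omega
  -- split a_i = 2 e_i + c_i with c_i ∈ {0,1}
  obtain ⟨e0, c0, hc0, hsp0⟩ : ∃ e c : ℤ, (c = 0 ∨ c = 1) ∧ a0 = 2*e + c :=
    ⟨a0 / 2, a0 % 2, by omega, by omega⟩
  obtain ⟨e1, c1, hc1, hsp1⟩ : ∃ e c : ℤ, (c = 0 ∨ c = 1) ∧ a1 = 2*e + c :=
    ⟨a1 / 2, a1 % 2, by omega, by omega⟩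
  obtain ⟨e2, c2, hc2, hsp2⟩ : ∃ e c : ℤ, (c = 0 ∨ c = 1) ∧ a2 = 2*e + c :=
    ⟨a2 / 2, a2 % 2, by omega, by omega⟩
  -- symmetric entries
  have hs10 : B (b 1) (b 0) = B (b 0) (b 1) := hsymm _ _
  have hs20 : B (b 2) (b 0) = B (b 0) (b 2) := hsymm _ _
  have hs21 : B (b 2) (b 1) = B (b 1) (b 2) := hsymm _ _
  -- abbreviations
  set g00 := B (b 0) (b 0) with hg00
  set g11 := B (b 1) (b 1) with hg11
  set g22 := B (b 2) (b 2) with hg22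
  set g01 := B (b 0) (b 1) with hg01
  set g02 := B (b 0) (b 2) with hg02
  set g12 := B (b 1) (b 2) with hg12
  -- w_i = i-th coordinate of G c
  -- key congruence mod 4 for the value of the form at c
  have key : (c0*(g00*c0+g01*c1+g02*c2) + c1*(g01*c0+g11*c1+g12*c2)
      + c2*(g02*c0+g12*c1+g22*c2)) % 4 = 3 % 4 := by
    have hexp : a0 * B (b 0) o + a1 * B (b 1) o + a2 * B (b 2) o
        = (c0*(g00*c0+g01*c1+g02*c2) + c1*(g01*c0+g11*c1+g12*c2)
          + c2*(g02*c0+g12*c1+g22*c2))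
          + 4 * (g00*(e0*c0+e0*e0) + g11*(e1*c1+e1*e1) + g22*(e2*c2+e2*e2)
            + g01*(e0*c1+c0*e1+2*e0*e1) + g02*(e0*c2+c0*e2+2*e0*e2)
            + g12*(e1*c2+c1*e2+2*e1*e2)) := by
      rw [hv 0, hv 1, hv 2, hs10, hs20, hs21, hsp0, hsp1, hsp2]
      ring
    omega
  -- congruences mod 2 for the coordinates of G c
  have hw0 : ((g00*c0+g01*c1+g02*c2) - g00) % 2 = 0 := by
    have h := hpar 0
    have hexp : B (b 0) o = (g00*c0+g01*c1+g02*c2) + 2*(g00*e0+g01*e1+g02*e2) := by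
      rw [hv 0, hsp0, hsp1, hsp2]; ring
    omega
  have hw1 : ((g01*c0+g11*c1+g12*c2) - g11) % 2 = 0 := by
    have h := hpar 1
    have hexp : B (b 1) o = (g01*c0+g11*c1+g12*c2) + 2*(g01*e0+g11*e1+g12*e2) := by
      rw [hv 1, hs10, hsp0, hsp1, hsp2]; ring
    omega
  have hw2 : ((g02*c0+g12*c1+g22*c2) - g22) % 2 = 0 := by
    have h := hpar 2
    have hexp : B (b 2) o = (g02*c0+g12*c1+g22*c2) + 2*(g02*e0+g12*e1+g22*e2) := by
      rw [hv 2, hs20, hs21, hsp0, hsp1, hsp2]; ring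
    omega
  -- determinant in terms of the entries
  have hdet : (Matrix.of fun i j => B (b i) (b j)).det
      = g00*(g11*g22-g12*g12)-g01*(g01*g22-g12*g02)+g02*(g01*g12-g11*g02) := by
    rw [Matrix.det_fin_three]
    simp only [Matrix.of_apply]
    rw [hs10, hs20, hs21]
    ring
  -- booleans
  have hcond : ∀ c : ℤ, (c = 0 ∨ c = 1) →
      (cond (decide (c = 1)) 1 0 : ZMod 4) = (c : ZMod 4) := by
    rintro c (rfl | rfl) <;> simp
  -- cast helper
  have hdvd4 : ∀ x : ℤ, x % 4 = 0 → ((x : ZMod 4) = 0) := fun x hx =>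
    (ZMod.intCast_zmod_eq_zero_iff_dvd x 4).mpr (by omega)
  rcases core_disc_aux (g00 : ZMod 4) (g11 : ZMod 4) (g22 : ZMod 4)
      (g01 : ZMod 4) (g02 : ZMod 4) (g12 : ZMod 4)
      (decide (c0 = 1)) (decide (c1 = 1)) (decide (c2 = 1))
      (by
        rw [hcond c0 hc0, hcond c1 hc1, hcond c2 hc2]
        have := hdvd4 _ (show (c0*(g00*c0+g01*c1+g02*c2) + c1*(g01*c0+g11*c1+g12*c2)
          + c2*(g02*c0+g12*c1+g22*c2) - 3) % 4 = 0 by omega)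
        push_cast at this
        linear_combination this)
      (by
        rw [hcond c0 hc0, hcond c1 hc1, hcond c2 hc2]
        have := hdvd4 _ (show (2*((g00*c0+g01*c1+g02*c2) - g00)) % 4 = 0 by omega)
        push_cast at this
        linear_combination this)
      (by
        rw [hcond c0 hc0, hcond c1 hc1, hcond c2 hc2]
        have := hdvd4 _ (show (2*((g01*c0+g11*c1+g12*c2) - g11)) % 4 = 0 by omega)
        push_cast at this
        linear_combination this)
      (by
        rw [hcond c0 hc0, hcond c1 hc1, hcond c2 hc2]
        have := hdvd4 _ (show (2*((g02*c0+g12*c1+g22*c2) - g22)) % 4 = 0 by omega)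
        push_cast at this
        linear_combination this)
      with hfin | hfin
  · left
    have : ((g00*(g11*g22-g12*g12)-g01*(g01*g22-g12*g02)+g02*(g01*g12-g11*g02) : ℤ) : ZMod 4)
        = 0 := by push_cast; linear_combination hfin
    have hdd := (ZMod.intCast_zmod_eq_zero_iff_dvd _ 4).mp this
    rw [hdet]; omega
  · right
    have : ((g00*(g11*g22-g12*g12)-g01*(g01*g22-g12*g02)+g02*(g01*g12-g11*g02) - 1 : ℤ)
        : ZMod 4) = 0 := by push_cast; linear_combination hfin
    have hdd := (ZMod.intCast_zmod_eq_zero_iff_dvd _ 4).mp this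
    rw [hdet]; omega
end

section
/- Let M be a positive definite lattice containing a distinguished element 𝔬₁. If 𝔬₂ is another distinguished element of M, then there is an isometry f ∈ O(M) (a bilinear-form-preserving ℤ-linear automorphism of M) such that f(𝔬₁) = 𝔬₂. -/
lemma refl_isometry_aux {M : Type*} [AddCommGroup M]
    (B : M →ₗ[ℤ] M →ₗ[ℤ] ℤ) (hsymm : ∀ x y : M, B x y = B y x)
    (v : M) (hv : B v v = 4) (hev : ∀ x : M, Even (B x v)) :
    ∃ f : M ≃ₗ[ℤ] M, (∀ x y : M, B (f x) (f y) = B x y) ∧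
      (∀ x : M, f x = x - (B x v / 2) • v) := by
  have hdiv : ∀ x : M, 2 * (B x v / 2) = B x v := by
    intro x; obtain ⟨m, hm⟩ := hev x; omega
  let c : M →ₗ[ℤ] ℤ :=
  { toFun := fun x => B x v / 2
    map_add' := by
      intro x y
      obtain ⟨m, hm⟩ := hev x
      obtain ⟨n, hn⟩ := hev y
      have h : B (x + y) v = B x v + B y v := by simp
      simp only [h, hm, hn]
      omega
    map_smul' := by
      intro r x
      obtain ⟨m, hm⟩ := hev x
      have h : B (r • x) v = r * B x v := by simp [LinearMap.map_smul_of_tower]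
      have key2 : B (r • x) v / 2 = r * (B x v / 2) := by
        rw [h, hm]
        have h1 : (m + m) / 2 = m := by omega
        have h2 : r * (m + m) = 2 * (r * m) := by ring
        rw [h1, h2, Int.mul_ediv_cancel_left _ (by norm_num)]
      simpa using key2 }
  let f : M →ₗ[ℤ] M := LinearMap.id - LinearMap.smulRight c v
  have hf : ∀ x : M, f x = x - (B x v / 2) • v := by
    intro x
    rfl
  have hBfv : ∀ x : M, B (f x) v = - B x v := by
    intro x
    rw [hf]
    simp only [map_sub, LinearMap.map_smul_of_tower, LinearMap.sub_apply,
      LinearMap.smul_apply, smul_eq_mul, hv]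
    have := hdiv x
    omega
  have hinv : ∀ x : M, f (f x) = x := by
    intro x
    rw [hf (f x), hBfv x, hf x]
    have h1 : (- B x v) / 2 = - (B x v / 2) := by have := hdiv x; omega
    rw [h1, neg_smul, sub_neg_eq_add, sub_add_cancel]
  refine ⟨LinearEquiv.ofLinear f f (by ext x; exact hinv x) (by ext x; exact hinv x),
    ?_, fun x => hf x⟩
  intro x y
  show B (f x) (f y) = B x y
  rw [hf x, hf y]
  obtain ⟨p, hp⟩ := hev x
  obtain ⟨q, hq⟩ := hev y
  have hp2 : B x v / 2 = p := by omega
  have hq2 : B y v / 2 = q := by omega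
  have hvy : B v y = B y v := hsymm v y
  simp only [map_sub, map_smul, LinearMap.map_smul_of_tower, LinearMap.sub_apply,
    LinearMap.smul_apply, smul_eq_mul, hv, hvy]
  rw [hp2, hq2, hp, hq]
  ring

/-- Let `M` be a positive definite lattice containing a distinguished element `𝔬₁`
(i.e. `(𝔬₁.𝔬₁) = 3` and `⟨𝔬₁⟩⊥` is even).  If `𝔬₂` is another distinguished element
of `M`, then there is an isometry `f ∈ O(M)` with `f 𝔬₁ = 𝔬₂`. -/
theorem exists_isometry_mapping_distinguished
    {M : Type*} [AddCommGroup M] [Module ℤ M] [Module.Free ℤ M] [Module.Finite ℤ M]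
    (B : M →ₗ[ℤ] M →ₗ[ℤ] ℤ)
    (hsymm : ∀ x y : M, B x y = B y x)
    (hpos : ∀ x : M, x ≠ 0 → 0 < B x x)
    (o₁ o₂ : M)
    (ho₁ : B o₁ o₁ = 3) (ho₁Even : ∀ x : M, B x o₁ = 0 → Even (B x x))
    (ho₂ : B o₂ o₂ = 3) (ho₂Even : ∀ x : M, B x o₂ = 0 → Even (B x x)) :
    ∃ f : M ≃ₗ[ℤ] M, (∀ x y : M, B (f x) (f y) = B x y) ∧ f o₁ = o₂ := by
  rename_i iAG iM iF iFin
  letI : Unique (Module ℤ M) := AddCommGroup.uniqueIntModule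
  have hMod : iM = AddCommGroup.toIntModule M := Subsingleton.elim _ _
  subst hMod
  clear iF iFin
  have hpos' : ∀ x : M, B x x = 0 → x = 0 := by
    intro x hx
    by_contra h
    exact absurd hx (by have := hpos x h; omega)
  -- parity lemma: B x x ≡ B x o [mod 2] for a distinguished o
  have key : ∀ o : M, B o o = 3 → (∀ x : M, B x o = 0 → Even (B x x)) →
      ∀ x : M, B x x % 2 = B x o % 2 := by
    intro o ho hoE x
    have h0 : B ((3 : ℤ) • x - (B x o) • o) o = 0 := by
      simp only [map_sub, LinearMap.map_smul_of_tower, LinearMap.sub_apply,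
        LinearMap.smul_apply, smul_eq_mul, ho]
      ring
    obtain ⟨m, hm⟩ := hoE _ h0
    have hyy : B ((3 : ℤ) • x - (B x o) • o) ((3 : ℤ) • x - (B x o) • o)
        = 9 * B x x - 3 * (B x o * B x o) := by
      simp only [map_sub, map_smul, LinearMap.map_smul_of_tower, LinearMap.sub_apply,
        LinearMap.smul_apply, smul_eq_mul, hsymm o x, ho]
      ring
    rw [hyy] at hm
    rcases Int.even_or_odd (B x o) with ⟨k, hk⟩ | ⟨k, hk⟩
    · rw [hk] at hm ⊢
      have e : (k + k) * (k + k) = 4 * (k * k) := by ring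
      rw [e] at hm
      generalize k * k = K at hm
      omega
    · rw [hk] at hm ⊢
      have e : (2 * k + 1) * (2 * k + 1) = 4 * (k * k) + 4 * k + 1 := by ring
      rw [e] at hm
      generalize k * k = K at hm
      omega
  set a := B o₁ o₂ with ha
  have hodd : a % 2 = 1 := by
    have h1 := key o₁ ho₁ ho₁Even o₂
    rw [ho₂, hsymm o₂ o₁, ← ha] at h1
    omega
  -- Cauchy–Schwarz
  have hCS : a * a ≤ 9 := by
    set w := (3 : ℤ) • o₂ - a • o₁ with hw
    have hww : B w w = 27 - 3 * (a * a) := by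
      simp only [hw, map_sub, map_smul, LinearMap.map_smul_of_tower, LinearMap.sub_apply,
        LinearMap.smul_apply, smul_eq_mul, ho₁, ho₂, hsymm o₂ o₁, ← ha]
      ring
    by_cases h : w = 0
    · rw [h] at hww; simp at hww; nlinarith
    · have := hpos w h
      nlinarith
  have hcases : a = 3 ∨ a = -3 ∨ a = 1 ∨ a = -1 := by
    have hle : a ≤ 3 := by nlinarith
    have hge : -3 ≤ a := by nlinarith
    omega
  rcases hcases with h3 | hm3 | h1 | hm1
  · -- o₁ = o₂
    have h0 : B (o₁ - o₂) (o₁ - o₂) = 0 := by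
      simp only [map_sub, LinearMap.sub_apply, ho₁, ho₂, hsymm o₂ o₁, ← ha, h3]
      ring
    have heq : o₁ = o₂ := by
      have := hpos' _ h0
      rwa [sub_eq_zero] at this
    exact ⟨LinearEquiv.refl ℤ M, fun x y => rfl, heq⟩
  · -- o₂ = -o₁
    have h0 : B (o₁ + o₂) (o₁ + o₂) = 0 := by
      simp only [map_add, LinearMap.add_apply, ho₁, ho₂, hsymm o₂ o₁, ← ha, hm3]
      ring
    have heq : o₂ = -o₁ := by
      have h := hpos' _ h0
      rw [add_eq_zero_iff_eq_neg] at h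
      rw [h, neg_neg]
    refine ⟨LinearEquiv.neg ℤ, fun x y => by simp, ?_⟩
    simp [LinearEquiv.neg_apply, heq]
  · -- reflection in v = o₁ - o₂
    have hvv : B (o₁ - o₂) (o₁ - o₂) = 4 := by
      simp only [map_sub, LinearMap.sub_apply, ho₁, ho₂, hsymm o₂ o₁, ← ha, h1]
      ring
    have hev : ∀ x : M, Even (B x (o₁ - o₂)) := by
      intro x
      have hx1 := key o₁ ho₁ ho₁Even x
      have hx2 := key o₂ ho₂ ho₂Even x
      have hx : B x (o₁ - o₂) = B x o₁ - B x o₂ := by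
        simp [map_sub]
      rw [Int.even_iff, hx]
      omega
    obtain ⟨f, hfB, hfx⟩ := refl_isometry_aux B hsymm _ hvv hev
    refine ⟨f, hfB, ?_⟩
    have hBo₁v : B o₁ (o₁ - o₂) = 2 := by
      simp only [map_sub, ho₁, ← ha, h1]
      ring
    have hone : ((2 : ℤ) / 2) • (o₁ - o₂) = o₁ - o₂ := by norm_num
    rw [hfx o₁, hBo₁v, hone]
    abel
  · -- reflection in v = o₁ + o₂, composed with -1
    have hvv : B (o₁ + o₂) (o₁ + o₂) = 4 := by
      simp only [map_add, LinearMap.add_apply, ho₁, ho₂, hsymm o₂ o₁, ← ha, hm1]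
      ring
    have hev : ∀ x : M, Even (B x (o₁ + o₂)) := by
      intro x
      have hx1 := key o₁ ho₁ ho₁Even x
      have hx2 := key o₂ ho₂ ho₂Even x
      have hx : B x (o₁ + o₂) = B x o₁ + B x o₂ := by
        simp [map_add]
      rw [Int.even_iff, hx]
      omega
    obtain ⟨f, hfB, hfx⟩ := refl_isometry_aux B hsymm _ hvv hev
    refine ⟨f.trans (LinearEquiv.neg ℤ), fun x y => by simpa using hfB x y, ?_⟩
    have hBo₁v : B o₁ (o₁ + o₂) = 2 := by
      simp only [map_add, ho₁, ← ha, hm1]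
      ring
    have hone : ((2 : ℤ) / 2) • (o₁ + o₂) = o₁ + o₂ := by norm_num
    have htr : (f.trans (LinearEquiv.neg ℤ)) o₁ = -(f o₁) := rfl
    rw [htr, hfx o₁, hBo₁v, hone]
    abel
end

section
/- Let M be a positive definite lattice containing a distinguished element 𝔬. Then the following three conditions are equivalent: (1) there is no element v ∈ M with either ((v.v) = 1 and (𝔬.v) = 1) or ((v.v) = 2 and (𝔬.v) = 0) (i.e., no sublattice K ⊆ M containing 𝔬 with Gram matrix K₂ = [[3,1],[1,1]] or K₆ = [[3,0],[0,2]] with respect to a basis (𝔬, v)); (2) M has no roots, i.e., there is no x ∈ M with (x.x) = 2; (3) (x.x) ≥ 3 for all nonzero x ∈ M. -/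
private lemma expand_quad {M : Type*} [AddCommGroup M] [Module ℤ M]
    (B : M →ₗ[ℤ] M →ₗ[ℤ] ℤ) (hsymm : ∀ x y : M, B x y = B y x)
    (a b : M) (m n : ℤ) :
    B (m • a + n • b) (m • a + n • b)
      = m * m * B a a + 2 * m * n * B a b + n * n * B b b := by
  simp only [map_add, map_zsmul, LinearMap.add_apply, LinearMap.smul_apply, smul_eq_mul]
  rw [hsymm b a]; ring

private lemma int_sq_ne (t : ℤ) : t * t ≠ 2 ∧ t * t ≠ 3 := by
  constructor <;> intro h <;> {
    have h1 : -2 ≤ t := by nlinarith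
    have h2 : t ≤ 2 := by nlinarith
    interval_cases t <;> omega }

/-- Let `M` be a positive definite lattice containing a distinguished element `𝔬`.
The following are equivalent:
(1) there is no `v ∈ M` with either `((v.v) = 1 ∧ (𝔬.v) = 1)` or `((v.v) = 2 ∧ (𝔬.v) = 0)`
    (i.e. no sublattice containing `𝔬` with Gram matrix `K₂ = [[3,1],[1,1]]` or
    `K₆ = [[3,0],[0,2]]` with respect to a basis `(𝔬, v)`);
(2) `M` has no roots, i.e. no `x ∈ M` with `(x.x) = 2`;
(3) `(x.x) ≥ 3` for all nonzero `x ∈ M`. -/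
theorem no_K2_K6_iff_no_roots_iff_min_three
    {M : Type*} [AddCommGroup M] [Module ℤ M] [Module.Free ℤ M] [Module.Finite ℤ M]
    (B : M →ₗ[ℤ] M →ₗ[ℤ] ℤ)
    (hsymm : ∀ x y : M, B x y = B y x)
    (hpos : ∀ x : M, x ≠ 0 → 0 < B x x)
    (o : M) (ho3 : B o o = 3)
    (hoEven : ∀ x : M, B x o = 0 → Even (B x x)) :
    ((¬ ∃ v : M, (B v v = 1 ∧ B o v = 1) ∨ (B v v = 2 ∧ B o v = 0)) ↔
      ¬ ∃ x : M, B x x = 2) ∧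
    ((¬ ∃ x : M, B x x = 2) ↔ ∀ x : M, x ≠ 0 → 3 ≤ B x x) := by
  have expand := expand_quad B hsymm
  constructor
  · constructor
    · -- no K2/K6 vectors → no roots
      intro hK ⟨x, hx2⟩
      set t : ℤ := B o x with ht
      -- y := 3x - t o is orthogonal to o, of norm 18 - 3t²
      have hyo : B ((3 : ℤ) • x + (-t) • o) o = 0 := by
        simp only [map_add, map_zsmul, LinearMap.add_apply, LinearMap.smul_apply, smul_eq_mul]
        rw [hsymm x o, ← ht, ho3]; ring
      have hyy : B ((3 : ℤ) • x + (-t) • o) ((3 : ℤ) • x + (-t) • o) = 18 - 3 * (t * t) := by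
        rw [expand x o 3 (-t), hx2, hsymm x o, ← ht, ho3]; ring
      have heven : Even (18 - 3 * (t * t)) := hyy ▸ hoEven _ hyo
      -- hence t is even
      have hteven : Even t := by
        have h3u : Even (3 * (t * t)) := by
          have := Int.even_sub.mp heven
          exact this.mp (by decide)
        rcases Int.even_mul.mp h3u with h | h
        · exact absurd h (by decide)
        · rcases Int.even_mul.mp h with h' | h' <;> exact h'
      obtain ⟨s, hs⟩ := hteven
      -- z := x - s o has norm 2 - s²
      have hzz : B ((1 : ℤ) • x + (-s) • o) ((1 : ℤ) • x + (-s) • o) = 2 - s * s := by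
        rw [expand x o 1 (-s), hx2, hsymm x o, ← ht, ho3, hs]; ring
      have hs1 : s * s ≤ 1 := by
        by_contra hgt
        push_neg at hgt
        rcases eq_or_ne ((1 : ℤ) • x + (-s) • o) 0 with h0 | h0
        · simp only [h0, map_zero, LinearMap.zero_apply] at hzz
          exact (int_sq_ne s).1 (by linarith)
        · have := hpos _ h0
          rw [hzz] at this
          linarith
      have hlb : -1 ≤ s := by nlinarith
      have hub : s ≤ 1 := by nlinarith
      interval_cases s
      · -- t = -2 : v = o + x gives K2
        apply hK
        refine ⟨(1 : ℤ) • o + (1 : ℤ) • x, Or.inl ⟨?_, ?_⟩⟩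
        · rw [expand o x 1 1, ho3, ← ht, hx2]; omega
        · simp only [map_add, map_zsmul, smul_eq_mul]
          rw [ho3, ← ht]; omega
      · -- t = 0 : K6 with v = x
        exact hK ⟨x, Or.inr ⟨hx2, by rw [← ht]; omega⟩⟩
      · -- t = 2 : v = o - x gives K2
        apply hK
        refine ⟨(1 : ℤ) • o + (-1 : ℤ) • x, Or.inl ⟨?_, ?_⟩⟩
        · rw [expand o x 1 (-1), ho3, ← ht, hx2]; omega
        · simp only [map_add, map_zsmul, smul_eq_mul]
          rw [ho3, ← ht]; omega
    · -- no roots → no K2/K6 vectors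
      intro hR ⟨v, hv⟩
      rcases hv with ⟨hv1, hov⟩ | ⟨hv2, _⟩
      · -- v of norm 1 with (o,v) = 1 : o - v is a root
        apply hR
        refine ⟨(1 : ℤ) • o + (-1 : ℤ) • v, ?_⟩
        rw [expand o v 1 (-1), ho3, hov, hv1]; ring
      · exact hR ⟨v, hv2⟩
  · constructor
    · -- no roots → minimum ≥ 3
      intro hR x hx
      have h1 : 0 < B x x := hpos x hx
      by_contra hlt
      push_neg at hlt
      have hxx : B x x = 1 ∨ B x x = 2 := by omega
      rcases hxx with hx1 | hx2
      · -- norm 1 vector is impossible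
        set t : ℤ := B o x with ht
        have hyo : B ((3 : ℤ) • x + (-t) • o) o = 0 := by
          simp only [map_add, map_zsmul, LinearMap.add_apply, LinearMap.smul_apply, smul_eq_mul]
          rw [hsymm x o, ← ht, ho3]; ring
        have hyy : B ((3 : ℤ) • x + (-t) • o) ((3 : ℤ) • x + (-t) • o) = 9 - 3 * (t * t) := by
          rw [expand x o 3 (-t), hx1, hsymm x o, ← ht, ho3]; ring
        have heven : Even (9 - 3 * (t * t)) := hyy ▸ hoEven _ hyo
        have htodd : Odd t := by
          rw [← Int.not_even_iff_odd]
          intro hte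
          obtain ⟨s, hs⟩ := hte
          have h3u : Even (3 * (t * t)) := ⟨6 * (s * s), by rw [hs]; ring⟩
          have := (Int.even_sub.mp heven).mpr h3u
          exact absurd this (by decide)
        -- z := o - t x has norm 3 - t²
        have hzz : B ((1 : ℤ) • o + (-t) • x) ((1 : ℤ) • o + (-t) • x) = 3 - t * t := by
          rw [expand o x 1 (-t), ho3, ← ht, hx1]; ring
        have hzne : (1 : ℤ) • o + (-t) • x ≠ 0 := by
          intro h0
          simp only [h0, map_zero, LinearMap.zero_apply] at hzz
          exact (int_sq_ne t).2 (by linarith)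
        have hzpos := hpos _ hzne
        rw [hzz] at hzpos
        -- t odd and t² < 3, t² ≠ 2 implies t² = 1, so z is a root
        have htne : t ≠ 0 := by
          intro h0t
          rw [h0t] at htodd
          exact absurd htodd (by decide)
        have h1t : 1 ≤ t * t := by
          rcases lt_or_gt_of_ne htne with h | h <;> nlinarith
        have hle2 : t * t ≤ 2 := by linarith
        have hlt2 : t * t < 2 := lt_of_le_of_ne hle2 (int_sq_ne t).1
        have ht1 : t * t = 1 := le_antisymm (by linarith) h1t
        exact hR ⟨_, by rw [hzz, ht1]; norm_num⟩
      · exact hR ⟨x, hx2⟩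
    · -- minimum ≥ 3 → no roots
      intro hmin ⟨x, hx2⟩
      have hx : x ≠ 0 := by
        rintro rfl
        simp only [map_zero, LinearMap.zero_apply] at hx2
        exact absurd hx2 (by decide)
      have := hmin x hx
      omega
end

section
/- For every integer k ≥ 2 there exist integers x₁, x₂, x₃, x₄, x₅ such that k = 2x₁² + 2x₂² + 2x₃² + 2x₄² + 3x₅² and moreover either x₁ = 1 or x₅ = 1. -/
/-- Value of the binary quadratic form with coefficients `m, q, r`. -/
def Qb (m q r y z : ℤ) : ℤ := m*y^2 + 2*q*y*z + r*z^2

/-- Cross coefficient after change of variables by `(α β; γ δ)`. -/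
def Bb (m q r α β γ δ : ℤ) : ℤ := m*α*β + q*(α*δ+β*γ) + r*γ*δ

lemma Qb_transform (m q r α β γ δ y z : ℤ) :
    Qb (Qb m q r α γ) (Bb m q r α β γ δ) (Qb m q r β δ) y z
      = Qb m q r (α*y+β*z) (γ*y+δ*z) := by
  simp only [Qb, Bb]; ring

lemma Qb_det_transform (m q r α β γ δ : ℤ) :
    Qb m q r α γ * Qb m q r β δ - (Bb m q r α β γ δ)^2
      = (α*δ-β*γ)^2 * (m*r - q^2) := by
  simp only [Qb, Bb]; ring

def PosDefB (m q r : ℤ) : Prop := ∀ y z : ℤ, ¬(y = 0 ∧ z = 0) → 1 ≤ Qb m q r y z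

lemma posdefB_transform {m q r α β γ δ : ℤ} (h : PosDefB m q r) (hdet : α*δ - β*γ = 1) :
    PosDefB (Qb m q r α γ) (Bb m q r α β γ δ) (Qb m q r β δ) := by
  intro y z hyz
  rw [Qb_transform]
  refine h _ _ ?_
  rintro ⟨h1, h2⟩
  apply hyz
  constructor
  · have hy : y = δ*(α*y+β*z) - β*(γ*y+δ*z) := by
      calc y = (α*δ - β*γ)*y := by rw [hdet]; ring
        _ = δ*(α*y+β*z) - β*(γ*y+δ*z) := by ring
    rw [hy, h1, h2]; ring
  · have hz : z = -γ*(α*y+β*z) + α*(γ*y+δ*z) := by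
      calc z = (α*δ - β*γ)*z := by rw [hdet]; ring
        _ = -γ*(α*y+β*z) + α*(γ*y+δ*z) := by ring
    rw [hz, h1, h2]; ring

lemma exists_k (m q : ℤ) (hm : 1 ≤ m) : ∃ k : ℤ, 2 * |q + k*m| ≤ m := by
  rcases le_or_gt (2 * (q % m)) m with h | h
  · refine ⟨-(q/m), ?_⟩
    have h0 : q % m = q + -(q/m) * m := by
      have := Int.emod_add_mul_ediv q m; linarith
    rw [← h0, abs_of_nonneg (Int.emod_nonneg q (by linarith))]
    exact h
  · refine ⟨-(q/m) - 1, ?_⟩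
    have h0 : q + (-(q/m) - 1) * m = q % m - m := by
      have := Int.emod_add_mul_ediv q m; linarith
    rw [h0, abs_of_nonpos (by have := Int.emod_lt_of_pos q (show 0 < m by linarith); linarith)]
    have := Int.emod_lt_of_pos q (show 0 < m by linarith)
    linarith

/-- Binary reduction: every positive definite integral binary form has a
unimodular change of variables making it reduced. -/
lemma bin_reduce : ∀ N : ℕ, ∀ m q r : ℤ, PosDefB m q r → m.toNat ≤ N →
    ∃ α β γ δ : ℤ, α*δ - β*γ = 1 ∧
      2 * |Bb m q r α β γ δ| ≤ Qb m q r α γ ∧ Qb m q r α γ ≤ Qb m q r β δ := by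
  intro N
  induction N with
  | zero =>
    intro m q r hpd hle
    exfalso
    have h1 : 1 ≤ m := by have := hpd 1 0 (by simp); simpa [Qb] using this
    omega
  | succ N ih =>
    intro m q r hpd hle
    have hm : 1 ≤ m := by have := hpd 1 0 (by simp); simpa [Qb] using this
    obtain ⟨k, hk⟩ := exists_k m q hm
    set q₁ := q + k*m with hq₁
    set r₁ := Qb m q r k 1 with hr₁
    have hq₁B : Bb m q r 1 k 0 1 = q₁ := by simp [Bb, hq₁]; ring
    have hm₁ : Qb m q r 1 0 = m := by simp [Qb]
    have hr₁Q : Qb m q r k 1 = r₁ := rfl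
    rcases le_or_gt m r₁ with hle2 | hlt
    · exact ⟨1, k, 0, 1, by ring, by rw [hq₁B, hm₁]; exact hk, by rw [hm₁, hr₁Q]; exact hle2⟩
    · -- swap: new form (r₁, -q₁, m) via matrix (k, -1; 1, 0)
      have hr₁pos : 1 ≤ r₁ := hpd k 1 (by simp)
      have hdet : k*0 - (-1)*1 = (1:ℤ) := by ring
      have hm' : Qb m q r k 1 = r₁ := rfl
      have hq' : Bb m q r k (-1) 1 0 = -q₁ := by simp [Bb, hq₁]; ring
      have hr' : Qb m q r (-1) 0 = m := by simp [Qb]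
      have hpd' : PosDefB r₁ (-q₁) m := by
        have := posdefB_transform (α := k) (β := -1) (γ := 1) (δ := 0) hpd hdet
        rwa [hm', hq', hr'] at this
      obtain ⟨α', β', γ', δ', hdet', hred1, hred2⟩ := ih r₁ (-q₁) m hpd' (by omega)
      -- compose: total matrix (k, -1; 1, 0) * (α', β'; γ', δ')
      refine ⟨k*α' - γ', k*β' - δ', α', β', by linear_combination hdet', ?_, ?_⟩
      · have e1 : Qb m q r (k*α' - γ') α' = Qb r₁ (-q₁) m α' γ' := by
          simp only [Qb, hr₁, hq₁]; ring
        have e2 : Bb m q r (k*α'-γ') (k*β'-δ') α' β' = Bb r₁ (-q₁) m α' β' γ' δ' := by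
          simp only [Bb, Qb, hr₁, hq₁]; ring
        rw [e1, e2]; exact hred1
      · have e1 : Qb m q r (k*α' - γ') α' = Qb r₁ (-q₁) m α' γ' := by
          simp only [Qb, hr₁, hq₁]; ring
        have e3 : Qb m q r (k*β'-δ') β' = Qb r₁ (-q₁) m β' δ' := by
          simp only [Qb, hr₁, hq₁]; ring
        rw [e1, e3]; exact hred2
/-- A positive definite binary form of determinant 1 is a sum of two squares of
integral linear forms. -/
lemma bin_det_one {m q r : ℤ} (hpd : PosDefB m q r) (hdet : m*r - q^2 = 1) :
    ∃ α β γ δ : ℤ, ∀ y z : ℤ, Qb m q r y z = (α*y+β*z)^2 + (γ*y+δ*z)^2 := by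
  obtain ⟨α, β, γ, δ, hU, hred1, hred2⟩ := bin_reduce (m.toNat) m q r hpd le_rfl
  set m₁ := Qb m q r α γ
  set q₁ := Bb m q r α β γ δ
  set r₁ := Qb m q r β δ
  have hdet₁ : m₁ * r₁ - q₁^2 = 1 := by
    have := Qb_det_transform m q r α β γ δ
    rw [hU, hdet] at this; simpa using this
  have hm₁pos : 1 ≤ m₁ := hpd α γ (by rintro ⟨h1, h2⟩; rw [h1, h2] at hU; simp at hU)
  have hm₁ : m₁ = 1 := by nlinarith [abs_nonneg q₁, sq_abs q₁]
  have hq₁ : q₁ = 0 := by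
    have h1 : 2 * |q₁| ≤ 1 := hm₁ ▸ hred1
    have h2 : |q₁| < 1 := by linarith [abs_nonneg q₁]
    rw [abs_lt] at h2
    omega
  have hr₁ : r₁ = 1 := by rw [hm₁, hq₁] at hdet₁; linarith
  refine ⟨δ, -β, -γ, α, fun y z => ?_⟩
  have h1 := Qb_transform m q r α β γ δ (δ*y - β*z) (-γ*y + α*z)
  have e1 : α*(δ*y - β*z) + β*(-γ*y + α*z) = y := by
    calc α*(δ*y - β*z) + β*(-γ*y + α*z) = (α*δ - β*γ)*y := by ring
      _ = y := by rw [hU]; ring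
  have e2 : γ*(δ*y - β*z) + δ*(-γ*y + α*z) = z := by
    calc γ*(δ*y - β*z) + δ*(-γ*y + α*z) = (α*δ - β*γ)*z := by ring
      _ = z := by rw [hU]; ring
  rw [e1, e2] at h1
  rw [← h1]
  show Qb m₁ q₁ r₁ _ _ = _
  rw [hm₁, hq₁, hr₁]
  simp only [Qb]; ring

/-- Hermite style bound: a positive definite binary form attains, at a coprime
pair, a value `w ≥ 1` with `3w² ≤ 4 det`. -/
lemma bin_min {m q r : ℤ} (hpd : PosDefB m q r) :
    ∃ y₀ z₀ w : ℤ, IsCoprime y₀ z₀ ∧ Qb m q r y₀ z₀ = w ∧ 1 ≤ w ∧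
      3 * w^2 ≤ 4 * (m*r - q^2) := by
  obtain ⟨α, β, γ, δ, hU, hred1, hred2⟩ := bin_reduce (m.toNat) m q r hpd le_rfl
  set m₁ := Qb m q r α γ with hm₁def
  set q₁ := Bb m q r α β γ δ
  set r₁ := Qb m q r β δ
  have hdet₁ : m₁ * r₁ - q₁^2 = m*r - q^2 := by
    have := Qb_det_transform m q r α β γ δ
    rw [hU] at this; simpa using this
  have hm₁pos : 1 ≤ m₁ := hpd α γ (by rintro ⟨h1, h2⟩; rw [h1, h2] at hU; simp at hU)
  refine ⟨α, γ, m₁, ⟨δ, -β, by linear_combination hU⟩, rfl, hm₁pos, ?_⟩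
  have habs : (2*|q₁|)^2 ≤ m₁^2 := by
    have h0 : (0:ℤ) ≤ 2*|q₁| := by positivity
    nlinarith [hred1]
  have hq₁sq : 4*q₁^2 ≤ m₁^2 := by
    have : (2*|q₁|)^2 = 4*q₁^2 := by rw [mul_pow, sq_abs]; ring
    linarith [habs, this.symm.le]
  nlinarith [hred2, hm₁pos]
/-- Value of the ternary quadratic form with coefficients `a,...,g`
(matrix `[[a,d,e],[d,b,g],[e,g,c]]`). -/
def Qt (a b c d e g x y z : ℤ) : ℤ :=
  a*x^2 + b*y^2 + c*z^2 + 2*d*x*y + 2*e*x*z + 2*g*y*z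

/-- Associated bilinear form. -/
def Bt (a b c d e g u₁ u₂ u₃ v₁ v₂ v₃ : ℤ) : ℤ :=
  a*u₁*v₁ + b*u₂*v₂ + c*u₃*v₃ + d*(u₁*v₂+u₂*v₁) + e*(u₁*v₃+u₃*v₁) + g*(u₂*v₃+u₃*v₂)

def detT (a b c d e g : ℤ) : ℤ := a*(b*c - g^2) - d*(d*c - e*g) + e*(d*g - b*e)

def detW3 (u₁ u₂ u₃ v₁ v₂ v₃ w₁ w₂ w₃ : ℤ) : ℤ :=
  u₁*(v₂*w₃ - v₃*w₂) - u₂*(v₁*w₃ - v₃*w₁) + u₃*(v₁*w₂ - v₂*w₁)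

def PosDefT (a b c d e g : ℤ) : Prop :=
  ∀ x y z : ℤ, ¬(x = 0 ∧ y = 0 ∧ z = 0) → 1 ≤ Qt a b c d e g x y z

lemma Qt_transform (a b c d e g u₁ u₂ u₃ v₁ v₂ v₃ w₁ w₂ w₃ X Y Z : ℤ) :
    Qt (Qt a b c d e g u₁ u₂ u₃) (Qt a b c d e g v₁ v₂ v₃) (Qt a b c d e g w₁ w₂ w₃)
       (Bt a b c d e g u₁ u₂ u₃ v₁ v₂ v₃) (Bt a b c d e g u₁ u₂ u₃ w₁ w₂ w₃)
       (Bt a b c d e g v₁ v₂ v₃ w₁ w₂ w₃) X Y Z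
      = Qt a b c d e g (u₁*X+v₁*Y+w₁*Z) (u₂*X+v₂*Y+w₂*Z) (u₃*X+v₃*Y+w₃*Z) := by
  simp only [Qt, Bt]; ring

lemma detT_transform (a b c d e g u₁ u₂ u₃ v₁ v₂ v₃ w₁ w₂ w₃ : ℤ) :
    detT (Qt a b c d e g u₁ u₂ u₃) (Qt a b c d e g v₁ v₂ v₃) (Qt a b c d e g w₁ w₂ w₃)
       (Bt a b c d e g u₁ u₂ u₃ v₁ v₂ v₃) (Bt a b c d e g u₁ u₂ u₃ w₁ w₂ w₃)
       (Bt a b c d e g v₁ v₂ v₃ w₁ w₂ w₃)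
      = (detW3 u₁ u₂ u₃ v₁ v₂ v₃ w₁ w₂ w₃)^2 * detT a b c d e g := by
  simp only [detT, Qt, Bt, detW3]; ring

lemma recover3 {u₁ u₂ u₃ v₁ v₂ v₃ w₁ w₂ w₃ X Y Z : ℤ}
    (hdet : detW3 u₁ u₂ u₃ v₁ v₂ v₃ w₁ w₂ w₃ = 1)
    (hA : u₁*X+v₁*Y+w₁*Z = 0) (hB : u₂*X+v₂*Y+w₂*Z = 0) (hC : u₃*X+v₃*Y+w₃*Z = 0) :
    X = 0 ∧ Y = 0 ∧ Z = 0 := by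
  refine ⟨?_, ?_, ?_⟩
  · calc X = detW3 u₁ u₂ u₃ v₁ v₂ v₃ w₁ w₂ w₃ * X := by rw [hdet]; ring
      _ = (v₂*w₃ - v₃*w₂)*(u₁*X+v₁*Y+w₁*Z) - (v₁*w₃ - v₃*w₁)*(u₂*X+v₂*Y+w₂*Z)
            + (v₁*w₂ - v₂*w₁)*(u₃*X+v₃*Y+w₃*Z) := by simp only [detW3]; ring
      _ = 0 := by rw [hA, hB, hC]; ring
  · calc Y = detW3 u₁ u₂ u₃ v₁ v₂ v₃ w₁ w₂ w₃ * Y := by rw [hdet]; ring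
      _ = -((u₂*w₃ - u₃*w₂)*(u₁*X+v₁*Y+w₁*Z)) + (u₁*w₃ - u₃*w₁)*(u₂*X+v₂*Y+w₂*Z)
            - (u₁*w₂ - u₂*w₁)*(u₃*X+v₃*Y+w₃*Z) := by simp only [detW3]; ring
      _ = 0 := by rw [hA, hB, hC]; ring
  · calc Z = detW3 u₁ u₂ u₃ v₁ v₂ v₃ w₁ w₂ w₃ * Z := by rw [hdet]; ring
      _ = (u₂*v₃ - u₃*v₂)*(u₁*X+v₁*Y+w₁*Z) - (u₁*v₃ - u₃*v₁)*(u₂*X+v₂*Y+w₂*Z)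
            + (u₁*v₂ - u₂*v₁)*(u₃*X+v₃*Y+w₃*Z) := by simp only [detW3]; ring
      _ = 0 := by rw [hA, hB, hC]; ring

lemma Qt_key (a b c d e g x y z : ℤ) :
    a * Qt a b c d e g x y z
      = (a*x + d*y + e*z)^2 + Qb (a*b-d^2) (a*g-d*e) (a*c-e^2) y z := by
  simp only [Qt, Qb]; ring

lemma detG_eq (a b c d e g : ℤ) :
    (a*b-d^2)*(a*c-e^2) - (a*g-d*e)^2 = a * detT a b c d e g := by
  simp only [detT]; ring

/- Main reduction: a positive definite integral ternary form of determinant 1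
is a sum of squares of three integral linear forms. -/
set_option maxHeartbeats 3200000 in
lemma tern_sos : ∀ N : ℕ, ∀ a b c d e g : ℤ, PosDefT a b c d e g →
    detT a b c d e g = 1 → a.toNat ≤ N →
    ∃ p₁ q₁ r₁ p₂ q₂ r₂ p₃ q₃ r₃ : ℤ, ∀ x y z : ℤ,
      Qt a b c d e g x y z
        = (p₁*x+q₁*y+r₁*z)^2 + (p₂*x+q₂*y+r₂*z)^2 + (p₃*x+q₃*y+r₃*z)^2 := by
  intro N
  induction N with
  | zero =>
    intro a b c d e g hpd _ hle
    exfalso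
    have h1 : 1 ≤ a := by have := hpd 1 0 0 (by simp); simpa [Qt] using this
    omega
  | succ N ih =>
    intro a b c d e g hpd hdet hle
    have ha1 : 1 ≤ a := by have := hpd 1 0 0 (by simp); simpa [Qt] using this
    by_cases ha : a = 1
    · -- base case: split off the first square
      subst ha
      have hGpd : PosDefB (1*b-d^2) (1*g-d*e) (1*c-e^2) := by
        intro y z hyz
        have hval : Qb (1*b-d^2) (1*g-d*e) (1*c-e^2) y z
            = Qt 1 b c d e g (-(d*y+e*z)) y z := by
          have := Qt_key 1 b c d e g (-(d*y+e*z)) y z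
          simp only [one_mul] at this ⊢
          linarith [this]
        rw [hval]
        exact hpd _ y z (by tauto)
      have hGdet : (1*b-d^2)*(1*c-e^2) - (1*g-d*e)^2 = 1 := by
        rw [detG_eq, hdet]; ring
      obtain ⟨α, β, γ, δ, hsum⟩ := bin_det_one hGpd hGdet
      refine ⟨1, d, e, 0, α, β, 0, γ, δ, fun x y z => ?_⟩
      have h1 := Qt_key 1 b c d e g x y z
      have h2 := hsum y z
      simp only [one_mul] at h1 h2 ⊢
      nlinarith [h1, h2]
    · -- a ≥ 2 : find a smaller corner value
      have ha2 : 2 ≤ a := by omega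
      set G1 := a*b - d^2 with hG1
      set G2 := a*g - d*e with hG2
      set G3 := a*c - e^2 with hG3
      have hGpd : PosDefB G1 G2 G3 := by
        intro y z hyz
        have key := Qt_key a b c d e g (-(d*y+e*z)) (a*y) (a*z)
        have harg : a*(-(d*y+e*z)) + d*(a*y) + e*(a*z) = 0 := by ring
        have hQbscale : Qb G1 G2 G3 (a*y) (a*z) = a^2 * Qb G1 G2 G3 y z := by
          simp only [Qb]; ring
        rw [harg] at key
        have key2 : a * Qt a b c d e g (-(d*y+e*z)) (a*y) (a*z)
            = a^2 * Qb G1 G2 G3 y z := by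
          rw [key, hQbscale]; ring
        have hpos : 1 ≤ Qt a b c d e g (-(d*y+e*z)) (a*y) (a*z) := by
          refine hpd _ _ _ ?_
          rintro ⟨-, h2, h3⟩
          exact hyz ⟨by
            rcases mul_eq_zero.mp h2 with h | h
            · omega
            · exact h, by
            rcases mul_eq_zero.mp h3 with h | h
            · omega
            · exact h⟩
        by_contra hQ
        push_neg at hQ
        have hQ0 : Qb G1 G2 G3 y z ≤ 0 := by omega
        have hq1 : a ≤ a * Qt a b c d e g (-(d*y+e*z)) (a*y) (a*z) := by
          nlinarith [hpos, ha1]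
        have hq2 : a^2 * Qb G1 G2 G3 y z ≤ 0 :=
          mul_nonpos_of_nonneg_of_nonpos (sq_nonneg a) hQ0
        rw [key2] at hq1
        linarith
      obtain ⟨y₀, z₀, w, hcop, hval, hw1, hwbnd⟩ := bin_min hGpd
      have hGdet : G1*G3 - G2^2 = a := by
        rw [hG1, hG2, hG3, detG_eq, hdet]; ring
      rw [hGdet] at hwbnd
      obtain ⟨x₀, hx₀⟩ := exists_k a (d*y₀+e*z₀) ha1
      set n₁ := Qt a b c d e g x₀ y₀ z₀ with hn₁def
      obtain ⟨uu, vv, huv⟩ := hcop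
      have hv0 : ¬(x₀ = 0 ∧ y₀ = 0 ∧ z₀ = 0) := by
        rintro ⟨-, h2, h3⟩
        rw [h2, h3] at huv; simp at huv
      have hn₁ : 1 ≤ n₁ := hpd x₀ y₀ z₀ hv0
      have hkeyv : a * n₁ = (a*x₀ + d*y₀ + e*z₀)^2 + w := by
        rw [hn₁def, Qt_key, hval]
      have habs : 4*(a*x₀ + d*y₀ + e*z₀)^2 ≤ a^2 := by
        have hx₀' : 2*|a*x₀ + d*y₀ + e*z₀| ≤ a := by
          rw [show a*x₀ + d*y₀ + e*z₀ = d*y₀ + e*z₀ + x₀*a by ring]; exact hx₀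
        have h0 : (0:ℤ) ≤ 2*|a*x₀ + d*y₀ + e*z₀| := by positivity
        have h1 := mul_self_le_mul_self h0 hx₀'
        have h2 : (2*|a*x₀ + d*y₀ + e*z₀|) * (2*|a*x₀ + d*y₀ + e*z₀|)
            = 4*(a*x₀ + d*y₀ + e*z₀)^2 := by
          rw [show (2*|a*x₀ + d*y₀ + e*z₀|) * (2*|a*x₀ + d*y₀ + e*z₀|)
              = 4 * (|a*x₀ + d*y₀ + e*z₀| * |a*x₀ + d*y₀ + e*z₀|) by ring,
            abs_mul_abs_self]
          ring
        nlinarith [h1, sq_nonneg a]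
      have hlt : n₁ < a := by
        by_contra hcon
        push_neg at hcon
        have h1 : 4*a*n₁ ≤ a^2 + 4*w := by nlinarith [hkeyv, habs]
        have h2 : 4*a*a ≤ 4*a*n₁ := by
          have := mul_le_mul_of_nonneg_left hcon (show (0:ℤ) ≤ 4*a by linarith)
          linarith
        have h3 : 3*a^2 ≤ 4*w := by nlinarith [h1, h2]
        have h4 : (3*a^2) * (3*a^2) ≤ (4*w) * (4*w) :=
          mul_self_le_mul_self (by positivity) h3
        have h5 : 9*a^4 ≤ 16*w^2 := by nlinarith [h4]
        have h6 : (8:ℤ) ≤ a^3 := by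
          calc (8:ℤ) = 2^3 := by norm_num
            _ ≤ a^3 := pow_le_pow_left₀ (by norm_num) ha2 3
        have h7 : 8*a ≤ a^4 := by nlinarith [h6, ha1]
        linarith [hwbnd, h5, h7, ha2, mul_le_mul_of_nonneg_left h6 (show (0:ℤ) ≤ 27*a by linarith)]
      -- Bezout completion
      set s := -uu with hs
      set t := vv with ht
      have hBez : z₀*t - y₀*s = 1 := by rw [hs, ht]; linarith [huv]
      -- new coefficients via transformation with columns (x₀,y₀,z₀),(1,0,0),(0,t,s)
      have hdetW : detW3 x₀ y₀ z₀ 1 0 0 0 t s = 1 := by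
        simp only [detW3]; linarith [hBez]
      set a' := Qt a b c d e g x₀ y₀ z₀ with ha'
      set b' := Qt a b c d e g 1 0 0 with hb'
      set c' := Qt a b c d e g 0 t s with hc'
      set d' := Bt a b c d e g x₀ y₀ z₀ 1 0 0 with hd'
      set e' := Bt a b c d e g x₀ y₀ z₀ 0 t s with he'
      set g' := Bt a b c d e g 1 0 0 0 t s with hg'
      have htrans : ∀ X Y Z : ℤ, Qt a' b' c' d' e' g' X Y Z
          = Qt a b c d e g (x₀*X+1*Y+0*Z) (y₀*X+0*Y+t*Z) (z₀*X+0*Y+s*Z) :=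
        fun X Y Z => Qt_transform a b c d e g x₀ y₀ z₀ 1 0 0 0 t s X Y Z
      have hpd' : PosDefT a' b' c' d' e' g' := by
        intro X Y Z hXYZ
        rw [htrans]
        refine hpd _ _ _ ?_
        rintro ⟨hA, hB, hC⟩
        exact hXYZ (recover3 hdetW hA hB hC)
      have hdet' : detT a' b' c' d' e' g' = 1 := by
        rw [ha', hb', hc', hd', he', hg', detT_transform, hdetW, hdet]; ring
      have hle' : a'.toNat ≤ N := by
        have : a' = n₁ := rfl
        omega
      obtain ⟨p₁, q₁, r₁, p₂, q₂, r₂, p₃, q₃, r₃, hsos⟩ :=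
        ih a' b' c' d' e' g' hpd' hdet' hle'
      refine ⟨q₁, -s*p₁ + x₀*s*q₁ + z₀*r₁, t*p₁ - x₀*t*q₁ - y₀*r₁,
              q₂, -s*p₂ + x₀*s*q₂ + z₀*r₂, t*p₂ - x₀*t*q₂ - y₀*r₂,
              q₃, -s*p₃ + x₀*s*q₃ + z₀*r₃, t*p₃ - x₀*t*q₃ - y₀*r₃,
              fun x y z => ?_⟩
      set X := t*z - s*y with hX
      set Y := x - x₀*(t*z - s*y) with hY
      set Z := z₀*y - y₀*z with hZ
      have harg1 : x₀*X+1*Y+0*Z = x := by rw [hX, hY, hZ]; ring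
      have harg2 : y₀*X+0*Y+t*Z = y := by
        rw [hX, hY, hZ]
        calc y₀*(t*z - s*y) + 0*(x - x₀*(t*z - s*y)) + t*(z₀*y - y₀*z)
            = (z₀*t - y₀*s)*y := by ring
          _ = y := by rw [hBez]; ring
      have harg3 : z₀*X+0*Y+s*Z = z := by
        rw [hX, hY, hZ]
        calc z₀*(t*z - s*y) + 0*(x - x₀*(t*z - s*y)) + s*(z₀*y - y₀*z)
            = (z₀*t - y₀*s)*z := by ring
          _ = z := by rw [hBez]; ring
      have hmain : Qt a b c d e g x y z = Qt a' b' c' d' e' g' X Y Z := by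
        rw [htrans, harg1, harg2, harg3]
      rw [hmain, hsos X Y Z, hX, hY, hZ]
      ring
/-- Bridge: the arithmetic data `p = ns - b²`, `pu = 1 + nt²` packages into a
positive definite det-1 ternary form representing `n`, so `n` is a sum of three
squares. -/
lemma bridge {n p b s t u : ℤ} (hn : 1 ≤ n) (hp : 1 ≤ p)
    (hps : n*s - b^2 = p) (hu : p*u = 1 + n*t^2) :
    ∃ x y z : ℤ, n = x^2 + y^2 + z^2 := by
  have hid : ∀ x y z : ℤ, p*n*Qt n s u b 0 t x y z
      = p*(n*x+b*y)^2 + (p*y+n*t*z)^2 + n*z^2 := by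
    intro x y z
    simp only [Qt]
    linear_combination p*y^2*hps + n*z^2*hu
  have hpd : PosDefT n s u b 0 t := by
    intro x y z hxyz
    by_contra hcon
    push_neg at hcon
    have hQ : Qt n s u b 0 t x y z ≤ 0 := by linarith
    have h2 : p*n*Qt n s u b 0 t x y z ≤ 0 :=
      mul_nonpos_of_nonneg_of_nonpos (by positivity) hQ
    rw [hid] at h2
    have t1 : 0 ≤ p*(n*x+b*y)^2 := by positivity
    have t2 : 0 ≤ (p*y+n*t*z)^2 := sq_nonneg _
    have t3 : 0 ≤ n*z^2 := by positivity
    have hz : z = 0 := by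
      have : n*z^2 ≤ 0 := by linarith
      have hz2 : z^2 ≤ 0 := by nlinarith
      have := sq_nonneg z
      have : z^2 = 0 := le_antisymm hz2 (sq_nonneg z)
      exact pow_eq_zero_iff (n := 2) (by norm_num) |>.mp this
    subst hz
    have hy : y = 0 := by
      have h3 : (p*y+n*t*0)^2 ≤ 0 := by linarith
      have h4 : p*y + n*t*0 = 0 :=
        pow_eq_zero_iff (n := 2) (by norm_num) |>.mp (le_antisymm h3 (sq_nonneg _))
      have : p*y = 0 := by linarith [h4]
      rcases mul_eq_zero.mp this with h | h
      · omega
      · exact h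
    subst hy
    have hx : x = 0 := by
      have h3 : p*(n*x+b*0)^2 ≤ 0 := by linarith
      have h4 : (n*x+b*0)^2 ≤ 0 := by nlinarith
      have h5 : n*x + b*0 = 0 :=
        pow_eq_zero_iff (n := 2) (by norm_num) |>.mp (le_antisymm h4 (sq_nonneg _))
      have : n*x = 0 := by linarith [h5]
      rcases mul_eq_zero.mp this with h | h
      · omega
      · exact h
    exact hxyz ⟨hx, rfl, rfl⟩
  have hdet : detT n s u b 0 t = 1 := by
    simp only [detT]
    linear_combination u*hps + hu
  obtain ⟨p₁, q₁, r₁, p₂, q₂, r₂, p₃, q₃, r₃, hsos⟩ :=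
    tern_sos n.toNat n s u b 0 t hpd hdet le_rfl
  refine ⟨p₁, p₂, p₃, ?_⟩
  have := hsos 1 0 0
  simp only [Qt] at this
  linarith [this]
section arith

open ZMod

/-- Everything is a square in `ZMod 2`. -/
lemma zmod2_is_square : ∀ x : ZMod 2, IsSquare x := by decide

lemma coprime_of_modEq {a b m : ℕ} (h : a ≡ b [MOD m]) (hb : b.Coprime m) (hm : m ≠ 0) :
    a.Coprime m := by
  haveI : NeZero m := ⟨hm⟩
  rw [← ZMod.isUnit_iff_coprime] at hb ⊢
  rwa [(ZMod.natCast_eq_natCast_iff a b m).mpr h]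

lemma legendre_congr_nat {l : ℕ} [Fact l.Prime] {a b : ℕ} (h : a ≡ b [MOD l]) :
    legendreSym l (a : ℤ) = legendreSym l (b : ℤ) := by
  rw [legendreSym.mod l (a:ℤ), legendreSym.mod l (b:ℤ)]
  congr 1
  rw [← Int.natCast_mod, ← Int.natCast_mod, h]

/-- If an integer is a square modulo every prime divisor of a squarefree `n`,
it is a square modulo `n`. -/
lemma isSquare_zmod_of_prime_divisors :
    ∀ n : ℕ, Squarefree n → ∀ x : ℤ,
      (∀ l : ℕ, l.Prime → l ∣ n → IsSquare ((x : ZMod l))) → IsSquare ((x : ZMod n)) := by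
  intro n
  induction n using Nat.strong_induction_on with
  | _ n ih =>
    intro hsf x hx
    rcases eq_or_ne n 1 with rfl | hn1
    · exact ⟨0, Subsingleton.elim _ _⟩
    have hn0 : n ≠ 0 := by rintro rfl; exact not_squarefree_zero hsf
    set l := n.minFac with hl
    have hlp : l.Prime := Nat.minFac_prime hn1
    set m := n / l with hm
    have hnlm : n = l * m := by
      rw [hm]; exact (Nat.mul_div_cancel' (Nat.minFac_dvd n)).symm
    have hmdvd : m ∣ n := ⟨l, by rw [hnlm]; ring⟩
    have hmsf : Squarefree m := hsf.squarefree_of_dvd hmdvd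
    have hlm : ¬ l ∣ m := by
      intro hdvd
      have : l * l ∣ n := by
        rw [hnlm]
        exact mul_dvd_mul_left l hdvd
      exact (Nat.squarefree_iff_prime_squarefree.mp hsf) l hlp this
    have hcop : l.Coprime m := (Nat.Prime.coprime_iff_not_dvd hlp).mpr hlm
    have hm0 : m ≠ 0 := by intro h0; apply hn0; rw [hnlm, h0, mul_zero]
    have hmlt : m < n := by
      have h2 : 2 ≤ l := hlp.two_le
      have h1 : 1 ≤ m := Nat.one_le_iff_ne_zero.mpr hm0
      calc m < l * m := by nlinarith
        _ = n := hnlm.symm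
    obtain ⟨c₁, hc₁⟩ := hx l hlp (Nat.minFac_dvd n)
    obtain ⟨c₂, hc₂⟩ := ih m hmlt hmsf x (fun q hq hqm => hx q hq (hqm.trans hmdvd))
    rw [hnlm]
    let e := ZMod.chineseRemainder hcop
    refine ⟨e.symm (c₁, c₂), ?_⟩
    have he : e ((x : ZMod (l*m))) = ((x : ZMod l), (x : ZMod m)) := by
      have h1 := map_intCast (e : ZMod (l*m) ≃+* ZMod l × ZMod m) x
      have h2 : ((x : ZMod l × ZMod m)) = ((x : ZMod l), (x : ZMod m)) := by
        exact Prod.ext (Prod.fst_intCast x) (Prod.snd_intCast x)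
      rw [h1, h2]
    have hsymm : e.symm ((x : ZMod l), (x : ZMod m)) = (x : ZMod (l*m)) := by
      rw [← he, RingEquiv.symm_apply_apply]
    rw [← hsymm, ← map_mul]
    congr 1
    rw [Prod.mk_mul_mk, ← hc₁, ← hc₂]

/-- Build a residue that looks like `-1` for the Legendre symbol at every prime
divisor of an odd squarefree number. -/
lemma res_build : ∀ n : ℕ, Squarefree n → Odd n →
    ∃ a : ℕ, a.Coprime n ∧ ∀ l : ℕ, (hl : l.Prime) → l ∣ n →
      @legendreSym l ⟨hl⟩ (a : ℤ) = @legendreSym l ⟨hl⟩ (-1) := by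
  intro n
  induction n using Nat.strong_induction_on with
  | _ n ih =>
    intro hsf hodd
    rcases eq_or_ne n 1 with rfl | hn1
    · exact ⟨1, Nat.coprime_one_left 1, fun l hl hdvd =>
        absurd (Nat.dvd_one.mp hdvd) hl.ne_one⟩
    have hn0 : n ≠ 0 := by rintro rfl; exact not_squarefree_zero hsf
    set l₀ := n.minFac with hl₀def
    have hl₀p : l₀.Prime := Nat.minFac_prime hn1
    haveI : Fact l₀.Prime := ⟨hl₀p⟩
    have hl₀2 : l₀ ≠ 2 := by
      intro h
      have : (2:ℕ) ∣ n := h ▸ Nat.minFac_dvd n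
      exact (Nat.not_even_iff_odd.mpr hodd) (even_iff_two_dvd.mpr this)
    set m := n / l₀ with hmdef
    have hnlm : n = l₀ * m := by
      rw [hmdef]; exact (Nat.mul_div_cancel' (Nat.minFac_dvd n)).symm
    have hmdvd : m ∣ n := ⟨l₀, by rw [hnlm]; ring⟩
    have hmsf : Squarefree m := hsf.squarefree_of_dvd hmdvd
    have hmodd : Odd m := by
      rcases Nat.even_or_odd m with he | ho
      · exact absurd (hnlm ▸ (he.mul_left l₀)) (Nat.not_even_iff_odd.mpr hodd)
      · exact ho
    have hl₀m : ¬ l₀ ∣ m := fun hdvd =>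
      (Nat.squarefree_iff_prime_squarefree.mp hsf) l₀ hl₀p (hnlm ▸ mul_dvd_mul_left l₀ hdvd)
    have hcop : l₀.Coprime m := (Nat.Prime.coprime_iff_not_dvd hl₀p).mpr hl₀m
    have hm0 : m ≠ 0 := by intro h0; apply hn0; rw [hnlm, h0, mul_zero]
    have hmlt : m < n := by
      have h2 : 2 ≤ l₀ := hl₀p.two_le
      have h1 : 1 ≤ m := Nat.one_le_iff_ne_zero.mpr hm0
      calc m < l₀ * m := by nlinarith
        _ = n := hnlm.symm
    obtain ⟨am, ham_cop, ham⟩ := ih m hmlt hmsf hmodd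
    -- choose c₀ for l₀
    have hl₀card : (1 : ZMod l₀) ≠ 0 := one_ne_zero
    obtain ⟨c₀, hc₀ne, hc₀⟩ :
        ∃ c₀ : ℕ, ¬ l₀ ∣ c₀ ∧ legendreSym l₀ (c₀ : ℤ) = legendreSym l₀ (-1) := by
      by_cases hsq : IsSquare ((-1 : ZMod l₀))
      · refine ⟨1, by simpa using hl₀p.one_lt.ne', ?_⟩
        have h1 : legendreSym l₀ ((1:ℕ) : ℤ) = 1 := by
          rw [show ((1:ℕ):ℤ) = 1 by norm_num]
          exact (legendreSym.eq_one_iff l₀ (by exact_mod_cast one_ne_zero)).mpr (by simpa using isSquare_one)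
        have h2 : legendreSym l₀ (-1) = 1 := by
          refine (legendreSym.eq_one_iff l₀ ?_).mpr (by simpa using hsq)
          simp only [Int.cast_neg, Int.cast_one]
          exact neg_ne_zero.mpr one_ne_zero
        rw [h1, h2]
      · haveI : Finite (ZMod l₀) := by
          haveI : NeZero l₀ := ⟨hl₀p.pos.ne'⟩
          infer_instance
        obtain ⟨uu, huu⟩ := FiniteField.exists_nonsquare
          (F := ZMod l₀) (by rw [ZMod.ringChar_zmod_n]; exact hl₀2)
        refine ⟨uu.val, ?_, ?_⟩
        · rw [← ZMod.natCast_eq_zero_iff, ZMod.natCast_val, ZMod.cast_id]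
          intro h0
          exact huu (h0 ▸ ⟨0, by ring⟩)
        · have hval : ((uu.val : ℤ) : ZMod l₀) = uu := by
            push_cast
            rw [ZMod.natCast_val, ZMod.cast_id]
          have hA : legendreSym l₀ (uu.val : ℤ) = -1 :=
            (legendreSym.eq_neg_one_iff l₀).mpr (by rw [hval]; exact huu)
          have hB : legendreSym l₀ (-1) = -1 :=
            (legendreSym.eq_neg_one_iff l₀).mpr (by simpa using hsq)
          rw [hA, hB]
    -- CRT
    obtain ⟨k, hk₁, hk₂⟩ := Nat.chineseRemainder hcop c₀ am
    refine ⟨k, ?_, ?_⟩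
    · rw [hnlm]
      refine Nat.Coprime.mul_right ?_ ?_
      · exact coprime_of_modEq hk₁
          (((Nat.Prime.coprime_iff_not_dvd hl₀p).mpr hc₀ne).symm) hl₀p.pos.ne'
      · exact coprime_of_modEq hk₂ ham_cop hm0
    · intro l hl hdvd
      haveI : Fact l.Prime := ⟨hl⟩
      rcases (Nat.Prime.dvd_mul hl).mp (hnlm ▸ hdvd) with h | h
      · have hll₀ : l = l₀ := (Nat.prime_dvd_prime_iff_eq hl hl₀p).mp h
        subst hll₀
        rw [legendre_congr_nat hk₁]
        exact hc₀
      · rw [legendre_congr_nat (hk₂.of_dvd h)]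
        exact ham l hl h
lemma legendre_prod (p : ℕ) [Fact p.Prime] : ∀ n' : ℕ, Squarefree n' → Odd n' →
    (∀ l : ℕ, l.Prime → l ∣ n' → legendreSym p (l:ℤ) = χ₄ (l:ℕ)) →
    legendreSym p (n':ℤ) = χ₄ (n' : ℕ) := by
  intro n'
  induction n' using Nat.strong_induction_on with
  | _ n' ih =>
    intro hsf hodd hl
    rcases eq_or_ne n' 1 with rfl | hn1
    · have h1 : legendreSym p ((1:ℕ):ℤ) = 1 :=
        (legendreSym.eq_one_iff p (by exact_mod_cast one_ne_zero)).mpr (by simpa using isSquare_one)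
      rw [h1, χ₄_nat_eq_if_mod_four]
      norm_num
    have hn0 : n' ≠ 0 := by rintro rfl; exact not_squarefree_zero hsf
    set l₀ := n'.minFac with hl₀def
    have hl₀p : l₀.Prime := Nat.minFac_prime hn1
    set m := n' / l₀ with hmdef
    have hnlm : n' = l₀ * m := by
      rw [hmdef]; exact (Nat.mul_div_cancel' (Nat.minFac_dvd n')).symm
    have hmdvd : m ∣ n' := ⟨l₀, by rw [hnlm]; ring⟩
    have hmsf : Squarefree m := hsf.squarefree_of_dvd hmdvd
    have hmodd : Odd m := by
      rcases Nat.even_or_odd m with he | ho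
      · exact absurd (hnlm ▸ (he.mul_left l₀)) (Nat.not_even_iff_odd.mpr hodd)
      · exact ho
    have hm0 : m ≠ 0 := by intro h0; apply hn0; rw [hnlm, h0, mul_zero]
    have hmlt : m < n' := by
      have h2 : 2 ≤ l₀ := hl₀p.two_le
      have h1 : 1 ≤ m := Nat.one_le_iff_ne_zero.mpr hm0
      calc m < l₀ * m := by nlinarith
        _ = n' := hnlm.symm
    have ihm := ih m hmlt hmsf hmodd (fun l hlp hld => hl l hlp (hld.trans hmdvd))
    have hll₀ := hl l₀ hl₀p (Nat.minFac_dvd n')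
    have hcast : ((n':ℕ):ℤ) = ((l₀:ℕ):ℤ) * ((m:ℕ):ℤ) := by rw [hnlm]; push_cast; ring
    rw [hcast, legendreSym.mul, hll₀, ihm]
    have : ((n' : ℕ) : ZMod 4) = ((l₀ : ℕ) : ZMod 4) * ((m : ℕ) : ZMod 4) := by
      rw [hnlm]; push_cast; ring
    rw [this, map_mul]

set_option maxHeartbeats 1600000 in
/-- Key arithmetic case of the three squares theorem:
a squarefree `n ≡ 1, 2 (mod 4)` is a sum of three squares. -/
theorem three_sq_squarefree (n : ℕ) (hsf : Squarefree n)
    (h4 : n % 4 = 1 ∨ n % 4 = 2) (hn2 : 2 ≤ n) :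
    ∃ x y z : ℤ, (n:ℤ) = x^2 + y^2 + z^2 := by
  obtain ⟨n', hn'odd, hnn'⟩ : ∃ n', Odd n' ∧ (n = n' ∨ n = 2 * n') := by
    rcases h4 with h | h
    · exact ⟨n, Nat.odd_iff.mpr (by omega), Or.inl rfl⟩
    · exact ⟨n/2, Nat.odd_iff.mpr (by omega), Or.inr (by omega)⟩
  have hn'dvd : n' ∣ n := by rcases hnn' with rfl | h; exacts [dvd_rfl, ⟨2, by rw [h]; ring⟩]
  have hn'sf : Squarefree n' := hsf.squarefree_of_dvd hn'dvd
  have hn'0 : n' ≠ 0 := by rintro rfl; omega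
  have hn'le : n' ≤ n := Nat.le_of_dvd (by omega) hn'dvd
  have hn'2 : ¬ (2 ∣ n') := fun hdvd => (Nat.not_even_iff_odd.mpr hn'odd) (even_iff_two_dvd.mpr hdvd)
  set r₈ : ℕ := if n % 8 = 6 then 5 else 1 with hr₈def
  have hr₈cases : (r₈ = 5 ∧ n % 8 = 6) ∨ (r₈ = 1 ∧ n % 8 ≠ 6) := by
    by_cases h : n % 8 = 6
    · left; exact ⟨by rw [hr₈def, if_pos h], h⟩
    · right; exact ⟨by rw [hr₈def, if_neg h], h⟩
  obtain ⟨ares, hares_cop, hares⟩ := res_build n' hn'sf hn'odd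
  have hcop8 : Nat.Coprime 8 n' := by
    have h2 : Nat.Coprime 2 n' := (Nat.Prime.coprime_iff_not_dvd Nat.prime_two).mpr hn'2
    rw [show (8:ℕ) = 2^3 by norm_num]
    exact Nat.Coprime.pow_left 3 h2
  obtain ⟨k, hk8, hkn'⟩ := Nat.chineseRemainder hcop8 r₈ ares
  have hkcop : Nat.Coprime k (8 * n') := by
    refine Nat.Coprime.mul_right ?_ ?_
    · refine coprime_of_modEq hk8 ?_ (by norm_num)
      rcases hr₈cases with ⟨h5, -⟩ | ⟨h1, -⟩
      · rw [h5]; decide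
      · rw [h1]; decide
    · exact coprime_of_modEq hkn' hares_cop hn'0
  haveI : NeZero (8 * n') := ⟨by positivity⟩
  have hunit : IsUnit ((k : ZMod (8*n'))) := (ZMod.isUnit_iff_coprime k (8*n')).mpr hkcop
  obtain ⟨p, hpgt, hpp, hpmod⟩ := Nat.forall_exists_prime_gt_and_eq_mod hunit (n+2)
  haveI : Fact p.Prime := ⟨hpp⟩
  have hpk : p ≡ k [MOD 8*n'] := (ZMod.natCast_eq_natCast_iff p k (8*n')).mp hpmod
  have hp8 : p % 8 = r₈ := by
    have h := (hpk.of_dvd ⟨n', rfl⟩).trans hk8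
    have hr8lt : r₈ < 8 := by rcases hr₈cases with ⟨h5, -⟩ | ⟨h1, -⟩ <;> omega
    have : p % 8 = r₈ % 8 := h
    omega
  have hp4 : p % 4 = 1 := by rcases hr₈cases with ⟨h5, -⟩ | ⟨h1, -⟩ <;> omega
  have hp2 : p ≠ 2 := by rcases hr₈cases with ⟨h5, -⟩ | ⟨h1, -⟩ <;> omega
  have hpn : ¬ (p ∣ n) := fun hdvd => by
    have := Nat.le_of_dvd (by omega) hdvd; omega
  have hpn' : p ≡ ares [MOD n'] := (hpk.of_dvd ⟨8, by ring⟩).trans hkn'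
  -- facts at odd primes dividing n'
  have hlodd : ∀ l : ℕ, l.Prime → l ∣ n' → l % 2 = 1 := by
    intro l hl hdvd
    have : ¬ (2 ∣ l) := fun h2 => hn'2 (h2.trans hdvd)
    omega
  have hlnotp : ∀ l : ℕ, l.Prime → l ∣ n' → ¬ ((l:ℤ) ∣ (p:ℤ)) := by
    intro l hl hdvd hlp
    have h1 : l ∣ p := Int.natCast_dvd_natCast.mp hlp
    have h2 : l = p := (Nat.prime_dvd_prime_iff_eq hl hpp).mp h1
    have := Nat.le_of_dvd (by omega) hdvd
    omega
  have hprime_l : ∀ l : ℕ, (hl : l.Prime) → l ∣ n' →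
      @legendreSym l ⟨hl⟩ (p:ℤ) = @legendreSym l ⟨hl⟩ (-1) := by
    intro l hl hdvd
    haveI : Fact l.Prime := ⟨hl⟩
    have h1 : legendreSym l (p:ℤ) = legendreSym l (ares:ℤ) :=
      legendre_congr_nat (hpn'.of_dvd hdvd)
    rw [h1]
    exact hares l hl hdvd
  -- Legendre symbol of each prime divisor of n' at p
  have hl_pl : ∀ l : ℕ, l.Prime → l ∣ n' → legendreSym p (l:ℤ) = χ₄ (l:ℕ) := by
    intro l hl hdvd
    haveI : Fact l.Prime := ⟨hl⟩
    have hl2 : l ≠ 2 := by have := hlodd l hl hdvd; omega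
    have hrecip := legendreSym.quadratic_reciprocity_one_mod_four hp4 hl2
    rw [← hrecip, hprime_l l hl hdvd]
    exact legendreSym.at_neg_one hl2
  have hn'leg : legendreSym p ((n':ℕ):ℤ) = χ₄ (n' : ℕ) :=
    legendre_prod p n' hn'sf hn'odd hl_pl
  have hχ₄p : χ₄ ((p:ℕ) : ZMod 4) = 1 := by
    rw [χ₄_nat_eq_if_mod_four]
    simp [show p % 2 = 1 by omega, hp4]
  -- p does not divide n as integers
  have hpnZ : ¬ ((p:ℤ) ∣ (n:ℤ)) := fun h => hpn (Int.natCast_dvd_natCast.mp h)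
  -- the key quantity: -n is a square mod p
  have hmain : legendreSym p (-(n:ℤ)) = 1 := by
    rcases hnn' with heq | heq
    · -- n = n' odd, n % 4 = 1
      have hn4 : n % 4 = 1 := by
        rcases h4 with h | h
        · exact h
        · exfalso; omega
      have hsplit : (-(n:ℤ)) = (-1) * ((n':ℕ):ℤ) := by rw [heq]; push_cast; ring
      rw [hsplit, legendreSym.mul, legendreSym.at_neg_one hp2, hχ₄p, hn'leg]
      have : χ₄ ((n':ℕ) : ZMod 4) = 1 := by
        rw [χ₄_nat_eq_if_mod_four]
        have h1 : n' % 2 = 1 := Nat.odd_iff.mp hn'odd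
        have h2 : n' % 4 = 1 := by omega
        simp [h1, h2]
      rw [this]; ring
    · -- n = 2 n'
      have hsplit : (-(n:ℤ)) = (-1) * (2 * ((n':ℕ):ℤ)) := by rw [heq]; push_cast; ring
      rw [hsplit, legendreSym.mul, legendreSym.mul, legendreSym.at_neg_one hp2, hχ₄p,
        legendreSym.at_two hp2, hn'leg]
      have hn'2mod : n' % 2 = 1 := Nat.odd_iff.mp hn'odd
      rcases hr₈cases with ⟨h5, h86⟩ | ⟨h1, h86⟩
      · -- n % 8 = 6, p % 8 = 5
        have hχ₈ : χ₈ ((p:ℕ) : ZMod 8) = -1 := by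
          rw [χ₈_nat_eq_if_mod_eight]
          simp [show p % 2 = 1 by omega, show ¬(p % 8 = 1 ∨ p % 8 = 7) by omega]
        have hχn' : χ₄ ((n':ℕ) : ZMod 4) = -1 := by
          rw [χ₄_nat_eq_if_mod_four]
          have h2 : n' % 4 = 3 := by omega
          simp [hn'2mod, h2]
        rw [hχ₈, hχn']; ring
      · -- n % 8 = 2 (since n % 4 = 2 here), p % 8 = 1
        have hn8 : n % 8 = 2 := by
          rcases h4 with h | h
          · exfalso; omega
          · omega
        have hχ₈ : χ₈ ((p:ℕ) : ZMod 8) = 1 := by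
          rw [χ₈_nat_eq_if_mod_eight]
          simp [show p % 2 = 1 by omega, show p % 8 = 1 ∨ p % 8 = 7 by omega]
        have hχn' : χ₄ ((n':ℕ) : ZMod 4) = 1 := by
          rw [χ₄_nat_eq_if_mod_four]
          have h2 : n' % 4 = 1 := by omega
          simp [hn'2mod, h2]
        rw [hχ₈, hχn']; ring
  have hncast_ne : ((-(n:ℤ) : ℤ) : ZMod p) ≠ 0 := by
    rw [Ne, ZMod.intCast_zmod_eq_zero_iff_dvd]
    intro h
    exact hpnZ ((dvd_neg).mp h)
  have hnsq : IsSquare ((-(n:ℤ) : ℤ) : ZMod p) :=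
    (legendreSym.eq_one_iff p hncast_ne).mp hmain
  -- -p is a square mod every prime divisor of n
  have hsq_all : ∀ l : ℕ, l.Prime → l ∣ n → IsSquare ((-(p:ℤ) : ℤ) : ZMod l) := by
    intro l hl hdvd
    haveI : Fact l.Prime := ⟨hl⟩
    by_cases hl2 : l = 2
    · subst hl2; exact zmod2_is_square _
    · have hln' : l ∣ n' := by
        rcases hnn' with heq | heq
        · rwa [heq] at hdvd
        · rw [heq] at hdvd
          rcases (Nat.Prime.dvd_mul hl).mp hdvd with h | h
          · exact absurd ((Nat.prime_dvd_prime_iff_eq hl Nat.prime_two).mp h) hl2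
          · exact h
      have hsplit : legendreSym l (-(p:ℤ)) = legendreSym l (-1) * legendreSym l ((p:ℕ):ℤ) := by
        rw [← legendreSym.mul]; congr 1; ring
      have hχval : legendreSym l (-1) = 1 ∨ legendreSym l (-1) = -1 := by
        rw [legendreSym.at_neg_one hl2, χ₄_nat_eq_if_mod_four]
        have h1 : l % 2 = 1 := hlodd l hl hln'
        rcases Nat.lt_or_ge (l % 4) 2 with h | h
        · left; simp [h1, show l % 4 = 1 by omega]
        · right; simp [h1, show l % 4 ≠ 1 by omega, show l % 2 ≠ 0 by omega]
      have hone : legendreSym l (-(p:ℤ)) = 1 := by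
        rw [hsplit, hprime_l l hl hln']
        rcases hχval with h | h <;> rw [h] <;> ring
      refine (legendreSym.eq_one_iff l ?_).mp hone
      rw [Ne, ZMod.intCast_zmod_eq_zero_iff_dvd]
      intro h
      exact hlnotp l hl hln' ((dvd_neg).mp h)
  -- lift to a square mod n and extract b
  have hbsq := isSquare_zmod_of_prime_divisors n hsf (-(p:ℤ)) hsq_all
  obtain ⟨B, hB⟩ := hbsq
  haveI : NeZero n := ⟨by omega⟩
  set b : ℤ := (B.val : ℤ) with hbdef
  have hbB : ((b : ℤ) : ZMod n) = B := by
    rw [hbdef]; push_cast; rw [ZMod.natCast_val, ZMod.cast_id]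
  have hdvd_b : (n:ℤ) ∣ (b^2 + (p:ℤ)) := by
    rw [← ZMod.intCast_zmod_eq_zero_iff_dvd]
    push_cast
    rw [show ((b:ℤ) : ZMod n)^2 = B^2 by rw [hbB]]
    have : ((-(p:ℤ) : ℤ) : ZMod n) = B * B := hB
    push_cast at this
    rw [show (B:ZMod n)^2 = B * B by ring, ← this]
    ring
  -- extract t
  have hnne : (((n:ℕ):ℤ) : ZMod p) ≠ 0 := by
    rw [Ne, ZMod.intCast_zmod_eq_zero_iff_dvd]
    exact_mod_cast hpnZ
  obtain ⟨W, hW⟩ := hnsq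
  set τ : ZMod p := W * (((n:ℕ):ℤ) : ZMod p)⁻¹ with hτdef
  set t : ℤ := (τ.val : ℤ) with htdef
  have htτ : ((t : ℤ) : ZMod p) = τ := by
    rw [htdef]; push_cast; rw [ZMod.natCast_val, ZMod.cast_id]
  have hninv : (((n:ℕ):ℤ) : ZMod p) * (((n:ℕ):ℤ) : ZMod p)⁻¹ = 1 := mul_inv_cancel₀ hnne
  have hW' : W * W = -(((n:ℕ):ℤ) : ZMod p) := by rw [← hW]; push_cast; ring
  have hτsq : (((n:ℕ):ℤ) : ZMod p) * τ^2 = -1 := by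
    calc (((n:ℕ):ℤ) : ZMod p) * τ^2
        = W*W * ((((n:ℕ):ℤ) : ZMod p) * (((n:ℕ):ℤ) : ZMod p)⁻¹) * (((n:ℕ):ℤ) : ZMod p)⁻¹ := by
          rw [hτdef]; ring
      _ = W*W * (((n:ℕ):ℤ) : ZMod p)⁻¹ := by rw [hninv]; ring
      _ = -((((n:ℕ):ℤ) : ZMod p) * (((n:ℕ):ℤ) : ZMod p)⁻¹) := by rw [hW']; ring
      _ = -1 := by rw [hninv]
  have hdvd_t : (p:ℤ) ∣ ((n:ℤ)*t^2 + 1) := by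
    rw [← ZMod.intCast_zmod_eq_zero_iff_dvd]
    push_cast
    rw [show ((t:ℤ) : ZMod p) = τ from htτ]
    have := hτsq
    push_cast at this ⊢
    rw [show ((n:ℕ) : ZMod p) * τ^2 = -1 from by exact_mod_cast this]
    ring
  -- assemble the data for the bridge
  set s : ℤ := (b^2 + (p:ℤ)) / (n:ℤ) with hsdef
  have hns : (n:ℤ) * s = b^2 + (p:ℤ) := Int.mul_ediv_cancel' hdvd_b
  set u : ℤ := ((n:ℤ)*t^2 + 1) / (p:ℤ) with hudef
  have hpu : (p:ℤ) * u = (n:ℤ)*t^2 + 1 := Int.mul_ediv_cancel' hdvd_t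
  exact bridge (show (1:ℤ) ≤ (n:ℤ) by exact_mod_cast Nat.one_le_iff_ne_zero.mpr (by omega))
    (show (1:ℤ) ≤ (p:ℤ) by exact_mod_cast hpp.one_lt.le)
    (show (n:ℤ)*s - b^2 = (p:ℤ) by linarith)
    (show (p:ℤ)*u = 1 + (n:ℤ)*t^2 by linarith)
/-- Every natural number congruent to 1 or 2 mod 4 is a sum of three squares. -/
theorem three_sq_mod4 (n : ℕ) (h4 : n % 4 = 1 ∨ n % 4 = 2) :
    ∃ x y z : ℤ, (n:ℤ) = x^2 + y^2 + z^2 := by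
  obtain ⟨n₀, tt, htn, hsf⟩ := Nat.sq_mul_squarefree n
  have htodd : tt % 2 = 1 := by
    by_contra h
    obtain ⟨w, hw⟩ : ∃ w, tt = 2*w := ⟨tt/2, by omega⟩
    have : n = 4*(w^2*n₀) := by rw [← htn, hw]; ring
    omega
  obtain ⟨aa, haa⟩ : ∃ aa, tt = 2*aa + 1 := ⟨tt/2, by omega⟩
  have hmod : n = 4*((aa^2+aa)*n₀) + n₀ := by rw [← htn, haa]; ring
  have hn₀4 : n₀ % 4 = 1 ∨ n₀ % 4 = 2 := by omega
  rcases eq_or_ne n₀ 1 with rfl | hne1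
  · refine ⟨(tt:ℤ), 0, 0, ?_⟩
    rw [← htn]; push_cast; ring
  · have hn₀2 : 2 ≤ n₀ := by
      have h0 : n₀ ≠ 0 := by rintro rfl; omega
      omega
    obtain ⟨x, y, z, hxyz⟩ := three_sq_squarefree n₀ hsf hn₀4 hn₀2
    refine ⟨tt*x, tt*y, tt*z, ?_⟩
    rw [← htn]; push_cast
    calc ((tt:ℤ)^2 * (n₀:ℤ)) = (tt:ℤ)^2 * ((x:ℤ)^2+y^2+z^2) := by rw [← hxyz]
      _ = (tt*x)^2 + (tt*y)^2 + (tt*z)^2 := by ring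

/-- Universality of `x² + y² + z² + 6u²`. -/
theorem form1116 : ∀ m : ℕ, ∃ a b c u : ℤ, (m:ℤ) = a^2 + b^2 + c^2 + 6*u^2 := by
  intro m
  induction m using Nat.strong_induction_on with
  | _ m ih =>
    rcases hm4 : m % 4 with _ | _ | _ | mm
    · -- m ≡ 0 mod 4
      rcases eq_or_ne m 0 with rfl | hne
      · exact ⟨0, 0, 0, 0, by norm_num⟩
      · have h4 : m = 4 * (m/4) := by omega
        have hlt : m/4 < m := by omega
        obtain ⟨a, b, c, u, habc⟩ := ih (m/4) hlt
        refine ⟨2*a, 2*b, 2*c, 2*u, ?_⟩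
        rw [h4, Nat.cast_mul, habc]; push_cast; ring
    · -- m ≡ 1
      obtain ⟨x, y, z, h⟩ := three_sq_mod4 m (Or.inl hm4)
      exact ⟨x, y, z, 0, by rw [h]; ring⟩
    · -- m ≡ 2
      obtain ⟨x, y, z, h⟩ := three_sq_mod4 m (Or.inr hm4)
      exact ⟨x, y, z, 0, by rw [h]; ring⟩
    · -- m ≡ 3
      have hm3 : m % 4 = 3 := by omega
      rcases eq_or_ne m 3 with rfl | hne
      · exact ⟨1, 1, 1, 0, by norm_num⟩
      · have hge : 7 ≤ m := by omega
        have h4 : (m - 6) % 4 = 1 := by omega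
        obtain ⟨x, y, z, h⟩ := three_sq_mod4 (m - 6) (Or.inl h4)
        refine ⟨x, y, z, 1, ?_⟩
        have hcast : ((m - 6 : ℕ) : ℤ) = (m:ℤ) - 6 := by
          rw [Nat.cast_sub (by omega)]; norm_num
        rw [hcast] at h
        linarith [h]

/-- For every integer `k ≥ 2` there are integers `x₁, …, x₅` with
`k = 2x₁² + 2x₂² + 2x₃² + 2x₄² + 3x₅²` and moreover `x₁ = 1` or `x₅ = 1`. -/
theorem represent_with_unit_coordinate (k : ℤ) (hk : 2 ≤ k) :
    ∃ x₁ x₂ x₃ x₄ x₅ : ℤ,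
      k = 2 * x₁ ^ 2 + 2 * x₂ ^ 2 + 2 * x₃ ^ 2 + 2 * x₄ ^ 2 + 3 * x₅ ^ 2 ∧
      (x₁ = 1 ∨ x₅ = 1) := by
  rcases Int.even_or_odd k with ⟨j, hj⟩ | ⟨j, hj⟩
  · -- k even, k = j + j = 2j, j ≥ 1
    have hj1 : 1 ≤ j := by omega
    set m : ℕ := (j - 1).toNat with hmdef
    have hmcast : (m:ℤ) = j - 1 := Int.toNat_of_nonneg (by omega)
    obtain ⟨a, b, c, u, habc⟩ := form1116 m
    refine ⟨1, a, b, c, 2*u, ?_, Or.inl rfl⟩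
    rw [hmcast] at habc
    have : k = 2 + 2*(j - 1) := by omega
    rw [this, habc]; ring
  · -- k odd, k = 2j + 1 ≥ 3, so j ≥ 1
    have hj1 : 1 ≤ j := by omega
    set K : ℕ := (j - 1).toNat with hKdef
    have hKcast : (K:ℤ) = j - 1 := Int.toNat_of_nonneg (by omega)
    obtain ⟨a, b, c, d, habcd⟩ := Nat.sum_four_squares K
    refine ⟨(a:ℤ), b, c, d, 1, ?_, Or.inr rfl⟩
    have hcast : (a:ℤ)^2 + b^2 + c^2 + d^2 = (K:ℤ) := by exact_mod_cast habcd
    rw [hKcast] at hcast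
    have : k = 2*(j-1) + 3 := by omega
    rw [this, ← hcast]; ring
end arith
end

section
/- The set of 3-dimensional ℂ-linear subspaces W ⊆ ℂ⁶ such that every vector (z₁,…,z₆) ∈ W satisfies z₁³ + z₂³ + z₃³ + z₄³ + z₅³ + z₆³ = 0 has exactly 405 elements. Equivalently, the Fermat cubic fourfold X_F = {z₁³ + ⋯ + z₆³ = 0} ⊂ ℙ⁵ contains exactly 405 planes. -/
open Finset Matrix

noncomputable section FermatPlanes405





/-- A primitive cube root of unity. -/
noncomputable def zeta : ℂ := ⟨-(1/2), Real.sqrt 3 / 2⟩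

lemma zeta_sq : zeta ^ 2 + zeta + 1 = 0 := by
  have h3 : (Real.sqrt 3) * (Real.sqrt 3) = 3 := Real.mul_self_sqrt (by norm_num)
  apply Complex.ext <;>
    simp [zeta, pow_two, Complex.mul_re, Complex.mul_im, Complex.add_re, Complex.add_im] <;>
    nlinarith [h3]

lemma zeta_cube : zeta ^ 3 = 1 := by linear_combination (zeta - 1) * zeta_sq

lemma zeta_ne_one : zeta ≠ 1 := by
  intro h
  have h2 := congrArg Complex.im h
  simp [zeta] at h2

lemma cubeRoot_iff (c : ℂ) : c ^ 3 = -1 ↔ c = -1 ∨ c = -zeta ∨ c = -zeta ^ 2 := by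
  constructor
  · intro h
    have key : (c + 1) * (c + zeta) * (c + zeta ^ 2) = 0 := by
      linear_combination h + (c ^ 2 + c) * zeta_sq + (c + 1) * zeta_cube
    rcases mul_eq_zero.1 key with h' | h'
    · rcases mul_eq_zero.1 h' with h'' | h''
      · exact Or.inl (eq_neg_of_add_eq_zero_left h'')
      · exact Or.inr (Or.inl (eq_neg_of_add_eq_zero_left h''))
    · exact Or.inr (Or.inr (eq_neg_of_add_eq_zero_left h'))
  · rintro (rfl | rfl | rfl)
    · norm_num
    · linear_combination (-1 : ℂ) * zeta_cube
    · linear_combination (-(zeta ^ 3) - 1) * zeta_cube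

lemma root_d1 : (-1 : ℂ) ≠ -zeta := fun h => zeta_ne_one (neg_injective h).symm

lemma root_d2 : (-1 : ℂ) ≠ -zeta ^ 2 := by
  intro h
  have h1 : zeta ^ 2 = 1 := (neg_injective h).symm
  have h2 : zeta = -2 := by linear_combination zeta_sq - h1
  rw [h2] at h1
  norm_num at h1

lemma root_d3 : (-zeta : ℂ) ≠ -zeta ^ 2 := by
  intro h
  have h1 : zeta = zeta ^ 2 := neg_injective h
  have h2 : zeta = -(1/2) := by linear_combination (1/2 : ℂ) * zeta_sq + (1/2 : ℂ) * h1
  have h4 := zeta_sq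
  rw [h2] at h4
  norm_num at h4

open scoped Classical in
/-- discrete logarithm on cube roots of `-1`. -/
noncomputable def dlog (c : ℂ) : ZMod 3 := if c = -1 then 0 else if c = -zeta then 1 else 2

noncomputable def rho (k : ZMod 3) : ℂ := if k = 0 then -1 else if k = 1 then -zeta else -zeta ^ 2

lemma zmod3_cases (k : ZMod 3) : k = 0 ∨ k = 1 ∨ k = 2 := by revert k; decide

lemma rho_zero : rho 0 = -1 := by rw [rho, if_pos rfl]
lemma rho_one : rho 1 = -zeta := by rw [rho, if_neg (by decide), if_pos rfl]
lemma rho_two : rho 2 = -zeta ^ 2 := by rw [rho, if_neg (by decide), if_neg (by decide)]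

lemma dlog_neg_one : dlog (-1) = 0 := by rw [dlog, if_pos rfl]
lemma dlog_neg_zeta : dlog (-zeta) = 1 := by
  rw [dlog, if_neg (Ne.symm root_d1), if_pos rfl]
lemma dlog_neg_zeta_sq : dlog (-zeta ^ 2) = 2 := by
  rw [dlog, if_neg (Ne.symm root_d2), if_neg (Ne.symm root_d3)]

lemma rho_cube (k : ZMod 3) : rho k ^ 3 = -1 := by
  rcases zmod3_cases k with rfl | rfl | rfl <;>
    rw [cubeRoot_iff] <;> simp [rho_zero, rho_one, rho_two]

lemma rho_neg_mul (k : ZMod 3) : rho (-k) * rho k = 1 := by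
  rcases zmod3_cases k with rfl | rfl | rfl
  · norm_num [rho_zero]
  · have h : (-1 : ZMod 3) = 2 := by decide
    rw [h, rho_two, rho_one]; linear_combination zeta_cube
  · have h : (-2 : ZMod 3) = 1 := by decide
    rw [h, rho_one, rho_two]; linear_combination zeta_cube

lemma dlog_rho (k : ZMod 3) : dlog (rho k) = k := by
  rcases zmod3_cases k with rfl | rfl | rfl <;>
    simp [rho_zero, rho_one, rho_two, dlog_neg_one, dlog_neg_zeta, dlog_neg_zeta_sq]

lemma rho_dlog {c : ℂ} (h : c ^ 3 = -1) : rho (dlog c) = c := by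
  rcases (cubeRoot_iff c).1 h with rfl | rfl | rfl <;>
    simp [rho_zero, rho_one, rho_two, dlog_neg_one, dlog_neg_zeta, dlog_neg_zeta_sq]

lemma dlog_inv {c : ℂ} (h : c ^ 3 = -1) : dlog c⁻¹ = -dlog c := by
  rcases (cubeRoot_iff c).1 h with rfl | rfl | rfl
  · norm_num [dlog_neg_one]
  · have hinv : (-zeta)⁻¹ = -zeta ^ 2 := by
      apply inv_eq_of_mul_eq_one_right; linear_combination zeta_cube
    rw [hinv, dlog_neg_zeta_sq, dlog_neg_zeta]; decide
  · have hinv : (-zeta ^ 2)⁻¹ = -zeta := by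
      apply inv_eq_of_mul_eq_one_right; linear_combination zeta_cube
    rw [hinv, dlog_neg_zeta, dlog_neg_zeta_sq]; decide








/-- For a fixed-point-free involution of `Fin 6`, exactly 3 indices satisfy `i < f i`. -/
lemma card_transversal (f : Fin 6 → Fin 6) (hinv : ∀ i, f (f i) = i) (hfp : ∀ i, f i ≠ i) :
    (univ.filter fun i => i < f i).card = 3 := by
  classical
  set s₁ := univ.filter fun i : Fin 6 => i < f i with hs₁
  set s₂ := univ.filter fun i : Fin 6 => f i < i with hs₂
  have hdisj : Disjoint s₁ s₂ := by
    rw [Finset.disjoint_left]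
    intro a ha hb
    rw [hs₁, mem_filter] at ha
    rw [hs₂, mem_filter] at hb
    exact absurd hb.2 (lt_asymm ha.2)
  have hunion : s₁ ∪ s₂ = univ := by
    ext a
    simp only [hs₁, hs₂, mem_union, mem_filter, mem_univ, true_and, iff_true]
    rcases (hfp a).lt_or_gt with h | h
    · exact Or.inr h
    · exact Or.inl h
  have hcard : s₁.card = s₂.card := by
    apply Finset.card_bij (fun i _ => f i)
    · intro a ha
      rw [hs₁, mem_filter] at ha
      rw [hs₂, mem_filter]
      exact ⟨mem_univ _, by rw [hinv]; exact ha.2⟩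
    · intro a _ b _ hab
      have h := congrArg f hab
      rwa [hinv, hinv] at h
    · intro b hb
      rw [hs₂, mem_filter] at hb
      refine ⟨f b, ?_, hinv b⟩
      rw [hs₁, mem_filter]
      exact ⟨mem_univ _, by rw [hinv]; exact hb.2⟩
  have htot : s₁.card + s₂.card = 6 := by
    rw [← Finset.card_union_of_disjoint hdisj, hunion]
    simp
  omega

variable (f : Fin 6 → Fin 6) (ω : Fin 6 → ℂ)

/-- The plane associated to a pairing `f` with ratios `ω`. -/
noncomputable def plane : Submodule ℂ (Fin 6 → ℂ) where
  carrier := {z | ∀ i, z (f i) = ω i * z i}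
  add_mem' := by
    intro a b ha hb i
    simp only [Pi.add_apply, ha i, hb i]
    ring
  zero_mem' := by intro i; simp
  smul_mem' := by
    intro c a ha i
    simp only [Pi.smul_apply, ha i, smul_eq_mul]
    ring

lemma mem_plane_iff (z : Fin 6 → ℂ) : z ∈ plane f ω ↔ ∀ i, z (f i) = ω i * z i := Iff.rfl

variable {f ω}

lemma plane_finrank (hinv : ∀ i, f (f i) = i) (hfp : ∀ i, f i ≠ i)
    (hω1 : ∀ i, ω (f i) * ω i = 1) :
    Module.finrank ℂ (plane f ω) = 3 := by
  classical
  let T := {i : Fin 6 // i < f i}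
  let φ : plane f ω →ₗ[ℂ] (T → ℂ) :=
    { toFun := fun z t => (z : Fin 6 → ℂ) t.1
      map_add' := fun x y => rfl
      map_smul' := fun c x => rfl }
  have hinj : Function.Injective φ := by
    intro z w h
    apply Subtype.ext
    funext i
    have hzw : ∀ t : T, (z : Fin 6 → ℂ) t.1 = (w : Fin 6 → ℂ) t.1 := fun t => congrFun h t
    rcases (hfp i).lt_or_gt with hi | hi
    · have hfi : f i < f (f i) := by rw [hinv]; exact hi
      have h1 := hzw ⟨f i, hfi⟩
      have h2 := (mem_plane_iff f ω _).1 z.2 (f i)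
      have h3 := (mem_plane_iff f ω _).1 w.2 (f i)
      rw [hinv] at h2 h3
      rw [h2, h3, h1]
    · exact hzw ⟨i, hi⟩
  have hsurj : Function.Surjective φ := by
    intro u
    set u' : Fin 6 → ℂ := fun i => if h : i < f i then u ⟨i, h⟩ else 0 with hu'
    set w : Fin 6 → ℂ := fun i => if i < f i then u' i else ω (f i) * u' (f i) with hw
    have hwmem : w ∈ plane f ω := by
      intro j
      rcases (hfp j).lt_or_gt with hj | hj
      · -- f j < j
        have h1 : ¬ j < f j := lt_asymm hj
        have h2 : f j < f (f j) := by rw [hinv]; exact hj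
        calc w (f j) = u' (f j) := by rw [hw]; simp only [if_pos h2]
          _ = ω j * w j := by
              rw [hw]
              simp only [if_neg h1]
              rw [← mul_assoc, mul_comm (ω j) (ω (f j)), hω1 j, one_mul]
      · -- j < f j
        have h1 : ¬ f j < f (f j) := by rw [hinv]; exact lt_asymm hj
        calc w (f j) = ω (f (f j)) * u' (f (f j)) := by rw [hw]; simp only [if_neg h1]
          _ = ω j * u' j := by rw [hinv]
          _ = ω j * w j := by rw [hw]; simp only [if_pos hj]
    refine ⟨⟨w, hwmem⟩, ?_⟩
    funext t
    show w t.1 = u t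
    rw [hw]
    simp only [if_pos t.2]
    rw [hu']
    simp only [dif_pos t.2]; rfl
  have e : plane f ω ≃ₗ[ℂ] (T → ℂ) := LinearEquiv.ofBijective φ ⟨hinj, hsurj⟩
  rw [e.finrank_eq, Module.finrank_pi, Fintype.card_subtype, card_transversal f hinv hfp]

lemma plane_cubic (hinv : ∀ i, f (f i) = i) (hfp : ∀ i, f i ≠ i)
    (hω3 : ∀ i, ω i ^ 3 = -1) :
    ∀ z ∈ plane f ω, ∑ i, z i ^ 3 = 0 := by
  intro z hz
  apply Finset.sum_involution (fun i _ => f i)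
  · intro i _
    rw [(mem_plane_iff f ω z).1 hz i]
    linear_combination z i ^ 3 * hω3 i
  · intro i _ _
    exact hfp i
  · intro i _
    exact mem_univ _
  · intro i _
    exact hinv i

lemma plane_inj
    (f' : Fin 6 → Fin 6) (ω' : Fin 6 → ℂ)
    (hinv : ∀ i, f (f i) = i) (hfp : ∀ i, f i ≠ i) (hω1 : ∀ i, ω (f i) * ω i = 1)
    (hfp' : ∀ i, f' i ≠ i) (hω3' : ∀ i, ω' i ^ 3 = -1)
    (h : plane f ω = plane f' ω') : f = f' ∧ ω = ω' := by
  classical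
  have key : ∀ i, f' i = f i ∧ ω' i = ω i := by
    intro i
    set v : Fin 6 → ℂ := fun x => if x = i then 1 else if x = f i then ω i else 0 with hv
    have hfii : f i ≠ i := hfp i
    have hvi : v i = 1 := by rw [hv]; simp
    have hvfi : v (f i) = ω i := by rw [hv]; simp [hfii]
    have hvmem : v ∈ plane f ω := by
      intro j
      by_cases hji : j = i
      · subst hji; rw [hvfi, hvi, mul_one]
      · by_cases hjfi : j = f i
        · subst hjfi
          rw [hinv, hvi, hvfi]
          exact (hω1 i).symm
        · have h1 : v j = 0 := by
            rw [hv]; simp [hji, hjfi]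
          have h2 : v (f j) = 0 := by
            rw [hv]
            have hne1 : f j ≠ i := by
              intro hfj
              apply hjfi
              rw [← hfj, hinv]
            have hne2 : f j ≠ f i := by
              intro hfj
              apply hji
              have := congrArg f hfj
              rwa [hinv, hinv] at this
            simp [hne1, hne2]
          rw [h1, h2, mul_zero]
    have hvmem' : v ∈ plane f' ω' := h ▸ hvmem
    have h1 := (mem_plane_iff f' ω' v).1 hvmem' i
    rw [hvi, mul_one] at h1
    have hω'ne : ω' i ≠ 0 := by
      intro h0
      have := hω3' i
      rw [h0] at this
      norm_num at this
    have hfi' : f' i = f i := by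
      by_contra hne
      have : v (f' i) = 0 := by
        rw [hv]
        simp [hfp' i, hne]
      rw [h1] at this
      exact hω'ne this
    refine ⟨hfi', ?_⟩
    rw [hfi', hvfi] at h1
    exact h1.symm
  exact ⟨funext fun i => ((key i).1).symm, funext fun i => ((key i).2).symm⟩






/-- Any two linear constraints on `ℂ³` have a common nonzero solution. -/
lemma exists_dot2_zero (w₁ w₂ : Fin 3 → ℂ) : ∃ u : Fin 3 → ℂ, u ≠ 0 ∧ w₁ ⬝ᵥ u = 0 ∧ w₂ ⬝ᵥ u = 0 := by
  set M : Matrix (Fin 3) (Fin 3) ℂ := Matrix.of ![w₁, w₂, 0] with hM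
  have hdet : M.det = 0 := by
    apply Matrix.det_eq_zero_of_row_eq_zero 2
    intro j
    rfl
  obtain ⟨v, hv, hMv⟩ := Matrix.exists_mulVec_eq_zero_iff.2 hdet
  refine ⟨v, hv, ?_, ?_⟩
  · exact congrFun hMv 0
  · exact congrFun hMv 1

/-- If a product of three binary linear forms vanishes identically then one form is zero. -/
lemma prod3_zero (A B : Fin 3 → ℂ)
    (h : ∀ s t : ℂ, ∏ l, (s * A l + t * B l) = 0) :
    ∃ l, A l = 0 ∧ B l = 0 := by
  classical
  have h1 : ∀ t : ℂ, ∃ l, 1 * A l + t * B l = 0 := by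
    intro t
    obtain ⟨l, -, hl⟩ := Finset.prod_eq_zero_iff.1 (h 1 t)
    exact ⟨l, hl⟩
  choose L hL using h1
  set cand : Finset ℂ := {0, 1, 2, 3} with hcand
  have hc4 : cand.card = 4 := by
    rw [hcand]
    rw [Finset.card_insert_of_notMem (by norm_num), Finset.card_insert_of_notMem (by norm_num),
      Finset.card_insert_of_notMem (by norm_num), Finset.card_singleton]
  have hlt : (univ : Finset (Fin 3)).card < cand.card := by
    rw [hc4]
    simp
  obtain ⟨t, -, t', -, hne, hLL⟩ :=
    Finset.exists_ne_map_eq_of_card_lt_of_maps_to hlt (fun a _ => mem_univ (L a))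
  have e1 := hL t
  have e2 := hL t'
  rw [← hLL] at e2
  have hB : B (L t) = 0 := by
    have h3 : (t - t') * B (L t) = 0 := by linear_combination e1 - e2
    rcases mul_eq_zero.1 h3 with h4 | h4
    · exact absurd (sub_eq_zero.1 h4) hne
    · exact h4
  have hA : A (L t) = 0 := by linear_combination e1 - t * hB
  exact ⟨L t, hA, hB⟩

/-- rescaling of dot products -/
lemma dot_scale {w w' : Fin 3 → ℂ} {c : ℂ} (h : ∀ x, w x = c * w' x) (v : Fin 3 → ℂ) :
    w ⬝ᵥ v = c * (w' ⬝ᵥ v) := by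
  rw [dotProduct, dotProduct, Finset.mul_sum]
  exact Finset.sum_congr rfl fun x _ => by rw [h x]; ring




lemma trilinear_vanish (W : Submodule ℂ (Fin 6 → ℂ)) (hW : ∀ z ∈ W, ∑ i, z i ^ 3 = 0) :
    ∀ x ∈ W, ∀ y ∈ W, ∀ z ∈ W, ∑ i, x i * y i * z i = 0 := by
  have B0 : ∀ x ∈ W, ∀ y ∈ W,
      (∑ i, x i ^ 2 * y i) + (∑ i, y i ^ 2 * x i) = 0 := by
    intro x hx y hy
    have h1 := hW (x + y) (W.add_mem hx hy)
    have h2 := hW x hx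
    have h3 := hW y hy
    have hexp : ∑ i, (x + y) i ^ 3
        = (∑ i, x i ^ 3) + (∑ i, y i ^ 3)
          + 3 * ((∑ i, x i ^ 2 * y i) + (∑ i, y i ^ 2 * x i)) := by
      rw [mul_add, Finset.mul_sum, Finset.mul_sum, ← Finset.sum_add_distrib,
        ← Finset.sum_add_distrib, ← Finset.sum_add_distrib]
      apply Finset.sum_congr rfl
      intro i _
      simp only [Pi.add_apply]
      ring
    rw [h1, h2, h3] at hexp
    linear_combination (-1/3 : ℂ) * hexp
  have B1 : ∀ x ∈ W, ∀ y ∈ W, (∑ i, x i ^ 2 * y i) = 0 := by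
    intro x hx y hy
    have hab := B0 x hx y hy
    have hab' := B0 x hx (-y) (W.neg_mem hy)
    have e1 : (∑ i, x i ^ 2 * (-y) i) + (∑ i, x i ^ 2 * y i) = 0 := by
      rw [← Finset.sum_add_distrib]
      apply Finset.sum_eq_zero
      intro i _
      simp only [Pi.neg_apply]
      ring
    have e2 : (∑ i, (-y) i ^ 2 * x i) - (∑ i, y i ^ 2 * x i) = 0 := by
      rw [← Finset.sum_sub_distrib]
      apply Finset.sum_eq_zero
      intro i _
      simp only [Pi.neg_apply]
      ring
    linear_combination (1/2 : ℂ) * hab - (1/2 : ℂ) * hab' + (1/2 : ℂ) * e1 + (1/2 : ℂ) * e2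
  intro x hx y hy z hz
  have h1 := B1 (x + z) (W.add_mem hx hz) y hy
  have h2 := B1 x hx y hy
  have h3 := B1 z hz y hy
  have e : ∑ i, (x + z) i ^ 2 * y i
      = (∑ i, x i ^ 2 * y i) + (∑ i, z i ^ 2 * y i) + 2 * ∑ i, x i * y i * z i := by
    rw [Finset.mul_sum, ← Finset.sum_add_distrib, ← Finset.sum_add_distrib]
    apply Finset.sum_congr rfl
    intro i _
    simp only [Pi.add_apply]
    ring
  rw [h1, h2, h3] at e
  linear_combination (-1/2 : ℂ) * e





lemma fin3cases : ∀ r : Fin 3, r = 0 ∨ r = 1 ∨ r = 2 := by decide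

lemma sum3cover (G : Fin 3 → ℂ) (a b c : Fin 3) (hab : a ≠ b) (hac : a ≠ c) (hbc : b ≠ c) :
    ∑ p, G p = G a + G b + G c := by
  have hmem1 : a ∉ ({b, c} : Finset (Fin 3)) := by
    rw [Finset.mem_insert, Finset.mem_singleton]
    exact not_or.2 ⟨hab, hac⟩
  have hmem2 : b ∉ ({c} : Finset (Fin 3)) := by
    rw [Finset.mem_singleton]
    exact hbc
  have h : (univ : Finset (Fin 3)) = {a, b, c} := by
    symm
    apply Finset.eq_univ_of_card
    rw [Finset.card_insert_of_notMem hmem1, Finset.card_insert_of_notMem hmem2,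
      Finset.card_singleton]
    rfl
  rw [h, Finset.sum_insert hmem1, Finset.sum_insert hmem2, Finset.sum_singleton]
  ring

lemma core_classify (m : Fin 6 → Fin 3 → ℂ)
    (H : ∀ u v w : Fin 3 → ℂ, ∑ i, (m i ⬝ᵥ u) * (m i ⬝ᵥ v) * (m i ⬝ᵥ w) = 0)
    (Hspan : ∀ u : Fin 3 → ℂ, (∀ i, m i ⬝ᵥ u = 0) → u = 0) :
    ∃ f : Fin 6 → Fin 6, ∃ ω : Fin 6 → ℂ, (∀ i, f (f i) = i) ∧ (∀ i, f i ≠ i) ∧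
      (∀ i, ω i ^ 3 = -1) ∧ (∀ i, ω (f i) * ω i = 1) ∧ ∀ i, m (f i) = ω i • m i := by
  classical
  -- an index with nonzero row
  have h01 : ∃ i₁ : Fin 6, m i₁ ≠ 0 := by
    by_contra hc
    push_neg at hc
    have h0 : (Pi.single 0 1 : Fin 3 → ℂ) = 0 := by
      apply Hspan
      intro i
      rw [hc i, zero_dotProduct]
    have := congrFun h0 0
    simp at this
  obtain ⟨i₁, hmi₁⟩ := h01
  -- an index independent from i₁
  have h02 : ∃ i₂ : Fin 6, ∀ c : ℂ, m i₂ ≠ c • m i₁ := by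
    by_contra hc
    push_neg at hc
    obtain ⟨u, hu, hd1, -⟩ := exists_dot2_zero (m i₁) (m i₁)
    apply hu
    apply Hspan
    intro i
    obtain ⟨c, hci⟩ := hc i
    rw [hci, smul_dotProduct, hd1, smul_zero]
  obtain ⟨i₂, hmi₂⟩ := h02
  -- an index independent from i₁, i₂
  have h03 : ∃ i₃ : Fin 6, ∀ c d : ℂ, m i₃ ≠ c • m i₁ + d • m i₂ := by
    by_contra hc
    push_neg at hc
    obtain ⟨u, hu, hd1, hd2⟩ := exists_dot2_zero (m i₁) (m i₂)
    apply hu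
    apply Hspan
    intro i
    obtain ⟨c, d, hci⟩ := hc i
    rw [hci, add_dotProduct, smul_dotProduct, smul_dotProduct,
      hd1, hd2, smul_zero, smul_zero, add_zero]
  obtain ⟨i₃, hmi₃⟩ := h03
  -- distinctness
  have hi21 : i₂ ≠ i₁ := fun h => hmi₂ 1 (by rw [h, one_smul])
  have hi31 : i₃ ≠ i₁ := fun h => hmi₃ 1 0 (by rw [h, one_smul, zero_smul, add_zero])
  have hi32 : i₃ ≠ i₂ := fun h => hmi₃ 0 1 (by rw [h, one_smul, zero_smul, zero_add])
  -- the three rows m i₁, m i₂, m i₃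
  set μ : Fin 3 → (Fin 3 → ℂ) := ![m i₁, m i₂, m i₃] with hμ
  have hμ0 : μ 0 = m i₁ := rfl
  have hμ1 : μ 1 = m i₂ := rfl
  have hμ2 : μ 2 = m i₃ := rfl
  -- linear independence
  have hindep : ∀ g : Fin 3 → ℂ, (∀ x, g 0 * m i₁ x + g 1 * m i₂ x + g 2 * m i₃ x = 0) →
      g 0 = 0 ∧ g 1 = 0 ∧ g 2 = 0 := by
    intro g hg
    have hg2 : g 2 = 0 := by
      by_contra h2
      apply hmi₃ (-(g 0)/g 2) (-(g 1)/g 2)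
      funext x
      have hx := hg x
      simp only [Pi.add_apply, Pi.smul_apply, smul_eq_mul]
      field_simp
      linear_combination hx
    have hg1 : g 1 = 0 := by
      by_contra h1
      apply hmi₂ (-(g 0)/g 1)
      funext x
      have hx := hg x
      rw [hg2] at hx
      simp only [Pi.smul_apply, smul_eq_mul]
      field_simp
      linear_combination hx
    have hg0 : g 0 = 0 := by
      obtain ⟨x, hx⟩ := Function.ne_iff.1 hmi₁
      have h := hg x
      rw [hg1, hg2] at h
      simp only [zero_mul, add_zero] at h
      rcases mul_eq_zero.1 h with h' | h'
      · exact h'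
      · exact absurd h' hx
    exact ⟨hg0, hg1, hg2⟩
  -- complement indices
  have hcard3 : ({i₁, i₂, i₃} : Finset (Fin 6)).card = 3 := by
    rw [Finset.card_insert_of_notMem (by
        rw [Finset.mem_insert, Finset.mem_singleton]
        exact not_or.2 ⟨Ne.symm hi21, Ne.symm hi31⟩),
      Finset.card_insert_of_notMem (by
        rw [Finset.mem_singleton]
        exact Ne.symm hi32), Finset.card_singleton]
  have hcardc : ({i₁, i₂, i₃}ᶜ : Finset (Fin 6)).card = 3 := by
    rw [Finset.card_compl, hcard3]
    rfl
  obtain ⟨j₁, j₂, j₃, hj12, hj13, hj23, hjs⟩ := Finset.card_eq_three.1 hcardc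
  have hjmem : ∀ j ∈ ({j₁, j₂, j₃} : Finset (Fin 6)), j ∉ ({i₁, i₂, i₃} : Finset (Fin 6)) := by
    intro j hj
    rw [← hjs] at hj
    exact Finset.mem_compl.1 hj
  -- splitting sums over Fin 6
  have hsplit : ∀ g : Fin 6 → ℂ,
      ∑ i, g i = (g i₁ + g i₂ + g i₃) + (g j₁ + g j₂ + g j₃) := by
    intro g
    have hu : ({i₁, i₂, i₃} : Finset (Fin 6)) ∪ ({i₁, i₂, i₃} : Finset (Fin 6))ᶜ = univ :=
      Finset.union_compl _
    rw [← hu, Finset.sum_union (disjoint_compl_right), hjs]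
    congr 1
    · rw [Finset.sum_insert (by
          rw [Finset.mem_insert, Finset.mem_singleton]
          exact not_or.2 ⟨Ne.symm hi21, Ne.symm hi31⟩),
        Finset.sum_insert (by rw [Finset.mem_singleton]; exact Ne.symm hi32),
        Finset.sum_singleton, add_assoc]
    · rw [Finset.sum_insert (by
          rw [Finset.mem_insert, Finset.mem_singleton]
          exact not_or.2 ⟨hj12, hj13⟩),
        Finset.sum_insert (by rw [Finset.mem_singleton]; exact hj23),
        Finset.sum_singleton, add_assoc]
  -- H in split form
  have H6 : ∀ u v w : Fin 3 → ℂ,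
      ((m i₁ ⬝ᵥ u) * (m i₁ ⬝ᵥ v) * (m i₁ ⬝ᵥ w) + (m i₂ ⬝ᵥ u) * (m i₂ ⬝ᵥ v) * (m i₂ ⬝ᵥ w)
        + (m i₃ ⬝ᵥ u) * (m i₃ ⬝ᵥ v) * (m i₃ ⬝ᵥ w))
      + ((m j₁ ⬝ᵥ u) * (m j₁ ⬝ᵥ v) * (m j₁ ⬝ᵥ w) + (m j₂ ⬝ᵥ u) * (m j₂ ⬝ᵥ v) * (m j₂ ⬝ᵥ w)
        + (m j₃ ⬝ᵥ u) * (m j₃ ⬝ᵥ v) * (m j₃ ⬝ᵥ w)) = 0 := by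
    intro u v w
    rw [← hsplit (fun i => (m i ⬝ᵥ u) * (m i ⬝ᵥ v) * (m i ⬝ᵥ w))]
    exact H u v w
  -- the matrix with rows m i₁, m i₂, m i₃ and its inverse
  set N : Matrix (Fin 3) (Fin 3) ℂ := Matrix.of μ with hN
  have hdetN : N.det ≠ 0 := by
    intro h0
    obtain ⟨v, hv, hvN⟩ := Matrix.exists_vecMul_eq_zero_iff.2 h0
    have hcomb : ∀ x, v 0 * m i₁ x + v 1 * m i₂ x + v 2 * m i₃ x = 0 := by
      intro x
      have h1 := congrFun hvN x
      rw [Matrix.vecMul, dotProduct, Fin.sum_univ_three] at h1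
      exact h1
    obtain ⟨h0', h1', h2'⟩ := hindep v hcomb
    apply hv
    funext p
    fin_cases p <;> assumption
  have hNunit : IsUnit N.det := isUnit_iff_ne_zero.2 hdetN
  -- dual basis
  set vb : Fin 3 → (Fin 3 → ℂ) := fun s => N⁻¹.mulVec (Pi.single s 1) with hvb
  have hdual : ∀ r s : Fin 3, μ r ⬝ᵥ vb s = if r = s then 1 else 0 := by
    intro r s
    have h1 : μ r ⬝ᵥ vb s = (N.mulVec (vb s)) r := rfl
    rw [h1, hvb, Matrix.mulVec_mulVec, Matrix.mul_nonsing_inv N hNunit, Matrix.one_mulVec,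
      Pi.single_apply]
  have hvbj : ∀ r x : Fin 3, vb r x = N⁻¹ x r := by
    intro r x
    show (fun t => N⁻¹ x t) ⬝ᵥ (Pi.single r 1) = N⁻¹ x r
    rw [dotProduct_single, mul_one]
  have hdecomp : ∀ (u : Fin 3 → ℂ) (x : Fin 3), u x = ∑ r, (μ r ⬝ᵥ u) * vb r x := by
    intro u x
    have h1 : u x = (N⁻¹.mulVec (N.mulVec u)) x := by
      rw [Matrix.mulVec_mulVec, Matrix.nonsing_inv_mul N hNunit, Matrix.one_mulVec]
    rw [h1]
    show ∑ r, N⁻¹ x r * (N.mulVec u) r = _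
    apply Finset.sum_congr rfl
    intro r _
    rw [hvbj]
    have h2 : (N.mulVec u) r = μ r ⬝ᵥ u := rfl
    rw [h2]
    ring
  have hNN1 : ∀ x y : Fin 3, ∑ r, μ r x * vb r y = if y = x then 1 else 0 := by
    intro x y
    have h1 : (N⁻¹ * N) y x = (1 : Matrix (Fin 3) (Fin 3) ℂ) y x := by
      rw [Matrix.nonsing_inv_mul N hNunit]
    rw [Matrix.mul_apply, Matrix.one_apply] at h1
    rw [← h1]
    apply Finset.sum_congr rfl
    intro r _
    rw [hvbj]
    have h2 : N r x = μ r x := rfl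
    rw [h2]
    ring
  have hcodecomp : ∀ (w : Fin 3 → ℂ) (x : Fin 3), w x = ∑ r, (w ⬝ᵥ vb r) * μ r x := by
    intro w x
    have hswap : ∑ r, (w ⬝ᵥ vb r) * μ r x = ∑ y, w y * (∑ r, μ r x * vb r y) := by
      calc ∑ r, (w ⬝ᵥ vb r) * μ r x
          = ∑ r, ∑ y, (w y * vb r y * μ r x) := by
            apply Finset.sum_congr rfl
            intro r _
            rw [dotProduct, Finset.sum_mul]
        _ = ∑ y, ∑ r, (w y * vb r y * μ r x) := Finset.sum_comm
        _ = ∑ y, w y * (∑ r, μ r x * vb r y) := by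
            apply Finset.sum_congr rfl
            intro y _
            rw [Finset.mul_sum]
            apply Finset.sum_congr rfl
            intro r _
            ring
    rw [hswap]
    have h3 : ∀ y, w y * (∑ r, μ r x * vb r y) = if y = x then w y else 0 := by
      intro y
      rw [hNN1 x y]
      by_cases h : y = x
      · simp [h]
      · simp [h]
    rw [Finset.sum_congr rfl (fun y _ => h3 y), Finset.sum_ite_eq' univ x]
    simp
  -- the complementary rows
  set ν : Fin 3 → (Fin 3 → ℂ) := ![m j₁, m j₂, m j₃] with hν
  have hν0 : ν 0 = m j₁ := rfl
  have hν1 : ν 1 = m j₂ := rfl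
  have hν2 : ν 2 = m j₃ := rfl
  set Pm : Matrix (Fin 3) (Fin 3) ℂ := Matrix.of ν with hPm
  have H6' : ∀ u v w : Fin 3 → ℂ,
      (∑ k, (μ k ⬝ᵥ u) * (μ k ⬝ᵥ v) * (μ k ⬝ᵥ w))
        + (∑ l, (ν l ⬝ᵥ u) * (ν l ⬝ᵥ v) * (ν l ⬝ᵥ w)) = 0 := by
    intro u v w
    rw [Fin.sum_univ_three, Fin.sum_univ_three]
    exact H6 u v w
  -- matrix identity
  have hmatid : ∀ u : Fin 3 → ℂ,
      (N.transpose * (Matrix.diagonal (fun k => μ k ⬝ᵥ u) * N))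
        = - (Pm.transpose * (Matrix.diagonal (fun l => ν l ⬝ᵥ u) * Pm)) := by
    intro u
    ext a b
    have h6 := H6' u (Pi.single a 1) (Pi.single b 1)
    simp only [dotProduct_single, mul_one, Fin.sum_univ_three] at h6
    simp only [Matrix.neg_apply, Matrix.mul_apply, Matrix.transpose_apply, Matrix.diagonal_apply, Fin.reduceEq, reduceIte, mul_zero, zero_mul, mul_one, add_zero, zero_add,
      Fin.sum_univ_three, hN, hPm, Matrix.of_apply]
    linear_combination h6
  have hdetid : ∀ u : Fin 3 → ℂ,
      N.det ^ 2 * ((μ 0 ⬝ᵥ u) * (μ 1 ⬝ᵥ u) * (μ 2 ⬝ᵥ u))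
        = - (Pm.det ^ 2 * ((ν 0 ⬝ᵥ u) * (ν 1 ⬝ᵥ u) * (ν 2 ⬝ᵥ u))) := by
    intro u
    have h1 := congrArg Matrix.det (hmatid u)
    rw [Matrix.det_mul, Matrix.det_mul, Matrix.det_transpose, Matrix.det_diagonal,
      Fin.prod_univ_three, Matrix.det_neg, Matrix.det_mul, Matrix.det_mul,
      Matrix.det_transpose, Matrix.det_diagonal, Fin.prod_univ_three,
      Fintype.card_fin] at h1
    linear_combination h1
  -- Case B : the second triple is linearly dependent; contradiction
  by_cases hdetP : Pm.det = 0
  · exfalso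
    obtain ⟨v, hv, hvP⟩ := Matrix.exists_mulVec_eq_zero_iff.2 hdetP
    have hνv : ∀ l, ν l ⬝ᵥ v = 0 := fun l => congrFun hvP l
    have hμv : ∀ r, μ r ⬝ᵥ v = 0 := by
      intro r
      have h6 := H6' v (vb r) (vb r)
      have hz : ∀ l : Fin 3, (ν l ⬝ᵥ v) * (ν l ⬝ᵥ vb r) * (ν l ⬝ᵥ vb r) = 0 := by
        intro l
        rw [hνv l, zero_mul, zero_mul]
      rw [Finset.sum_congr rfl (fun l _ => hz l), Finset.sum_const_zero, add_zero] at h6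
      have hone : ∀ k : Fin 3, (μ k ⬝ᵥ v) * (μ k ⬝ᵥ vb r) * (μ k ⬝ᵥ vb r)
          = if k = r then (μ k ⬝ᵥ v) else 0 := by
        intro k
        rw [hdual k r]
        by_cases h : k = r
        · simp [h]
        · simp [h]
      rw [Finset.sum_congr rfl (fun k _ => hone k), Finset.sum_ite_eq' univ r] at h6
      simpa using h6
    apply hv
    apply Hspan
    intro i
    have hiu : i ∈ ({i₁, i₂, i₃} : Finset (Fin 6)) ∪ ({j₁, j₂, j₃} : Finset (Fin 6)) := by
      have hu2 := Finset.union_compl ({i₁, i₂, i₃} : Finset (Fin 6))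
      rw [hjs] at hu2
      rw [hu2]
      exact mem_univ i
    rw [Finset.mem_union, Finset.mem_insert, Finset.mem_insert, Finset.mem_singleton,
      Finset.mem_insert, Finset.mem_insert, Finset.mem_singleton] at hiu
    rcases hiu with (rfl | rfl | rfl) | (rfl | rfl | rfl)
    · exact hμv 0
    · exact hμv 1
    · exact hμv 2
    · exact hνv 0
    · exact hνv 1
    · exact hνv 2
  -- Case A : the second triple is independent
  have hpick : ∀ k a b : Fin 3, k ≠ a → k ≠ b → a ≠ b →
      ∃ l γ, γ ≠ 0 ∧ ∀ x, ν l x = γ * μ k x := by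
    intro k a b hka hkb hab
    have hzero : ∀ s t : ℂ, ∏ l, (s * (ν l ⬝ᵥ vb a) + t * (ν l ⬝ᵥ vb b)) = 0 := by
      intro s t
      have hu := hdetid (s • vb a + t • vb b)
      have hμk : μ k ⬝ᵥ (s • vb a + t • vb b) = 0 := by
        rw [dotProduct_add, dotProduct_smul, dotProduct_smul,
          hdual k a, hdual k b, if_neg hka, if_neg hkb]
        simp
      have hP : ∏ r : Fin 3, (μ r ⬝ᵥ (s • vb a + t • vb b)) = 0 :=
        Finset.prod_eq_zero (mem_univ k) hμk
      rw [Fin.prod_univ_three] at hP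
      rw [hP, mul_zero] at hu
      have h3 := hu.symm
      rw [neg_eq_zero] at h3
      have hprod := (mul_eq_zero.1 h3).resolve_left (pow_ne_zero 2 hdetP)
      have hconv : ∀ l : Fin 3, ν l ⬝ᵥ (s • vb a + t • vb b)
          = s * (ν l ⬝ᵥ vb a) + t * (ν l ⬝ᵥ vb b) := by
        intro l
        rw [dotProduct_add, dotProduct_smul, dotProduct_smul,
          smul_eq_mul, smul_eq_mul]
      rw [hconv 0, hconv 1, hconv 2] at hprod
      rw [Fin.prod_univ_three]
      exact hprod
    obtain ⟨l, hA, hB⟩ := prod3_zero _ _ hzero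
    have hA' : ν l ⬝ᵥ vb a = 0 := hA
    have hB' : ν l ⬝ᵥ vb b = 0 := hB
    have hform : ∀ x, ν l x = (ν l ⬝ᵥ vb k) * μ k x := by
      intro x
      have hs := sum3cover (fun r => (ν l ⬝ᵥ vb r) * μ r x) k a b hka hkb hab
      rw [← hcodecomp (ν l) x] at hs
      rw [hs, hA', hB', zero_mul, zero_mul, add_zero, add_zero]
    refine ⟨l, ν l ⬝ᵥ vb k, ?_, hform⟩
    intro h0
    apply hdetP
    apply Matrix.det_eq_zero_of_row_eq_zero l
    intro x
    show ν l x = 0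
    rw [hform x, h0, zero_mul]
  obtain ⟨l₀, γ₀, hγ₀, hf₀⟩ := hpick 0 1 2 (by decide) (by decide) (by decide)
  obtain ⟨l₁, γ₁, hγ₁, hf₁⟩ := hpick 1 0 2 (by decide) (by decide) (by decide)
  obtain ⟨l₂, γ₂, hγ₂, hf₂⟩ := hpick 2 0 1 (by decide) (by decide) (by decide)
  -- the pairing indices are distinct
  have hthird : ∀ r r' : Fin 3, r ≠ r' → ∃ t : Fin 3, t ≠ r ∧ t ≠ r' := by decide
  have hldist : ∀ (r r' : Fin 3) (γ γ' : ℂ) (l : Fin 3), r ≠ r' → γ ≠ 0 →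
      (∀ x, ν l x = γ * μ r x) → (∀ x, ν l x = γ' * μ r' x) → False := by
    intro r r' γ γ' l hrr hγ h1 h2
    obtain ⟨t, htr, htr'⟩ := hthird r r' hrr
    set g : Fin 3 → ℂ := fun p => if p = r then γ else if p = r' then -γ' else 0 with hg
    have hyp : ∀ x, g 0 * μ 0 x + g 1 * μ 1 x + g 2 * μ 2 x = 0 := by
      intro x
      have hs1 : ∑ p, g p * μ p x = g 0 * μ 0 x + g 1 * μ 1 x + g 2 * μ 2 x :=
        Fin.sum_univ_three _
      have hs2 : ∑ p, g p * μ p x = g r * μ r x + g r' * μ r' x + g t * μ t x :=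
        sum3cover _ r r' t hrr (Ne.symm htr) (Ne.symm htr')
      have hgr : g r = γ := by rw [hg]; simp
      have hgr' : g r' = -γ' := by
        rw [hg]
        simp [Ne.symm hrr]
      have hgt : g t = 0 := by
        rw [hg]
        simp only [if_neg htr, if_neg htr']
      rw [← hs1, hs2, hgr, hgr', hgt, zero_mul, add_zero]
      have := h1 x
      rw [h2 x] at this
      linear_combination -this
    obtain ⟨hg0, hg1, hg2⟩ := hindep g hyp
    have hgr : g r = γ := by rw [hg]; simp
    have : g r = 0 := by
      rcases fin3cases r with h | h | h <;> rw [h] <;> assumption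
    exact hγ (by rw [← hgr, this])
  have hl01 : l₀ ≠ l₁ := fun h => hldist 0 1 γ₀ γ₁ l₁ (by decide) hγ₀ (h ▸ hf₀) hf₁
  have hl02 : l₀ ≠ l₂ := fun h => hldist 0 2 γ₀ γ₂ l₂ (by decide) hγ₀ (h ▸ hf₀) hf₂
  have hl12 : l₁ ≠ l₂ := fun h => hldist 1 2 γ₁ γ₂ l₂ (by decide) hγ₁ (h ▸ hf₁) hf₂
  have hcov : ∀ x : Fin 3, x = l₀ ∨ x = l₁ ∨ x = l₂ := by
    have hd : ∀ a b c d : Fin 3, a ≠ b → a ≠ c → b ≠ c → (d = a ∨ d = b ∨ d = c) := by decide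
    exact fun x => hd l₀ l₁ l₂ x hl01 hl02 hl12
  -- cube roots
  have hcube : ∀ (r : Fin 3) (lr : Fin 3) (γr : ℂ), (∀ x, ν lr x = γr * μ r x) → γr ^ 3 = -1 := by
    intro r lr γr hfr
    have h6 := H6' (vb r) (vb r) (vb r)
    have hsν := sum3cover (fun l => (ν l ⬝ᵥ vb r) * (ν l ⬝ᵥ vb r) * (ν l ⬝ᵥ vb r)) l₀ l₁ l₂
      hl01 hl02 hl12
    rw [hsν] at h6
    have hsμ : ∑ k : Fin 3, (μ k ⬝ᵥ vb r) * (μ k ⬝ᵥ vb r) * (μ k ⬝ᵥ vb r) = 1 := by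
      have hone : ∀ k : Fin 3, (μ k ⬝ᵥ vb r) * (μ k ⬝ᵥ vb r) * (μ k ⬝ᵥ vb r)
          = if k = r then 1 else 0 := by
        intro k
        rw [hdual k r]
        by_cases h : k = r
        · simp [h]
        · simp [h]
      rw [Finset.sum_congr rfl (fun k _ => hone k), Finset.sum_ite_eq' univ r]
      simp
    rw [hsμ] at h6
    -- values of the ν-dots against vb r
    have hd0 : ν l₀ ⬝ᵥ vb r = γ₀ * (if (0 : Fin 3) = r then 1 else 0) := by
      rw [dot_scale hf₀, hdual 0 r]
    have hd1 : ν l₁ ⬝ᵥ vb r = γ₁ * (if (1 : Fin 3) = r then 1 else 0) := by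
      rw [dot_scale hf₁, hdual 1 r]
    have hd2 : ν l₂ ⬝ᵥ vb r = γ₂ * (if (2 : Fin 3) = r then 1 else 0) := by
      rw [dot_scale hf₂, hdual 2 r]
    -- identify γr with the γ of this r
    have hdr : ν lr ⬝ᵥ vb r = γr := by
      rw [dot_scale hfr, hdual r r, if_pos rfl, mul_one]
    rcases fin3cases r with hr | hr | hr
    · subst hr
      have hll : lr = l₀ := by
        rcases hcov lr with h | h | h
        · exact h
        · refine ((hldist 1 0 γ₁ γr lr (by decide) hγ₁ ?_ hfr)).elim
          rw [h]; exact hf₁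
        · refine ((hldist 2 0 γ₂ γr lr (by decide) hγ₂ ?_ hfr)).elim
          rw [h]; exact hf₂
      have hγe : γr = γ₀ := by rw [← hdr, hll, hd0]; norm_num
      rw [hd0, hd1, hd2] at h6
      simp only [Fin.reduceEq, reduceIte, mul_zero, zero_mul, mul_one, one_mul, add_zero, zero_add] at h6
      rw [hγe]
      linear_combination h6
    · subst hr
      have hll : lr = l₁ := by
        rcases hcov lr with h | h | h
        · refine ((hldist 0 1 γ₀ γr lr (by decide) hγ₀ ?_ hfr)).elim
          rw [h]; exact hf₀
        · exact h
        · refine ((hldist 2 1 γ₂ γr lr (by decide) hγ₂ ?_ hfr)).elim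
          rw [h]; exact hf₂
      have hγe : γr = γ₁ := by rw [← hdr, hll, hd1]; norm_num
      rw [hd0, hd1, hd2] at h6
      simp only [Fin.reduceEq, reduceIte, mul_zero, zero_mul, mul_one, one_mul, add_zero, zero_add] at h6
      rw [hγe]
      linear_combination h6
    · subst hr
      have hll : lr = l₂ := by
        rcases hcov lr with h | h | h
        · refine ((hldist 0 2 γ₀ γr lr (by decide) hγ₀ ?_ hfr)).elim
          rw [h]; exact hf₀
        · refine ((hldist 1 2 γ₁ γr lr (by decide) hγ₁ ?_ hfr)).elim
          rw [h]; exact hf₁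
        · exact h
      have hγe : γr = γ₂ := by rw [← hdr, hll, hd2]; norm_num
      rw [hd0, hd1, hd2] at h6
      simp only [Fin.reduceEq, reduceIte, mul_zero, zero_mul, mul_one, one_mul, add_zero, zero_add] at h6
      rw [hγe]
      linear_combination h6
  -- name the cube root identities
  have hcube0 : γ₀ ^ 3 = -1 := hcube 0 l₀ γ₀ hf₀
  have hcube1 : γ₁ ^ 3 = -1 := hcube 1 l₁ γ₁ hf₁
  have hcube2 : γ₂ ^ 3 = -1 := hcube 2 l₂ γ₂ hf₂
  -- translate ν identities into m-form
  set jv : Fin 3 → Fin 6 := ![j₁, j₂, j₃] with hjv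
  have hνjv : ∀ l : Fin 3, ν l = m (jv l) := by
    intro l
    rcases fin3cases l with rfl | rfl | rfl <;> rfl
  set b0 : Fin 6 := jv l₀ with hb0
  set b1 : Fin 6 := jv l₁ with hb1
  set b2 : Fin 6 := jv l₂ with hb2
  have hjvne : ∀ l l' : Fin 3, l ≠ l' → jv l ≠ jv l' := by
    intro l l' hll
    rcases fin3cases l with rfl | rfl | rfl <;> rcases fin3cases l' with rfl | rfl | rfl <;>
      first
        | exact absurd rfl hll
        | exact hj12
        | exact hj13
        | exact hj23
        | exact Ne.symm hj12
        | exact Ne.symm hj13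
        | exact Ne.symm hj23
  have hb01 : b0 ≠ b1 := hjvne _ _ hl01
  have hb02 : b0 ≠ b2 := hjvne _ _ hl02
  have hb12 : b1 ≠ b2 := hjvne _ _ hl12
  have hjvmem : ∀ l : Fin 3, jv l ∉ ({i₁, i₂, i₃} : Finset (Fin 6)) := by
    intro l
    apply hjmem
    rcases fin3cases l with rfl | rfl | rfl <;> simp [hjv]
  have hib : ∀ (a : Fin 6) (l : Fin 3), a ∈ ({i₁, i₂, i₃} : Finset (Fin 6)) → a ≠ jv l := by
    intro a l ha h
    exact hjvmem l (h ▸ ha)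
  have hi₁mem : i₁ ∈ ({i₁, i₂, i₃} : Finset (Fin 6)) := by simp
  have hi₂mem : i₂ ∈ ({i₁, i₂, i₃} : Finset (Fin 6)) := by simp
  have hi₃mem : i₃ ∈ ({i₁, i₂, i₃} : Finset (Fin 6)) := by simp
  have hi1b0 : i₁ ≠ b0 := hib _ _ hi₁mem
  have hi1b1 : i₁ ≠ b1 := hib _ _ hi₁mem
  have hi1b2 : i₁ ≠ b2 := hib _ _ hi₁mem
  have hi2b0 : i₂ ≠ b0 := hib _ _ hi₂mem
  have hi2b1 : i₂ ≠ b1 := hib _ _ hi₂mem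
  have hi2b2 : i₂ ≠ b2 := hib _ _ hi₂mem
  have hi3b0 : i₃ ≠ b0 := hib _ _ hi₃mem
  have hi3b1 : i₃ ≠ b1 := hib _ _ hi₃mem
  have hi3b2 : i₃ ≠ b2 := hib _ _ hi₃mem
  have hjcov : ∀ t : Fin 3, jv t = b0 ∨ jv t = b1 ∨ jv t = b2 := by
    intro t
    rcases hcov t with h | h | h
    · left; rw [h]
    · right; left; rw [h]
    · right; right; rw [h]
  have hcov6 : ∀ x : Fin 6, x = i₁ ∨ x = i₂ ∨ x = i₃ ∨ x = b0 ∨ x = b1 ∨ x = b2 := by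
    intro x
    have hiu : x ∈ ({i₁, i₂, i₃} : Finset (Fin 6)) ∪ ({j₁, j₂, j₃} : Finset (Fin 6)) := by
      have hu2 := Finset.union_compl ({i₁, i₂, i₃} : Finset (Fin 6))
      rw [hjs] at hu2
      rw [hu2]
      exact mem_univ x
    rw [Finset.mem_union, Finset.mem_insert, Finset.mem_insert, Finset.mem_singleton,
      Finset.mem_insert, Finset.mem_insert, Finset.mem_singleton] at hiu
    have hj1 : jv 0 = j₁ := rfl
    have hj2 : jv 1 = j₂ := rfl
    have hj3 : jv 2 = j₃ := rfl
    rcases hiu with (h | h | h) | (h | h | h)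
    · exact Or.inl h
    · exact Or.inr (Or.inl h)
    · exact Or.inr (Or.inr (Or.inl h))
    · rcases hjcov 0 with hh | hh | hh
      · exact Or.inr (Or.inr (Or.inr (Or.inl (by rw [h, ← hj1, hh]))))
      · exact Or.inr (Or.inr (Or.inr (Or.inr (Or.inl (by rw [h, ← hj1, hh])))))
      · exact Or.inr (Or.inr (Or.inr (Or.inr (Or.inr (by rw [h, ← hj1, hh])))))
    · rcases hjcov 1 with hh | hh | hh
      · exact Or.inr (Or.inr (Or.inr (Or.inl (by rw [h, ← hj2, hh]))))
      · exact Or.inr (Or.inr (Or.inr (Or.inr (Or.inl (by rw [h, ← hj2, hh])))))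
      · exact Or.inr (Or.inr (Or.inr (Or.inr (Or.inr (by rw [h, ← hj2, hh])))))
    · rcases hjcov 2 with hh | hh | hh
      · exact Or.inr (Or.inr (Or.inr (Or.inl (by rw [h, ← hj3, hh]))))
      · exact Or.inr (Or.inr (Or.inr (Or.inr (Or.inl (by rw [h, ← hj3, hh])))))
      · exact Or.inr (Or.inr (Or.inr (Or.inr (Or.inr (by rw [h, ← hj3, hh])))))
  -- m-form of the pairing identities
  have hm0 : ∀ x, m b0 x = γ₀ * m i₁ x := by
    intro x
    have h := hf₀ x
    rw [hνjv l₀, ← hb0, hμ0] at h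
    exact h
  have hm1 : ∀ x, m b1 x = γ₁ * m i₂ x := by
    intro x
    have h := hf₁ x
    rw [hνjv l₁, ← hb1, hμ1] at h
    exact h
  have hm2 : ∀ x, m b2 x = γ₂ * m i₃ x := by
    intro x
    have h := hf₂ x
    rw [hνjv l₂, ← hb2, hμ2] at h
    exact h
  -- define the involution and the ratios
  set fdef : Fin 6 → Fin 6 := fun x =>
    if x = i₁ then b0 else if x = i₂ then b1 else if x = i₃ then b2
    else if x = b0 then i₁ else if x = b1 then i₂ else i₃ with hfdef
  set wdef : Fin 6 → ℂ := fun x =>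
    if x = i₁ then γ₀ else if x = i₂ then γ₁ else if x = i₃ then γ₂
    else if x = b0 then γ₀⁻¹ else if x = b1 then γ₁⁻¹ else γ₂⁻¹ with hwdef
  have hfe1 : fdef i₁ = b0 := by rw [hfdef]; beta_reduce; rw [if_pos rfl]
  have hfe2 : fdef i₂ = b1 := by rw [hfdef]; beta_reduce; rw [if_neg hi21, if_pos rfl]
  have hfe3 : fdef i₃ = b2 := by rw [hfdef]; beta_reduce; rw [if_neg hi31, if_neg hi32, if_pos rfl]
  have hfeb1 : fdef b0 = i₁ := by
    rw [hfdef]; beta_reduce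
    rw [if_neg (Ne.symm hi1b0), if_neg (Ne.symm hi2b0), if_neg (Ne.symm hi3b0), if_pos rfl]
  have hfeb2 : fdef b1 = i₂ := by
    rw [hfdef]; beta_reduce
    rw [if_neg (Ne.symm hi1b1), if_neg (Ne.symm hi2b1), if_neg (Ne.symm hi3b1),
      if_neg (Ne.symm hb01), if_pos rfl]
  have hfeb3 : fdef b2 = i₃ := by
    rw [hfdef]; beta_reduce
    rw [if_neg (Ne.symm hi1b2), if_neg (Ne.symm hi2b2), if_neg (Ne.symm hi3b2),
      if_neg (Ne.symm hb02), if_neg (Ne.symm hb12)]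
  have hwe1 : wdef i₁ = γ₀ := by rw [hwdef]; beta_reduce; rw [if_pos rfl]
  have hwe2 : wdef i₂ = γ₁ := by rw [hwdef]; beta_reduce; rw [if_neg hi21, if_pos rfl]
  have hwe3 : wdef i₃ = γ₂ := by rw [hwdef]; beta_reduce; rw [if_neg hi31, if_neg hi32, if_pos rfl]
  have hweb1 : wdef b0 = γ₀⁻¹ := by
    rw [hwdef]; beta_reduce
    rw [if_neg (Ne.symm hi1b0), if_neg (Ne.symm hi2b0), if_neg (Ne.symm hi3b0), if_pos rfl]
  have hweb2 : wdef b1 = γ₁⁻¹ := by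
    rw [hwdef]; beta_reduce
    rw [if_neg (Ne.symm hi1b1), if_neg (Ne.symm hi2b1), if_neg (Ne.symm hi3b1),
      if_neg (Ne.symm hb01), if_pos rfl]
  have hweb3 : wdef b2 = γ₂⁻¹ := by
    rw [hwdef]; beta_reduce
    rw [if_neg (Ne.symm hi1b2), if_neg (Ne.symm hi2b2), if_neg (Ne.symm hi3b2),
      if_neg (Ne.symm hb02), if_neg (Ne.symm hb12)]
  refine ⟨fdef, wdef, ?_, ?_, ?_, ?_, ?_⟩
  · intro x
    rcases hcov6 x with rfl | rfl | rfl | rfl | rfl | rfl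
    · rw [hfe1, hfeb1]
    · rw [hfe2, hfeb2]
    · rw [hfe3, hfeb3]
    · rw [hfeb1, hfe1]
    · rw [hfeb2, hfe2]
    · rw [hfeb3, hfe3]
  · intro x
    rcases hcov6 x with rfl | rfl | rfl | rfl | rfl | rfl
    · rw [hfe1]; exact Ne.symm hi1b0
    · rw [hfe2]; exact Ne.symm hi2b1
    · rw [hfe3]; exact Ne.symm hi3b2
    · rw [hfeb1]; exact hi1b0
    · rw [hfeb2]; exact hi2b1
    · rw [hfeb3]; exact hi3b2
  · intro x
    rcases hcov6 x with rfl | rfl | rfl | rfl | rfl | rfl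
    · rw [hwe1]; exact hcube0
    · rw [hwe2]; exact hcube1
    · rw [hwe3]; exact hcube2
    · rw [hweb1, inv_pow, hcube0]; norm_num
    · rw [hweb2, inv_pow, hcube1]; norm_num
    · rw [hweb3, inv_pow, hcube2]; norm_num
  · intro x
    rcases hcov6 x with rfl | rfl | rfl | rfl | rfl | rfl
    · rw [hfe1, hweb1, hwe1]; exact inv_mul_cancel₀ hγ₀
    · rw [hfe2, hweb2, hwe2]; exact inv_mul_cancel₀ hγ₁
    · rw [hfe3, hweb3, hwe3]; exact inv_mul_cancel₀ hγ₂
    · rw [hfeb1, hwe1, hweb1]; exact mul_inv_cancel₀ hγ₀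
    · rw [hfeb2, hwe2, hweb2]; exact mul_inv_cancel₀ hγ₁
    · rw [hfeb3, hwe3, hweb3]; exact mul_inv_cancel₀ hγ₂
  · intro x
    rcases hcov6 x with rfl | rfl | rfl | rfl | rfl | rfl
    · rw [hfe1, hwe1]
      funext y
      rw [Pi.smul_apply, smul_eq_mul]
      exact hm0 y
    · rw [hfe2, hwe2]
      funext y
      rw [Pi.smul_apply, smul_eq_mul]
      exact hm1 y
    · rw [hfe3, hwe3]
      funext y
      rw [Pi.smul_apply, smul_eq_mul]
      exact hm2 y
    · rw [hfeb1, hweb1]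
      funext y
      rw [Pi.smul_apply, smul_eq_mul, hm0 y, ← mul_assoc, inv_mul_cancel₀ hγ₀, one_mul]
    · rw [hfeb2, hweb2]
      funext y
      rw [Pi.smul_apply, smul_eq_mul, hm1 y, ← mul_assoc, inv_mul_cancel₀ hγ₁, one_mul]
    · rw [hfeb3, hweb3]
      funext y
      rw [Pi.smul_apply, smul_eq_mul, hm2 y, ← mul_assoc, inv_mul_cancel₀ hγ₂, one_mul]







/-- The data parametrizing a plane in the Fermat cubic fourfold. -/
def Dset : Set ((Fin 6 → Fin 6) × (Fin 6 → ℂ)) :=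
  {p | (∀ i, p.1 (p.1 i) = i) ∧ (∀ i, p.1 i ≠ i) ∧
       (∀ i, p.2 i ^ 3 = -1) ∧ (∀ i, p.2 (p.1 i) * p.2 i = 1)}

/-- Finite encoding of the data. -/
def Cdat : Type :=
  {q : Equiv.Perm (Fin 6) × (Fin 6 → ZMod 3) //
    (∀ i, q.1 (q.1 i) = i) ∧ (∀ i, q.1 i ≠ i) ∧ (∀ i, q.2 (q.1 i) = -q.2 i)}

instance : Fintype Cdat := by unfold Cdat; infer_instance

noncomputable def dsetEquiv : Dset ≃ Cdat where
  toFun p :=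
    ⟨(⟨p.1.1, p.1.1, fun i => p.2.1 i, fun i => p.2.1 i⟩, fun i => dlog (p.1.2 i)),
      by
        obtain ⟨⟨f, ω⟩, h1, h2, h3, h4⟩ := p
        replace h1 : ∀ i, f (f i) = i := h1
        replace h3 : ∀ i, ω i ^ 3 = -1 := h3
        replace h4 : ∀ i, ω (f i) * ω i = 1 := h4
        refine ⟨h1, h2, fun i => ?_⟩
        show dlog (ω (f i)) = - dlog (ω i)
        have hi : ω (f i) = (ω i)⁻¹ := eq_inv_of_mul_eq_one_left (h4 i)
        rw [hi, dlog_inv (h3 i)]⟩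
  invFun q :=
    ⟨(⇑q.1.1, fun i => rho (q.1.2 i)),
      by
        obtain ⟨⟨F, g⟩, h1, h2, h3⟩ := q
        replace h3 : ∀ i, g (F i) = -g i := h3
        refine ⟨h1, h2, fun i => rho_cube _, fun i => ?_⟩
        show rho (g (F i)) * rho (g i) = 1
        rw [h3 i, rho_neg_mul]⟩
  left_inv p := by
    obtain ⟨⟨f, ω⟩, h1, h2, h3, h4⟩ := p
    replace h3 : ∀ i, ω i ^ 3 = -1 := h3
    apply Subtype.ext
    apply Prod.ext
    · rfl
    · funext i
      exact rho_dlog (h3 i)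
  right_inv q := by
    obtain ⟨⟨F, g⟩, h1, h2, h3⟩ := q
    apply Subtype.ext
    apply Prod.ext
    · apply Equiv.ext
      intro x
      rfl
    · funext i
      exact dlog_rho (g i)

/-- number of fixed-point-free involutions of a 6-element set -/
lemma card_fpf_invol :
    (univ.filter fun F : Equiv.Perm (Fin 6) => (∀ i, F (F i) = i) ∧ ∀ i, F i ≠ i).card = 15 := by
  decide

lemma card_fiber (F : Equiv.Perm (Fin 6)) (h1 : ∀ i, F (F i) = i) (h2 : ∀ i, F i ≠ i) :
    (univ.filter fun g : Fin 6 → ZMod 3 => ∀ i, g (F i) = -g i).card = 27 := by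
  classical
  rw [← Fintype.card_subtype]
  let T := {i : Fin 6 // i < F i}
  have e : {g : Fin 6 → ZMod 3 // ∀ i, g (F i) = -g i} ≃ (T → ZMod 3) :=
    { toFun := fun g t => g.1 t.1
      invFun := fun u => by
        refine ⟨fun i => if i < F i then (if h : i < F i then u ⟨i, h⟩ else 0)
                  else -(if h : F i < F (F i) then u ⟨F i, h⟩ else 0), fun i => ?_⟩
        set u' : Fin 6 → ZMod 3 := fun j => if h : j < F j then u ⟨j, h⟩ else 0 with hu'
        show (if F i < F (F i) then u' (F i) else -u' (F (F i)))
            = -(if i < F i then u' i else -u' (F i))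
        rcases (h2 i).lt_or_gt with hi | hi
        · have hni : ¬ i < F i := lt_asymm hi
          have hFi : F i < F (F i) := by rw [h1]; exact hi
          rw [if_pos hFi, if_neg hni, neg_neg]
        · have hn : ¬ F i < F (F i) := by rw [h1]; exact lt_asymm hi
          rw [if_neg hn, if_pos hi, h1]
      left_inv := by
        intro g
        apply Subtype.ext
        funext i
        show (if i < F i then _ else _) = g.1 i
        rcases (h2 i).lt_or_gt with hi | hi
        · have hni : ¬ i < F i := lt_asymm hi
          have hFi : F i < F (F i) := by rw [h1]; exact hi
          rw [if_neg hni, dif_pos hFi]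
          show -g.1 (F i) = g.1 i
          rw [g.2 i, neg_neg]
        · rw [if_pos hi, dif_pos hi]
      right_inv := by
        intro u
        funext t
        show (if t.1 < F t.1 then _ else _) = u t
        rw [if_pos t.2, dif_pos t.2]
    }
  rw [Fintype.card_congr e, Fintype.card_fun, Fintype.card_subtype,
    card_transversal F h1 h2, ZMod.card]
  norm_num

set_option maxRecDepth 8000 in
lemma card_Cdat : Fintype.card Cdat = 405 := by
  classical
  rw [show Fintype.card Cdat = (univ.filter fun q : Equiv.Perm (Fin 6) × (Fin 6 → ZMod 3) =>
      (∀ i, q.1 (q.1 i) = i) ∧ (∀ i, q.1 i ≠ i) ∧ (∀ i, q.2 (q.1 i) = -q.2 i)).card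
    from Fintype.card_subtype _]
  rw [Finset.card_eq_sum_card_fiberwise
    (f := Prod.fst)
    (t := univ.filter fun F : Equiv.Perm (Fin 6) => (∀ i, F (F i) = i) ∧ ∀ i, F i ≠ i)
    (by
      intro q hq
      rw [Finset.mem_coe, mem_filter] at hq; rw [Finset.mem_coe, mem_filter]
      exact ⟨mem_univ _, hq.2.1, hq.2.2.1⟩)]
  rw [Finset.sum_congr rfl (g := fun _ => 27) (fun F hF => by
    rw [mem_filter] at hF
    obtain ⟨-, hF1, hF2⟩ := hF
    rw [← card_fiber F hF1 hF2]
    apply Finset.card_bij (fun q _ => q.2)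
    · intro q hq
      rw [mem_filter] at hq
      obtain ⟨hq1, hq4⟩ := hq
      rw [mem_filter] at hq1
      obtain ⟨-, -, -, hq3⟩ := hq1
      rw [mem_filter]
      refine ⟨mem_univ _, fun i => ?_⟩
      rw [← hq4]
      exact hq3 i
    · intro a ha b hb hab
      rw [mem_filter] at ha hb
      apply Prod.ext
      · rw [ha.2, hb.2]
      · exact hab
    · intro g hg
      rw [mem_filter] at hg
      refine ⟨(F, g), ?_, rfl⟩
      rw [mem_filter, mem_filter]
      exact ⟨⟨mem_univ _, hF1, hF2, hg.2⟩, rfl⟩)]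
  rw [Finset.sum_const, card_fpf_invol]
  rfl









lemma mem_S_imp (W : Submodule ℂ (Fin 6 → ℂ)) (h3 : Module.finrank ℂ W = 3)
    (hcubic : ∀ z ∈ W, ∑ i, z i ^ 3 = 0) :
    ∃ p ∈ Dset, plane p.1 p.2 = W := by
  classical
  have : FiniteDimensional ℂ W := FiniteDimensional.of_finrank_pos (by rw [h3]; norm_num)
  let b : Module.Basis (Fin 3) ℂ W := Module.finBasisOfFinrankEq ℂ W h3
  set mm : Fin 6 → Fin 3 → ℂ := fun i k => ((b k : W) : Fin 6 → ℂ) i with hmm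
  have hLdot : ∀ (u : Fin 3 → ℂ) (i : Fin 6),
      ((∑ k, u k • ((b k : W) : Fin 6 → ℂ)) i) = mm i ⬝ᵥ u := by
    intro u i
    rw [Finset.sum_apply]
    rw [dotProduct]
    apply Finset.sum_congr rfl
    intro k _
    rw [Pi.smul_apply, smul_eq_mul, hmm]
    ring
  have hLmem : ∀ u : Fin 3 → ℂ, (∑ k, u k • ((b k : W) : Fin 6 → ℂ)) ∈ W := by
    intro u
    apply Submodule.sum_mem
    intro k _
    exact Submodule.smul_mem _ _ (b k).2
  have htri := trilinear_vanish W hcubic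
  have H : ∀ u v w : Fin 3 → ℂ, ∑ i, (mm i ⬝ᵥ u) * (mm i ⬝ᵥ v) * (mm i ⬝ᵥ w) = 0 := by
    intro u v w
    have h := htri _ (hLmem u) _ (hLmem v) _ (hLmem w)
    rw [← h]
    apply Finset.sum_congr rfl
    intro i _
    rw [hLdot u i, hLdot v i, hLdot w i]
  have Hspan : ∀ u : Fin 3 → ℂ, (∀ i, mm i ⬝ᵥ u = 0) → u = 0 := by
    intro u hu
    have hz : (∑ k, u k • (b k)) = (0 : W) := by
      apply Subtype.ext
      have hcoe : ((∑ k, u k • (b k) : W) : Fin 6 → ℂ) = ∑ k, u k • ((b k : W) : Fin 6 → ℂ) := by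
        push_cast
        rfl
      rw [hcoe]
      funext i
      rw [hLdot u i, hu i]
      rfl
    have := linearIndependent_iff'.1 b.linearIndependent univ u hz
    funext k
    exact this k (mem_univ k)
  obtain ⟨f, ω, h1, h2, h3', h4, h5⟩ := core_classify mm H Hspan
  refine ⟨(f, ω), ⟨h1, h2, h3', h4⟩, ?_⟩
  have hle : W ≤ plane f ω := by
    intro z hz
    rw [mem_plane_iff]
    intro i
    have hrepr := b.sum_repr ⟨z, hz⟩
    have hz1 : z (f i) = mm (f i) ⬝ᵥ (fun k => b.repr ⟨z, hz⟩ k) := by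
      have := congrArg (fun w : W => (w : Fin 6 → ℂ) (f i)) hrepr
      simp only at this
      rw [← this]
      have hcoe : ((∑ k, b.repr ⟨z, hz⟩ k • (b k) : W) : Fin 6 → ℂ)
          = ∑ k, b.repr ⟨z, hz⟩ k • ((b k : W) : Fin 6 → ℂ) := by push_cast; rfl
      rw [hcoe, hLdot]
    have hz2 : z i = mm i ⬝ᵥ (fun k => b.repr ⟨z, hz⟩ k) := by
      have := congrArg (fun w : W => (w : Fin 6 → ℂ) i) hrepr
      simp only at this
      rw [← this]
      have hcoe : ((∑ k, b.repr ⟨z, hz⟩ k • (b k) : W) : Fin 6 → ℂ)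
          = ∑ k, b.repr ⟨z, hz⟩ k • ((b k : W) : Fin 6 → ℂ) := by push_cast; rfl
      rw [hcoe, hLdot]
    rw [hz1, hz2, h5 i, smul_dotProduct, smul_eq_mul]
  have heq : W = plane f ω := by
    apply Submodule.eq_of_le_of_finrank_eq hle
    rw [h3, plane_finrank h1 h2 h4]
  exact heq.symm


/-- The Fermat cubic fourfold `{z₁³ + ⋯ + z₆³ = 0} ⊂ ℙ⁵` contains exactly `405` planes:
the set of `3`-dimensional `ℂ`-linear subspaces `W ⊆ ℂ⁶` on which
`z₁³ + ⋯ + z₆³` vanishes identically has exactly `405` elements. -/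
theorem fermat_cubic_fourfold_has_405_planes :
    {W : Submodule ℂ (Fin 6 → ℂ) |
      Module.finrank ℂ W = 3 ∧ ∀ z ∈ W, ∑ i, z i ^ 3 = 0}.ncard = 405 := by
  classical
  have hset : {W : Submodule ℂ (Fin 6 → ℂ) |
      Module.finrank ℂ W = 3 ∧ ∀ z ∈ W, ∑ i, z i ^ 3 = 0}
      = (fun p : (Fin 6 → Fin 6) × (Fin 6 → ℂ) => plane p.1 p.2) '' Dset := by
    ext W
    constructor
    · rintro ⟨h3, hcubic⟩
      obtain ⟨p, hp, hpw⟩ := mem_S_imp W h3 hcubic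
      exact ⟨p, hp, hpw⟩
    · rintro ⟨p, hp, rfl⟩
      obtain ⟨h1, h2, h3, h4⟩ := hp
      exact ⟨plane_finrank h1 h2 h4, plane_cubic h1 h2 h3⟩
  rw [hset]
  rw [Set.ncard_image_of_injOn (by
    rintro ⟨f, ω⟩ hp ⟨f', ω'⟩ hq h
    obtain ⟨h1, h2, h3, h4⟩ := hp
    obtain ⟨h1', h2', h3', h4'⟩ := hq
    obtain ⟨hf, hω⟩ := plane_inj f' ω' h1 h2 h4 h2' h3' h
    rw [Prod.mk.injEq]
    exact ⟨hf, hω⟩)]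
  rw [← Nat.card_coe_set_eq, Nat.card_congr dsetEquiv, Nat.card_eq_fintype_card, card_Cdat]

end FermatPlanes405
end

section
/- For every integer τ with −8 ≤ τ ≤ 8, the quadratic form q_τ(x,y,z) = 3x² + 7y² + 13z² + 2xy + 2xz + 2τyz satisfies q_τ(x,y,z) ≥ 3 for all (x,y,z) ∈ ℤ³ with (x,y,z) ≠ (0,0,0) (in particular q_τ is positive definite and the associated lattice has no roots), while q₉(0,−1,1) = 2. -/
lemma sq_ge_one_of_ne_zero (a : ℤ) (h : a ≠ 0) : 1 ≤ a ^ 2 := by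
  rcases lt_or_gt_of_ne h with h' | h' <;> nlinarith

lemma R_ge_two (τ y z : ℤ) (h1 : -8 ≤ τ) (h2 : τ ≤ 8) (h : ¬ (y = 0 ∧ z = 0)) :
    2 ≤ 6 * y ^ 2 + 12 * z ^ 2 + 2 * τ * y * z := by
  by_cases hy : y = 0
  · have hz : z ≠ 0 := fun hz => h ⟨hy, hz⟩
    subst hy
    have := sq_ge_one_of_ne_zero z hz
    nlinarith
  by_cases hz : z = 0
  · subst hz
    have := sq_ge_one_of_ne_zero y hy
    nlinarith
  have hy1 := sq_ge_one_of_ne_zero y hy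
  have hz1 := sq_ge_one_of_ne_zero z hz
  rcases le_or_gt 0 (y * z) with hyz | hyz
  · -- y*z ≥ 1
    have hyz1 : 1 ≤ y * z := by
      rcases hyz.lt_or_eq with h' | h'
      · exact h'
      · exact absurd h'.symm (mul_ne_zero hy hz)
    by_cases h34 : 3 * y - 4 * z = 0
    · have h9 : 9 * (6 * y ^ 2 + 12 * z ^ 2 + 2 * τ * y * z)
          = 6 * (3 * y) ^ 2 + 108 * z ^ 2 + 6 * τ * (3 * y) * z := by ring
      have h3y : 3 * y = 4 * z := by linarith
      rw [h3y] at h9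
      have : 12 ≤ 9 * (6 * y ^ 2 + 12 * z ^ 2 + 2 * τ * y * z) := by nlinarith
      omega
    · have hsq : 1 ≤ (3 * y - 4 * z) ^ 2 := sq_ge_one_of_ne_zero _ h34
      nlinarith [mul_nonneg (by linarith : (0:ℤ) ≤ 8 + τ) (by linarith : (0:ℤ) ≤ y * z)]
  · -- y*z ≤ -1
    have hyz1 : y * z ≤ -1 := by omega
    by_cases h34 : 3 * y + 4 * z = 0
    · have h9 : 9 * (6 * y ^ 2 + 12 * z ^ 2 + 2 * τ * y * z)
          = 6 * (3 * y) ^ 2 + 108 * z ^ 2 + 6 * τ * (3 * y) * z := by ring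
      have h3y : 3 * y = -(4 * z) := by linarith
      rw [h3y] at h9
      have : 12 ≤ 9 * (6 * y ^ 2 + 12 * z ^ 2 + 2 * τ * y * z) := by nlinarith
      omega
    · have hsq : 1 ≤ (3 * y + 4 * z) ^ 2 := sq_ge_one_of_ne_zero _ h34
      nlinarith [mul_nonneg (by linarith : (0:ℤ) ≤ 8 - τ) (by linarith : (0:ℤ) ≤ -(y * z))]

/-- For every integer `τ` with `−8 ≤ τ ≤ 8`, the quadratic form
`q_τ(x,y,z) = 3x² + 7y² + 13z² + 2xy + 2xz + 2τyz` satisfies `q_τ(x,y,z) ≥ 3`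
for all `(x,y,z) ∈ ℤ³ \ {0}` (so `q_τ` is positive definite and the corresponding
lattice has no roots), while `q₉(0,−1,1) = 2`. -/
theorem q_tau_min_three_and_q_nine_root :
    (∀ τ : ℤ, -8 ≤ τ → τ ≤ 8 → ∀ x y z : ℤ, ¬ (x = 0 ∧ y = 0 ∧ z = 0) →
      3 ≤ 3 * x ^ 2 + 7 * y ^ 2 + 13 * z ^ 2 + 2 * x * y + 2 * x * z + 2 * τ * y * z) ∧
    (3 * (0 : ℤ) ^ 2 + 7 * (-1 : ℤ) ^ 2 + 13 * (1 : ℤ) ^ 2 + 2 * 0 * (-1) + 2 * 0 * 1 +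
      2 * 9 * (-1) * 1 = 2) := by
  constructor
  · intro τ h1 h2 x y z hne
    by_cases hyz : y = 0 ∧ z = 0
    · obtain ⟨hy, hz⟩ := hyz
      have hx : x ≠ 0 := fun hx => hne ⟨hx, hy, hz⟩
      have := sq_ge_one_of_ne_zero x hx
      subst hy; subst hz
      nlinarith
    · have hR := R_ge_two τ y z h1 h2 hyz
      have hS : 1 ≤ (x + y) ^ 2 + (x + z) ^ 2 + x ^ 2 := by
        by_cases hx : x = 0
        · subst hx
          rcases Decidable.not_and_iff_or_not.mp hyz with hy | hz
          · nlinarith [sq_ge_one_of_ne_zero y hy, sq_nonneg z]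
          · nlinarith [sq_ge_one_of_ne_zero z hz, sq_nonneg y]
        · nlinarith [sq_ge_one_of_ne_zero x hx, sq_nonneg (x + y), sq_nonneg (x + z)]
      nlinarith [hR, hS]
  · norm_num
end

section
/- Let M be a positive definite lattice of rank r ≥ 2 with a basis 𝐛 = (𝔬, μ₁, …, μₙ) (n = r − 1) such that 𝔬 is a distinguished element, and let f = f_{(M,𝐛)}(x₁,…,xₙ) be the associated form of (M,𝐛). Then the following are equivalent: (1) M is admissible; (2) f properly represents an integer satisfying (**); (3) f represents an integer satisfying (**). -/
/-- An integer `d` satisfies property `(**)`: `4 ∤ d`, `9 ∤ d`, and `p ∤ d` for every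
odd prime `p ≡ 2 (mod 3)`. -/
def DStar (d : ℤ) : Prop :=
  ¬ (4 ∣ d) ∧ ¬ (9 ∣ d) ∧ ∀ p : ℕ, p.Prime → p % 2 = 1 → p % 3 = 2 → ¬ ((p : ℤ) ∣ d)

/-- A positive definite lattice `(M, B)` with distinguished element `𝔬` is admissible if
it has a rank `2` primitive sublattice `K` containing `𝔬` whose discriminant
satisfies `(**)`. -/
def IsAdmissible {M : Type*} [AddCommGroup M] [Module ℤ M]
    (B : M →ₗ[ℤ] M →ₗ[ℤ] ℤ) (o : M) : Prop :=
  ∃ (K : Submodule ℤ M) (c : Module.Basis (Fin 2) ℤ K),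
    o ∈ K ∧
    (∀ (x : M) (m : ℤ), m ≠ 0 → m • x ∈ K → x ∈ K) ∧
    DStar (B (c 0 : M) (c 0 : M) * B (c 1 : M) (c 1 : M) -
           B (c 0 : M) (c 1 : M) * B (c 1 : M) (c 0 : M))

/-- `DStar` passes to divisors. -/
lemma DStar.of_dvd {c d : ℤ} (hcd : c ∣ d) (h : DStar d) : DStar c :=
  ⟨fun h4 => h.1 (h4.trans hcd), fun h9 => h.2.1 (h9.trans hcd),
   fun p hp h2 h3 hpd => h.2.2 p hp h2 h3 (hpd.trans hcd)⟩

lemma isUnit_of_sq_dvd_three {d : ℤ} (h : d * d ∣ 3) : IsUnit d := by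
  rw [Int.isUnit_iff]
  by_contra hnu
  push_neg at hnu
  have hd0 : d ≠ 0 := by
    rintro rfl
    norm_num at h
  have hle : d * d ≤ 3 := Int.le_of_dvd (by norm_num) h
  have h2 : 2 ≤ d ∨ d ≤ -2 := by omega
  rcases h2 with h2 | h2 <;> nlinarith

/-- Let `M` be a positive definite lattice of rank `r = n + 1 ≥ 2` with a basis
`𝐛 = (𝔬, μ₁, …, μₙ)` where `𝔬` is distinguished, and let `f` be the associated form of
`(M, 𝐛)`.  Then: `M` admissible ↔ `f` properly represents an integer satisfying `(**)`
↔ `f` represents an integer satisfying `(**)`. -/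
theorem admissible_iff_represents_dstar
    {M : Type*} [AddCommGroup M] [Module ℤ M]
    (n : ℕ) (hn : 1 ≤ n)
    (B : M →ₗ[ℤ] M →ₗ[ℤ] ℤ)
    (hsymm : ∀ x y : M, B x y = B y x)
    (hpos : ∀ x : M, x ≠ 0 → 0 < B x x)
    (b : Module.Basis (Fin (n + 1)) ℤ M)
    (o : M) (ho : b 0 = o) (ho3 : B o o = 3)
    (hoEven : ∀ x : M, B x o = 0 → Even (B x x))
    (f : (Fin n → ℤ) → ℤ)
    (hf : ∀ x : Fin n → ℤ,
      f x = 3 * B (∑ i, x i • b i.succ) (∑ i, x i • b i.succ) -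
            (B o (∑ i, x i • b i.succ)) ^ 2) :
    (IsAdmissible B o ↔
      ∃ x : Fin n → ℤ, (∀ d : ℤ, (∀ i, d ∣ x i) → IsUnit d) ∧ DStar (f x)) ∧
    ((∃ x : Fin n → ℤ, (∀ d : ℤ, (∀ i, d ∣ x i) → IsUnit d) ∧ DStar (f x)) ↔
      ∃ x : Fin n → ℤ, DStar (f x)) := by
  clear hpos hoEven
  obtain rfl : ‹Module ℤ M› = AddCommGroup.toIntModule M :=
    @Subsingleton.elim _ (@Unique.instSubsingleton _ AddCommGroup.uniqueIntModule) _ _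
  -- === zsmul/module-smul bridging toolkit ===
  have hms : ∀ (α γ : ℤ) (y : M), (α * γ) • y = α • (γ • y) := fun α γ y => mul_smul α γ y
  have hsmul_add : ∀ (α : ℤ) (y z : M), α • (y + z) = α • y + α • z :=
    fun α y z => smul_add α y z
  have hsub_smul : ∀ (α γ : ℤ) (y : M), (α - γ) • y = α • y - γ • y :=
    fun α γ y => sub_smul α γ y
  have hBl : ∀ (g : ℤ) (y z : M), B (g • y) z = g * B y z := by
    intro g y z
    have h1 := map_smul B g y
    calc B (g • y) z = (g • B y) z := by rw [← h1]
    _ = g * B y z := rfl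
  have hBr : ∀ (g : ℤ) (y z : M), B y (g • z) = g * B y z := by
    intro g y z; exact map_smul (B y) g z
  have hcoord : ∀ (j : Fin (n + 1)) (g : ℤ) (y : M), b.repr (g • y) j = g * b.repr y j := by
    intro j g y
    have h1 := map_smul b.repr g y
    calc b.repr (g • y) j = (g • b.repr y) j := by rw [h1]
    _ = g * b.repr y j := rfl
  have hrepr_basis : ∀ (j k : Fin (n + 1)), b.repr (b k) j = if k = j then 1 else 0 := by
    intro j k
    rw [b.repr_self, Finsupp.single_apply]
  have hcoordsum : ∀ (x : Fin n → ℤ) (j : Fin (n + 1)),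
      b.repr (∑ i, x i • b i.succ) j = ∑ i, x i * b.repr (b i.succ) j := by
    intro x j
    rw [map_sum b.repr _ Finset.univ, Finsupp.finset_sum_apply]
    exact Finset.sum_congr rfl fun i _ => hcoord _ _ _
  have hvrepr0 : ∀ x : Fin n → ℤ, b.repr (∑ i, x i • b i.succ) 0 = 0 := by
    intro x
    rw [hcoordsum]
    apply Finset.sum_eq_zero
    intro i _
    rw [hrepr_basis]
    simp [Fin.succ_ne_zero]
  have hvreprs : ∀ (x : Fin n → ℤ) (k : Fin n),
      b.repr (∑ i, x i • b i.succ) k.succ = x k := by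
    intro x k
    rw [hcoordsum, Finset.sum_eq_single k]
    · rw [hrepr_basis, if_pos rfl, mul_one]
    · intro i _ hik
      rw [hrepr_basis, if_neg (fun h => hik (Fin.succ_injective n h)), mul_zero]
    · intro h; exact absurd (Finset.mem_univ k) h
  have horepr : ∀ j, b.repr o j = if 0 = j then 1 else 0 := by
    intro j; rw [← ho, hrepr_basis]
  -- homogeneity of f
  have hfsmul : ∀ (x : Fin n → ℤ) (g : ℤ), f (fun i => g * x i) = g ^ 2 * f x := by
    intro x g
    have hv : (∑ i, (g * x i) • b i.succ) = g • ∑ i, x i • b i.succ := by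
      have h1 : g • ∑ i, x i • b i.succ = ∑ i, g • (x i • b i.succ) := Finset.smul_sum
      rw [h1]
      exact Finset.sum_congr rfl fun i _ => hms g (x i) _
    rw [hf, hf, hv, hBl, hBr, hBr]
    ring
  constructor
  · -- Part A : admissible ↔ proper representation
    constructor
    · -- forward: admissible → proper representation
      rintro ⟨K, c, hoK, hKprim, hD⟩
      set e0 : M := (c 0 : M) with he0
      set e1 : M := (c 1 : M) with he1
      set g00 : ℤ := B e0 e0 with hg00
      set g01 : ℤ := B e0 e1 with hg01
      set g11 : ℤ := B e1 e1 with hg11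
      have hsym01 : B e1 e0 = g01 := hsymm e1 e0
      rw [hsym01] at hD
      -- bilinear expansion
      have hBexp : ∀ (s t p q : ℤ) (y z : M), B (s • y + t • z) (p • y + q • z) =
          s * p * B y y + s * q * B y z + t * p * B z y + t * q * B z z := by
        intro s t p q y z
        simp only [map_add, LinearMap.add_apply, hBl, hBr]
        ring
      -- expansion of o in basis of K
      set oK : K := ⟨o, hoK⟩ with hoKdef
      set a : ℤ := c.repr oK 0 with ha
      set β : ℤ := c.repr oK 1 with hβ
      have hoM : o = a • e0 + β • e1 := by
        have h1 := c.sum_repr oK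
        rw [Fin.sum_univ_two] at h1
        have h2 : ((c.repr oK 0 • c 0 + c.repr oK 1 • c 1 : K) : M) = ((oK : K) : M) :=
          congrArg Subtype.val h1
        rw [Submodule.coe_add, Submodule.coe_smul, Submodule.coe_smul] at h2
        exact h2.symm
      have h3' : a * a * g00 + a * β * g01 + β * a * g01 + β * β * g11 = 3 := by
        rw [← ho3]
        conv_rhs => rw [hoM]
        rw [hBexp, hsym01]
      -- coprimality of (a, β)
      have hdiv : ∀ d : ℤ, d ∣ a → d ∣ β → IsUnit d := by
        intro d hda hdb
        obtain ⟨a', ha'⟩ := hda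
        obtain ⟨β', hb'⟩ := hdb
        have hou : o = d • (a' • e0 + β' • e1) := by
          rw [hoM, ha', hb', hms, hms, hsmul_add]
        have hBuu : (3 : ℤ) = d * (d * B (a' • e0 + β' • e1) (a' • e0 + β' • e1)) := by
          rw [← ho3]
          conv_lhs => rw [hou]
          rw [hBl, hBr]
        exact isUnit_of_sq_dvd_three ⟨B (a' • e0 + β' • e1) (a' • e0 + β' • e1), by rw [hBuu]; ring⟩
      have hcop : IsCoprime a β := by
        rw [Int.isCoprime_iff_gcd_eq_one]
        have hu : IsUnit ((Int.gcd a β : ℕ) : ℤ) :=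
          hdiv _ (Int.gcd_dvd_left a β) (Int.gcd_dvd_right a β)
        rw [Int.isUnit_iff] at hu
        omega
      obtain ⟨u', v', huv⟩ := hcop
      set p : ℤ := -v' with hp
      set q : ℤ := u' with hq
      have hdet : a * q - β * p = 1 := by rw [hp, hq]; linear_combination huv
      set w : M := p • e0 + q • e1 with hw
      have hBow : B o w = a * p * g00 + a * q * g01 + β * p * g01 + β * q * g11 := by
        conv_lhs => rw [hoM, hw]
        rw [hBexp, hsym01]
      have hBww : B w w = p * p * g00 + p * q * g01 + q * p * g01 + q * q * g11 := by
        conv_lhs => rw [hw]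
        rw [hBexp, hsym01]
      have hdisc : 3 * B w w - (B o w) ^ 2 = g00 * g11 - g01 * g01 := by
        rw [hBww, hBow, ← h3']
        linear_combination ((a * q - β * p + 1) * (g00 * g11 - g01 * g01)) * hdet
      -- the candidate representation
      set t : ℤ := b.repr w 0 with ht
      set x : Fin n → ℤ := fun i => b.repr w i.succ with hx
      have hwb : w = t • o + ∑ i, x i • b i.succ := by
        have h1 := b.sum_repr w
        rw [Fin.sum_univ_succ, ho] at h1
        exact h1.symm
      have hv : (∑ i, x i • b i.succ) = w - t • o := by
        rw [hwb]; abel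
      have hfx : f x = 3 * B w w - (B o w) ^ 2 := by
        rw [hf x, hv]
        have hBvv : B (w - t • o) (w - t • o) =
            B w w - t * B w o - t * B o w + t * (t * B o o) := by
          simp only [map_sub, LinearMap.sub_apply, hBl, hBr]
          ring
        have hBov : B o (w - t • o) = B o w - t * B o o := by
          simp only [map_sub, hBr]
        rw [hBvv, hBov, hsymm w o, ho3]
        ring
      have hfxD : DStar (f x) := by
        rw [hfx, hdisc]; exact hD
      refine ⟨x, ?_, hfxD⟩
      -- properness
      intro d hd
      by_cases hd0 : d = 0
      · -- then x = 0, and f x = 0, contradicting DStar (f x)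
        subst hd0
        exfalso
        have hx0 : ∀ i, x i = 0 := fun i => zero_dvd_iff.mp (hd i)
        have hw0 : w = t • o := by
          rw [hwb]
          have : (∑ i, x i • b i.succ) = 0 :=
            Finset.sum_eq_zero fun i _ => by rw [hx0 i]; exact zero_smul ℤ _
          rw [this, add_zero]
        have hfx0 : f x = 0 := by
          rw [hfx, hw0, hBr, hBl, hBr, hsymm o o, ho3]
          ring
        rw [hfx0] at hfxD
        exact hfxD.1 ⟨0, by ring⟩
      · -- d ≠ 0 : show d is a unit
        -- linear independence of e0 e1 in M
        have hli : LinearIndependent ℤ ![e0, e1] := by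
          have h1 : LinearIndependent ℤ (fun i : Fin 2 => ((c i : K) : M)) :=
            c.linearIndependent.map' K.subtype (Submodule.ker_subtype K)
          have h2 : ![e0, e1] = fun i : Fin 2 => ((c i : K) : M) := by
            funext i
            fin_cases i <;> rfl
          rw [h2]
          exact h1
        have hpair : ∀ s u : ℤ, s • e0 + u • e1 = 0 → s = 0 ∧ u = 0 :=
          LinearIndependent.pair_iff.mp hli
        -- v' = v / d lies in K
        set v' : M := ∑ i, (x i / d) • b i.succ with hv'
        have hdv' : d • v' = ∑ i, x i • b i.succ := by
          have h1 : d • v' = ∑ i, d • ((x i / d) • b i.succ) := Finset.smul_sum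
          rw [h1]
          refine Finset.sum_congr rfl fun i _ => ?_
          rw [← hms, Int.mul_ediv_cancel' (hd i)]
        have hwK : w ∈ K := by
          rw [hw]
          exact K.add_mem (zsmul_mem (c 0).2 p) (zsmul_mem (c 1).2 q)
        have hv'K : v' ∈ K := by
          refine hKprim v' d hd0 ?_
          rw [hdv', hv]
          exact K.sub_mem hwK (zsmul_mem hoK t)
        set v'K : K := ⟨v', hv'K⟩ with hv'Kdef
        set s : ℤ := c.repr v'K 0 with hs
        set r : ℤ := c.repr v'K 1 with hr
        have hv'M : v' = s • e0 + r • e1 := by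
          have h1 := c.sum_repr v'K
          rw [Fin.sum_univ_two] at h1
          have h2 : ((c.repr v'K 0 • c 0 + c.repr v'K 1 • c 1 : K) : M) = ((v'K : K) : M) :=
            congrArg Subtype.val h1
          rw [Submodule.coe_add, Submodule.coe_smul, Submodule.coe_smul] at h2
          exact h2.symm
        -- main equation in M
        have hmain : (d * s) • e0 + (d * r) • e1 = (p - t * a) • e0 + (q - t * β) • e1 := by
          have h1 : d • v' = w - t • o := by rw [hdv', hv]
          rw [hv'M, hsmul_add, ← hms, ← hms] at h1
          rw [h1, hw, hoM, hsmul_add, ← hms, ← hms, hsub_smul, hsub_smul]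
          abel
        have hcoeff : (d * s - (p - t * a)) • e0 + (d * r - (q - t * β)) • e1 = 0 := by
          rw [hsub_smul (d * s) (p - t * a) e0, hsub_smul (d * r) (q - t * β) e1,
            sub_add_sub_comm, hmain, sub_self]
        obtain ⟨hc1, hc2⟩ := hpair _ _ hcoeff
        have hds : d * s = p - t * a := by linarith
        have hdr : d * r = q - t * β := by linarith
        exact isUnit_of_dvd_one ⟨a * r - β * s, by linear_combination (-1 : ℤ) * hdet + (-a) * hdr + β * hds⟩
    · -- backward: proper representation → admissible
      rintro ⟨x, hxprim, hxD⟩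
      set v : M := ∑ i, x i • b i.succ with hv
      have hxne : ∃ i, x i ≠ 0 := by
        by_contra h
        push_neg at h
        have : IsUnit (0 : ℤ) := hxprim 0 (fun i => by rw [h i])
        simpa using this
      obtain ⟨i₀, hi₀⟩ := hxne
      have hrepr_comb : ∀ (s t : ℤ) (y z : M) (j : Fin (n + 1)),
          b.repr (s • y + t • z) j = s * b.repr y j + t * b.repr z j := by
        intro s t y z j
        rw [map_add, Finsupp.add_apply, hcoord, hcoord]
      have hli : LinearIndependent ℤ ![o, v] := by
        rw [LinearIndependent.pair_iff]
        intro s t hst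
        have hst' : s • o + t • v = 0 := hst
        have h0 : s * b.repr o 0 + t * b.repr v 0 = 0 := by
          rw [← hrepr_comb, hst']; simp
        have hsucc : s * b.repr o i₀.succ + t * b.repr v i₀.succ = 0 := by
          rw [← hrepr_comb, hst']; simp
        rw [horepr, if_pos rfl, hv, hvrepr0] at h0
        rw [horepr, if_neg (Ne.symm (Fin.succ_ne_zero i₀)), hv, hvreprs] at hsucc
        have hs0 : s = 0 := by linarith
        have ht0 : t = 0 := by
          rcases mul_eq_zero.mp (by linarith : t * x i₀ = 0) with h | h
          · exact h
          · exact absurd h hi₀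
        exact ⟨hs0, ht0⟩
      set K : Submodule ℤ M := Submodule.span ℤ (Set.range ![o, v]) with hK
      have hrange : Set.range ![o, v] = {o, v} := by
        rw [Matrix.range_cons, Matrix.range_cons, Matrix.range_empty]
        simp [Set.pair_comm v o]
      have hoK : o ∈ K := Submodule.subset_span (by rw [hrange]; exact Set.mem_insert _ _)
      have hmem : ∀ y : M, y ∈ K ↔ ∃ s t : ℤ, s • o + t • v = y := by
        intro y
        rw [hK, hrange]
        exact Submodule.mem_span_pair
      set c : Module.Basis (Fin 2) ℤ K := Module.Basis.span hli with hc
      have hc0 : (c 0 : M) = o := by rw [hc]; exact congrArg Subtype.val (Module.Basis.span_apply hli 0)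
      have hc1 : (c 1 : M) = v := by rw [hc]; exact congrArg Subtype.val (Module.Basis.span_apply hli 1)
      refine ⟨K, c, hoK, ?_, ?_⟩
      · -- primitivity
        intro y m hm hmy
        obtain ⟨s, t, hst⟩ := (hmem _).mp hmy
        have h0 : s * b.repr o 0 + t * b.repr v 0 = m * b.repr y 0 := by
          rw [← hrepr_comb, hst, hcoord]
        have hsucc : ∀ i : Fin n, s * b.repr o i.succ + t * b.repr v i.succ =
            m * b.repr y i.succ := by
          intro i
          rw [← hrepr_comb, hst, hcoord]
        rw [horepr, if_pos rfl, hv, hvrepr0] at h0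
        have hmx : ∀ i : Fin n, t * x i = m * b.repr y i.succ := by
          intro i
          have := hsucc i
          rw [horepr, if_neg (Ne.symm (Fin.succ_ne_zero i)), hv, hvreprs] at this
          linarith
        -- m ∣ t
        have hmdvd : m ∣ Finset.univ.gcd (fun i => t * x i) :=
          Finset.dvd_gcd fun i _ => ⟨b.repr y i.succ, hmx i⟩
        rw [Finset.gcd_mul_left] at hmdvd
        have hGunit : IsUnit (Finset.univ.gcd x) :=
          hxprim _ (fun i => Finset.gcd_dvd (Finset.mem_univ i))
        have hmt : m ∣ t := by
          have h1 : m ∣ normalize t := (hGunit.dvd_mul_right).mp hmdvd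
          exact dvd_normalize_iff.mp h1
        obtain ⟨t', rfl⟩ := hmt
        -- s = m * (b.repr y 0)
        have hseq : s = m * b.repr y 0 := by linarith
        rw [hmem]
        refine ⟨b.repr y 0, t', ?_⟩
        haveI := b.isTorsionFree
        have hinj : Function.Injective (fun z : M => m • z) := smul_right_injective M hm
        apply hinj
        show m • (b.repr y 0 • o + t' • v) = m • y
        rw [hsmul_add, ← hms, ← hms, ← hseq, hst]
      · -- discriminant
        have heq : B o o * B v v - B o v * B v o = f x := by
          rw [hf x, ← hv, ho3, hsymm v o]
          ring
        rw [hc0, hc1, heq]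
        exact hxD
  · -- Part B : proper representation ↔ representation
    constructor
    · rintro ⟨x, _, hx⟩
      exact ⟨x, hx⟩
    · rintro ⟨x, hx⟩
      set g : ℤ := Finset.univ.gcd x with hg
      have hgdvd : ∀ i, g ∣ x i := fun i => Finset.gcd_dvd (Finset.mem_univ i)
      have hgne : g ≠ 0 := by
        intro h0
        have hx0 : ∀ i, x i = 0 := by
          intro i
          have := hgdvd i
          rw [h0] at this
          exact zero_dvd_iff.mp this
        have hv0 : (∑ i, x i • b i.succ) = 0 :=
          Finset.sum_eq_zero fun i _ => by rw [hx0 i]; exact zero_smul ℤ _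
        have hfx0 : f x = 0 := by
          rw [hf, hv0, map_zero]
          simp
        rw [hfx0] at hx
        exact hx.1 ⟨0, by ring⟩
      set x' : Fin n → ℤ := fun i => x i / g with hx'
      have hxx' : ∀ i, x i = g * x' i := fun i => (Int.mul_ediv_cancel' (hgdvd i)).symm
      have hfxeq : f x = g ^ 2 * f x' := by
        have h1 : x = fun i => g * x' i := funext hxx'
        rw [h1]
        exact hfsmul x' g
      refine ⟨x', ?_, DStar.of_dvd ⟨g ^ 2, by rw [hfxeq]; ring⟩ hx⟩
      intro e he
      have h1 : ∀ i, g * e ∣ x i := fun i => by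
        rw [hxx' i]; exact mul_dvd_mul_left g (he i)
      have hge : g * e ∣ g := Finset.dvd_gcd fun i _ => h1 i
      have hee : e ∣ 1 := by
        rw [← mul_dvd_mul_iff_left hgne, mul_one]
        exact hge
      exact isUnit_of_dvd_one hee
end

section
/- Let n₁, …, n₁₀ be integers with nᵢ ≥ 2 for all i, and let M be the rank 11 positive definite lattice with a basis (𝔬, μ₁, …, μ₁₀) whose Gram matrix is the diagonal matrix diag(3, 2n₁, 2n₂, …, 2n₁₀). Then M is not admissible if any one of the following holds: (1) 3 divides nᵢ for all 1 ≤ i ≤ 10; (2) 2 divides nᵢ for all 1 ≤ i ≤ 10; (3) there exists an odd prime p ≡ 2 (mod 3) such that p divides nᵢ for all 1 ≤ i ≤ 10. -/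
/-- Let `n₁, …, n₁₀` be integers `≥ 2` and let `M` be the rank `11` positive definite
lattice with basis `(𝔬, μ₁, …, μ₁₀)` and Gram matrix `diag(3, 2n₁, …, 2n₁₀)`.
Then `M` is not admissible if (1) `3 ∣ nᵢ` for all `i`, or (2) `2 ∣ nᵢ` for all `i`,
or (3) there is an odd prime `p ≡ 2 (mod 3)` with `p ∣ nᵢ` for all `i`. -/
theorem rank_eleven_diagonal_not_admissible
    {M : Type*} [AddCommGroup M] [Module ℤ M]
    (nn : Fin 10 → ℤ) (hnn : ∀ i, 2 ≤ nn i)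
    (B : M →ₗ[ℤ] M →ₗ[ℤ] ℤ)
    (hsymm : ∀ x y : M, B x y = B y x)
    (b : Module.Basis (Fin 11) ℤ M)
    (hgram : ∀ i j : Fin 11, B (b i) (b j) =
      if i = j then (Fin.cons (3 : ℤ) (fun k : Fin 10 => 2 * nn k) : Fin 11 → ℤ) i else 0)
    (hdiv : (∀ i, (3 : ℤ) ∣ nn i) ∨ (∀ i, (2 : ℤ) ∣ nn i) ∨
      (∃ p : ℕ, p.Prime ∧ p % 2 = 1 ∧ p % 3 = 2 ∧ ∀ i, (p : ℤ) ∣ nn i)) :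
    ¬ IsAdmissible B (b 0) := by
  rintro ⟨K, c, hoK, hprim, hD⟩
  have key : ∀ x y : M, B x y = 3 * b.repr x 0 * b.repr y 0 +
      ∑ k : Fin 10, 2 * nn k * b.repr x k.succ * b.repr y k.succ := by
    intro x y
    conv_lhs => rw [← b.sum_repr x, ← b.sum_repr y]
    simp only [map_sum, map_smul, LinearMap.sum_apply, LinearMap.smul_apply, smul_eq_mul,
      hgram, mul_ite, mul_zero, Finset.mul_sum]
    rw [Finset.sum_comm]
    simp only [Finset.sum_ite_eq, Finset.mem_univ, if_true]
    rw [Fin.sum_univ_succ]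
    simp only [Fin.cons_zero, Fin.cons_succ]
    congr 1
    · ring
    · exact Finset.sum_congr rfl fun k _ => by ring
  have main : ∀ m : ℤ, (∀ k, m ∣ 2 * nn k) →
      m ∣ (B (c 0 : M) (c 0 : M) * B (c 1 : M) (c 1 : M) -
           B (c 0 : M) (c 1 : M) * B (c 1 : M) (c 0 : M)) := by
    intro m hm
    have hmod : ∀ x y : M, m ∣ B x y - 3 * b.repr x 0 * b.repr y 0 := by
      intro x y
      rw [key]
      simpa using Finset.dvd_sum fun k _ => ((hm k).mul_right (b.repr x k.succ)).mul_right _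
    obtain ⟨p1, hp1⟩ := hmod (c 0 : M) (c 0 : M)
    obtain ⟨q1, hq1⟩ := hmod (c 1 : M) (c 1 : M)
    obtain ⟨r1, hr1⟩ := hmod (c 0 : M) (c 1 : M)
    obtain ⟨s1, hs1⟩ := hmod (c 1 : M) (c 0 : M)
    set a := b.repr (c 0 : M) 0
    set e := b.repr (c 1 : M) 0
    refine ⟨B (c 1 : M) (c 1 : M) * p1 + 3 * a ^ 2 * q1 - B (c 1 : M) (c 0 : M) * r1
      - 3 * a * e * s1, ?_⟩
    linear_combination B (c 1 : M) (c 1 : M) * hp1 + 3 * a ^ 2 * hq1 -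
      B (c 1 : M) (c 0 : M) * hr1 - 3 * a * e * hs1
  obtain h3 | h2 | ⟨p, hp, hodd, hm3, hpd⟩ := hdiv
  · have h3B : ∀ x y : M, (3 : ℤ) ∣ B x y := by
      intro x y
      rw [key]
      refine dvd_add ⟨b.repr x 0 * b.repr y 0, by ring⟩
        (Finset.dvd_sum fun k _ => ?_)
      exact (((h3 k).mul_left 2).mul_right _).mul_right _
    obtain ⟨s, hs⟩ := h3B (c 0 : M) (c 0 : M)
    obtain ⟨t, ht⟩ := h3B (c 1 : M) (c 1 : M)
    obtain ⟨u, hu⟩ := h3B (c 0 : M) (c 1 : M)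
    obtain ⟨v, hv⟩ := h3B (c 1 : M) (c 0 : M)
    exact hD.2.1 ⟨s * t - u * v, by rw [hs, ht, hu, hv]; ring⟩
  · refine hD.1 (main 4 fun k => ?_)
    obtain ⟨t, ht⟩ := h2 k
    exact ⟨t, by rw [ht]; ring⟩
  · exact hD.2.2 p hp hodd hm3 (main p fun k => (hpd k).mul_left 2)
end

section
/- Let 𝒮₈ be the set of pairs (τ, n) of integers with 0 ≤ τ ≤ 4, n ≥ 2, and (τ, n) ∉ {(3,2), (4,2), (4,3)}. For (τ, n) ∈ 𝒮₈ let M_{(τ,n)} be the rank 3 positive definite lattice with a basis (𝔬, μ, ν) whose Gram matrix is [[3,1,0],[1,3,τ],[0,τ,2n]], in which 𝔬 is a distinguished element. Then M_{(τ,n)} is admissible if and only if either τ ∈ {1, 3}, or τ ∈ {0, 2, 4} and n is odd. -/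
/- ### Auxiliary number theory -/

private lemma cube_root_contra (p : ℕ) (hp : p.Prime) (hodd : p % 2 = 1) (h3 : p % 3 = 2)
    (u : ZMod p) (hu : u ^ 2 = -3) : False := by
  haveI : Fact p.Prime := ⟨hp⟩
  have hp2 : (2 : ZMod p) ≠ 0 := by
    intro h
    have h2 : (p : ℕ) ∣ 2 := (ZMod.natCast_eq_zero_iff 2 p).mp (by exact_mod_cast h)
    have := (Nat.prime_dvd_prime_iff_eq hp Nat.prime_two).mp h2
    omega
  have hp3 : (3 : ZMod p) ≠ 0 := by
    intro h
    have h2 : (p : ℕ) ∣ 3 := (ZMod.natCast_eq_zero_iff 3 p).mp (by exact_mod_cast h)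
    have := (Nat.prime_dvd_prime_iff_eq hp Nat.prime_three).mp h2
    omega
  set ω : ZMod p := (u - 1) * 2⁻¹ with hω
  have h2inv : (2 : ZMod p) * 2⁻¹ = 1 := ZMod.mul_inv_of_unit 2 (IsUnit.mk0 _ hp2)
  have key : ω ^ 2 + ω + 1 = 0 := by
    rw [hω]
    linear_combination (2⁻¹ : ZMod p)^2 * hu + (-(u+1) * 2⁻¹ - 1) * h2inv
  have hω1 : ω ≠ 1 := by
    intro h
    rw [h] at key
    exact hp3 (by linear_combination key)
  have hω3 : ω ^ 3 = 1 := by linear_combination (ω - 1) * key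
  have hω0 : ω ≠ 0 := by
    intro h
    rw [h] at hω3
    simp at hω3
  have hdvd3 : orderOf ω ∣ 3 := orderOf_dvd_of_pow_eq_one hω3
  have horder : orderOf ω = 3 := by
    rcases (Nat.prime_three.eq_one_or_self_of_dvd _ hdvd3) with h | h
    · exact absurd (orderOf_eq_one_iff.mp h) hω1
    · exact h
  have hfermat : ω ^ (p - 1) = 1 := ZMod.pow_card_sub_one_eq_one hω0
  have : (3 : ℕ) ∣ p - 1 := horder ▸ orderOf_dvd_of_pow_eq_one hfermat
  obtain ⟨k, hk⟩ := this
  have hp1 : 2 ≤ p := hp.two_le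
  omega

private lemma dstar_of_loeschian (x y : ℤ) (h : IsCoprime x y) :
    DStar (2 * (x^2 + x*y + y^2)) := by
  obtain ⟨u, v, huv⟩ := h
  refine ⟨?_, ?_, ?_⟩
  · rintro ⟨k, hk⟩
    have hf : x^2 + x*y + y^2 = 2 * k := by linarith
    rcases Int.even_or_odd x with ⟨a, ha⟩ | ⟨a, ha⟩ <;>
      rcases Int.even_or_odd y with ⟨c, hc⟩ | ⟨c, hc⟩
    · have : (2:ℤ) ∣ 1 := ⟨u * a + v * c, by rw [← huv, ha, hc]; ring⟩
      norm_num at this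
    · have : (1:ℤ) = 2 * (k - (2*a^2 + 2*a*c + a + 2*c^2 + 2*c)) := by
        rw [ha, hc] at hf; linear_combination hf
      omega
    · have : (1:ℤ) = 2 * (k - (2*a^2 + 2*a*c + c + 2*c^2 + 2*a)) := by
        rw [ha, hc] at hf; linear_combination hf
      omega
    · have : (1:ℤ) = 2 * (k - (2*a^2 + 2*a*c + 2*c^2 + 3*a + 3*c + 1)) := by
        rw [ha, hc] at hf; linear_combination hf
      omega
  · intro h9
    have h92 : IsCoprime (9:ℤ) 2 := by
      rw [Int.isCoprime_iff_gcd_eq_one]; decide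
    have h9f : (9:ℤ) ∣ (x^2 + x*y + y^2) := h92.dvd_of_dvd_mul_left h9
    have h3f : (3:ℤ) ∣ (x^2 + x*y + y^2) := dvd_trans ⟨3, by norm_num⟩ h9f
    have h3sq : (3:ℤ) ∣ (x - y)^2 := by
      obtain ⟨w, hw⟩ := h3f
      exact ⟨w - x*y, by linear_combination hw⟩
    have h3xy : (3:ℤ) ∣ (x - y) := Int.prime_three.dvd_of_dvd_pow h3sq
    obtain ⟨k, hk⟩ := h3xy
    obtain ⟨w, hw⟩ := h9f
    have h3m : (3:ℤ) ∣ x * y := by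
      have h3' : 3*(x*y) = 3*(3*(w - k^2)) := by linear_combination hw - (x-y+3*k)*hk
      exact ⟨w - k^2, mul_left_cancel₀ (by norm_num : (3:ℤ) ≠ 0) h3'⟩
    rcases (Int.prime_three.dvd_mul.mp h3m) with h3x | h3y
    · have h3y : (3:ℤ) ∣ y := by
        obtain ⟨m, hm⟩ := h3x
        exact ⟨m - k, by linear_combination hm - hk⟩
      have : (3:ℤ) ∣ 1 := by
        rw [← huv]
        exact Dvd.dvd.add (Dvd.dvd.mul_left h3x u) (Dvd.dvd.mul_left h3y v)
      norm_num at this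
    · have h3x : (3:ℤ) ∣ x := by
        obtain ⟨m, hm⟩ := h3y
        exact ⟨m + k, by linear_combination hm + hk⟩
      have : (3:ℤ) ∣ 1 := by
        rw [← huv]
        exact Dvd.dvd.add (Dvd.dvd.mul_left h3x u) (Dvd.dvd.mul_left h3y v)
      norm_num at this
  · intro p hp hodd h3 hdvd
    haveI : Fact p.Prime := ⟨hp⟩
    have hpint : Prime (p : ℤ) := Nat.prime_iff_prime_int.mp hp
    have hpf : (p:ℤ) ∣ (x^2 + x*y + y^2) := by
      rcases hpint.dvd_mul.mp hdvd with h2 | hf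
      · exfalso
        have := Int.le_of_dvd (by norm_num) h2
        have h2' : p ≤ 2 := by exact_mod_cast this
        interval_cases p <;> omega
      · exact hf
    have h4f : (p:ℤ) ∣ (2*x + y)^2 + 3*y^2 := by
      have : (2*x + y)^2 + 3*y^2 = 4 * (x^2 + x*y + y^2) := by ring
      rw [this]
      exact hpf.mul_left 4
    have hz : ((2*(x:ZMod p) + y)^2 + 3*(y:ZMod p)^2 : ZMod p) = 0 := by
      have := (ZMod.intCast_zmod_eq_zero_iff_dvd _ p).mpr h4f
      push_cast at this
      linear_combination this
    have hp2 : (2 : ZMod p) ≠ 0 := by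
      intro h
      have h2 : (p : ℕ) ∣ 2 := (ZMod.natCast_eq_zero_iff 2 p).mp (by exact_mod_cast h)
      have := (Nat.prime_dvd_prime_iff_eq hp Nat.prime_two).mp h2
      omega
    by_cases hy : (y : ZMod p) = 0
    · have hx0 : (x : ZMod p) = 0 := by
        rw [hy] at hz
        have hzz : (2*(x:ZMod p) + 0)^2 = 0 := by linear_combination hz
        have h2x : 2*(x:ZMod p) + 0 = 0 := pow_eq_zero_iff (by norm_num) |>.mp hzz
        have hxx : (2 : ZMod p) * x = 0 := by linear_combination h2x
        rcases mul_eq_zero.mp hxx with h | h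
        · exact absurd h hp2
        · exact h
      have : ((1:ℤ) : ZMod p) = 0 := by
        rw [← huv]
        push_cast
        rw [hx0, hy]
        ring
      simp at this
    · have hu2 : ((2*(x:ZMod p) + y) * (y:ZMod p)⁻¹)^2 = -3 := by
        have hyi : (y : ZMod p) * (y:ZMod p)⁻¹ = 1 := ZMod.mul_inv_of_unit _ (IsUnit.mk0 _ hy)
        linear_combination ((y:ZMod p)⁻¹)^2 * hz - 3*(1 + (y:ZMod p)*(y:ZMod p)⁻¹) * hyi
      exact cube_root_contra p hp hodd h3 _ hu2

/- ### Transport of bases along equal module structures -/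

private def basisCast {K : Type*} [AddCommMonoid K] {i1 i2 : Module ℤ K}
    (h : i1 = i2) (c : @Module.Basis (Fin 2) ℤ K _ _ i1) : @Module.Basis (Fin 2) ℤ K _ _ i2 := h ▸ c

private lemma basisCast_apply {K : Type*} [AddCommMonoid K] {i1 i2 : Module ℤ K}
    (h : i1 = i2) (c : @Module.Basis (Fin 2) ℤ K _ _ i1) (j : Fin 2) :
    @DFunLike.coe _ _ _ (@Module.Basis.instFunLike _ _ _ _ _ i2) (basisCast h c) j
      = @DFunLike.coe _ _ _ (@Module.Basis.instFunLike _ _ _ _ _ i1) c j := by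
  subst h; rfl

/- ### Bilinear form helpers (with `zsmul`) -/

private lemma bilin_smul_left {M : Type*} [AddCommGroup M] [Module ℤ M]
    (B : M →ₗ[ℤ] M →ₗ[ℤ] ℤ) (c : ℤ) (x y : M) : B (c • x) y = c * B x y := by
  rw [map_zsmul]
  show c • (B x) y = _
  rw [smul_eq_mul]

private lemma bilin_smul_right {M : Type*} [AddCommGroup M] [Module ℤ M]
    (B : M →ₗ[ℤ] M →ₗ[ℤ] ℤ) (c : ℤ) (x y : M) : B x (c • y) = c * B x y := by
  rw [map_zsmul, smul_eq_mul]

private lemma bilin_add_left {M : Type*} [AddCommGroup M] [Module ℤ M]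
    (B : M →ₗ[ℤ] M →ₗ[ℤ] ℤ) (x y z : M) : B (x + y) z = B x z + B y z := by
  rw [map_add, LinearMap.add_apply]

/- ### The construction of admissible sublattices -/

private lemma isAdmissible_mk (τ n : ℤ) {M : Type*} [AddCommGroup M] [Module ℤ M]
    (B : M →ₗ[ℤ] M →ₗ[ℤ] ℤ) (b : Module.Basis (Fin 3) ℤ M)
    (hgram : ∀ i j : Fin 3, B (b i) (b j) = !![3, 1, 0; 1, 3, τ; 0, τ, 2 * n] i j)
    (a x y : ℤ) (hxy : IsCoprime x y)
    (hval : 8*a^2 + 6*a*τ + 6*n = 2*(x^2 + x*y + y^2)) :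
    IsAdmissible B (b 0) := by
  classical
  have e00 : B (b 0) (b 0) = 3 := by simpa using hgram 0 0
  have e01 : B (b 0) (b 1) = 1 := by simpa using hgram 0 1
  have e02 : B (b 0) (b 2) = 0 := by simpa using hgram 0 2
  have e10 : B (b 1) (b 0) = 1 := by simpa using hgram 1 0
  have e20 : B (b 2) (b 0) = 0 := by simpa using hgram 2 0
  have e11 : B (b 1) (b 1) = 3 := by simpa using hgram 1 1
  have e12 : B (b 1) (b 2) = τ := by simpa using hgram 1 2
  have e21 : B (b 2) (b 1) = τ := by simpa using hgram 2 1
  have e22 : B (b 2) (b 2) = 2 * n := by simpa using hgram 2 2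
  set v0 : M := b 0 with hv0
  set v1 : M := a • b 1 + b 2 with hv1
  have hli : LinearIndependent ℤ ![v0, v1] := by
    rw [LinearIndependent.pair_iff]
    intro s t hst
    have h0 := congrArg (fun z => b.repr z 0) hst
    have h2 := congrArg (fun z => b.repr z 2) hst
    simp [hv0, hv1, Finsupp.single_apply] at h0 h2
    exact ⟨h0, h2⟩
  haveI : Subsingleton (Module ℤ ↥(Submodule.span ℤ (Set.range ![v0, v1]))) :=
    @Unique.instSubsingleton _ AddCommGroup.uniqueIntModule
  refine ⟨Submodule.span ℤ (Set.range ![v0, v1]),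
    basisCast (Subsingleton.elim _ _) (Module.Basis.span hli), ?_, ?_, ?_⟩
  · exact Submodule.subset_span ⟨0, rfl⟩
  · intro z m hm hmz
    rw [Matrix.range_cons_cons_empty] at hmz ⊢
    obtain ⟨s, t, hst⟩ := Submodule.mem_span_pair.mp hmz
    have h0 := congrArg (fun w => b.repr w 0) hst
    have h1 := congrArg (fun w => b.repr w 1) hst
    have h2 := congrArg (fun w => b.repr w 2) hst
    simp [hv0, hv1, Finsupp.single_apply] at h0 h1 h2
    have hz1 : b.repr z 1 = a * b.repr z 2 := by
      have hmm : m * b.repr z 1 = m * (a * b.repr z 2) := by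
        rw [← h1, h2]; ring
      exact mul_left_cancel₀ hm hmm
    refine Submodule.mem_span_pair.mpr ⟨b.repr z 0, b.repr z 2, ?_⟩
    apply b.repr.injective
    ext i
    fin_cases i <;>
      simp [hv0, hv1, Finsupp.single_apply, hz1, mul_comm]
  · rw [show ((basisCast (Subsingleton.elim _ _) (Module.Basis.span hli) 0 :
        Submodule.span ℤ (Set.range ![v0, v1])) : M) = v0 by
        rw [basisCast_apply]; simpa using Module.Basis.span_apply hli 0]
    rw [show ((basisCast (Subsingleton.elim _ _) (Module.Basis.span hli) 1 :
        Submodule.span ℤ (Set.range ![v0, v1])) : M) = v1 by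
        rw [basisCast_apply]; simpa using Module.Basis.span_apply hli 1]
    have f00 : B v0 v0 = 3 := by rw [hv0]; exact e00
    have f01 : B v0 v1 = a := by
      rw [hv1, map_add, bilin_smul_right, e01, e02]; ring
    have f10 : B v1 v0 = a := by
      rw [hv1, hv0, bilin_add_left, bilin_smul_left, e10, e20]; ring
    have f11 : B v1 v1 = 3*a^2 + 2*a*τ + 2*n := by
      rw [hv1, bilin_add_left, bilin_smul_left, map_add, map_add, bilin_smul_right,
        bilin_smul_right, e11, e12, e21, e22]
      ring
    rw [f00, f01, f10, f11]
    have heq : 3 * (3*a^2 + 2*a*τ + 2*n) - a * a = 2 * (x^2 + x*y + y^2) := by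
      linear_combination hval
    rw [heq]
    exact dstar_of_loeschian x y hxy

/- ### Main theorem -/

/-- For `(τ, n) ∈ 𝒮₈` (i.e. `0 ≤ τ ≤ 4`, `n ≥ 2`, `(τ,n) ∉ {(3,2),(4,2),(4,3)}`),
let `M_{(τ,n)}` be the rank `3` positive definite lattice with basis `(𝔬, μ, ν)` and
Gram matrix `[[3,1,0],[1,3,τ],[0,τ,2n]]` (in which `𝔬` is distinguished).
Then `M_{(τ,n)}` is admissible iff `τ ∈ {1,3}`, or `τ ∈ {0,2,4}` and `n` is odd. -/
theorem C8_divisor_admissibility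
    (τ n : ℤ) (hτ0 : 0 ≤ τ) (hτ4 : τ ≤ 4) (hn : 2 ≤ n)
    (hex1 : ¬ (τ = 3 ∧ n = 2)) (hex2 : ¬ (τ = 4 ∧ n = 2)) (hex3 : ¬ (τ = 4 ∧ n = 3))
    {M : Type*} [AddCommGroup M] [Module ℤ M]
    (B : M →ₗ[ℤ] M →ₗ[ℤ] ℤ)
    (hsymm : ∀ x y : M, B x y = B y x)
    (b : Module.Basis (Fin 3) ℤ M)
    (hgram : ∀ i j : Fin 3, B (b i) (b j) = !![3, 1, 0; 1, 3, τ; 0, τ, 2 * n] i j) :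
    IsAdmissible B (b 0) ↔ (τ = 1 ∨ τ = 3) ∨ ((τ = 0 ∨ τ = 2 ∨ τ = 4) ∧ Odd n) := by
  have e00 : B (b 0) (b 0) = 3 := by simpa using hgram 0 0
  have e01 : B (b 0) (b 1) = 1 := by simpa using hgram 0 1
  have e02 : B (b 0) (b 2) = 0 := by simpa using hgram 0 2
  have e10 : B (b 1) (b 0) = 1 := by simpa using hgram 1 0
  have e20 : B (b 2) (b 0) = 0 := by simpa using hgram 2 0
  have e11 : B (b 1) (b 1) = 3 := by simpa using hgram 1 1
  have e12 : B (b 1) (b 2) = τ := by simpa using hgram 1 2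
  have e21 : B (b 2) (b 1) = τ := by simpa using hgram 2 1
  have e22 : B (b 2) (b 2) = 2 * n := by simpa using hgram 2 2
  constructor
  · intro had
    by_contra hR
    push_neg at hR
    obtain ⟨h13, h024⟩ := hR
    obtain ⟨hne1, hne3⟩ := h13
    have hτe : ∃ t, τ = 2 * t := ⟨τ / 2, by omega⟩
    obtain ⟨t, ht⟩ := hτe
    have hne : ¬ Odd n := by
      apply h024
      omega
    have hne' : Even n := Int.not_odd_iff_even.mp hne
    obtain ⟨s, hs⟩ := hne'
    have hs' : n = 2 * s := by omega
    obtain ⟨K, c, ho, hprim, hD⟩ := had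
    set X : M := ((c 0 : K) : M) with hX
    set Y : M := ((c 1 : K) : M) with hY
    have hdecX : X = b.repr X 0 • b 0 + b.repr X 1 • b 1 + b.repr X 2 • b 2 := by
      apply b.repr.injective
      ext i
      fin_cases i <;> simp [Finsupp.single_apply]
    have hdecY : Y = b.repr Y 0 • b 0 + b.repr Y 1 • b 1 + b.repr Y 2 • b 2 := by
      apply b.repr.injective
      ext i
      fin_cases i <;> simp [Finsupp.single_apply]
    set u0 := b.repr X 0; set u1 := b.repr X 1; set u2 := b.repr X 2
    set w0 := b.repr Y 0; set w1 := b.repr Y 1; set w2 := b.repr Y 2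
    have expand : ∀ p0 p1 p2 q0 q1 q2 : ℤ,
        B (p0 • b 0 + p1 • b 1 + p2 • b 2) (q0 • b 0 + q1 • b 1 + q2 • b 2)
          = 3*p0*q0 + p0*q1 + p1*q0 + 3*p1*q1 + τ*(p1*q2 + p2*q1) + 2*n*p2*q2 := by
      intro p0 p1 p2 q0 q1 q2
      simp only [bilin_add_left, bilin_smul_left, map_add, LinearMap.add_apply,
        bilin_smul_right, e00, e01, e02, e10, e11, e12, e20, e21, e22]
      ring
    have eXX : B X X = 3*u0*u0 + u0*u1 + u1*u0 + 3*u1*u1 + τ*(u1*u2 + u2*u1) + 2*n*u2*u2 := by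
      conv_lhs => rw [hdecX]
      exact expand u0 u1 u2 u0 u1 u2
    have eYY : B Y Y = 3*w0*w0 + w0*w1 + w1*w0 + 3*w1*w1 + τ*(w1*w2 + w2*w1) + 2*n*w2*w2 := by
      conv_lhs => rw [hdecY]
      exact expand w0 w1 w2 w0 w1 w2
    have eXY : B X Y = 3*u0*w0 + u0*w1 + u1*w0 + 3*u1*w1 + τ*(u1*w2 + u2*w1) + 2*n*u2*w2 := by
      conv_lhs => rw [hdecX, hdecY]
      exact expand u0 u1 u2 w0 w1 w2
    have eYX : B Y X = 3*w0*u0 + w0*u1 + w1*u0 + 3*w1*u1 + τ*(w1*u2 + w2*u1) + 2*n*w2*u2 := by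
      conv_lhs => rw [hdecY, hdecX]
      exact expand w0 w1 w2 u0 u1 u2
    refine absurd ?_ hD.1
    refine ⟨2*u0^2*w1^2 + 3*u0^2*w1*w2*t + 3*u0^2*w2^2*s
      - 4*u0*u1*w0*w1 - 3*u0*u1*w0*w2*t + u0*u1*w1*w2*t + 2*u0*u1*w2^2*s
      - 3*u0*u2*w0*w1*t - 6*u0*u2*w0*w2*s - u0*u2*w1^2*t - 2*u0*u2*w1*w2*s
      + 2*u1^2*w0^2 - u1^2*w0*w2*t + 3*u1^2*w2^2*s - u1^2*w2^2*t^2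
      + 3*u1*u2*w0^2*t + u1*u2*w0*w1*t - 2*u1*u2*w0*w2*s - 6*u1*u2*w1*w2*s
      + 2*u1*u2*w1*w2*t^2
      + 3*u2^2*w0^2*s + 2*u2^2*w0*w1*s + 3*u2^2*w1^2*s - u2^2*w1^2*t^2, ?_⟩
    rw [eXX, eYY, eXY, eYX, ht, hs']
    ring
  · intro h
    rcases h with (h1 | h3) | ⟨_, hodd⟩
    · subst h1
      exact isAdmissible_mk 1 n B b hgram (n - 1) (2*n) (1 - 2*n)
        ⟨1, 1, by ring⟩ (by ring)
    · subst h3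
      exact isAdmissible_mk 3 n B b hgram (n - 7) (2*n - 9) (13 - 2*n)
        ⟨n^2 - 6*n - 3, n^2 - 4*n - 2, by ring⟩ (by ring)
    · obtain ⟨m, hm⟩ := hodd
      rcases ‹τ = 0 ∨ τ = 2 ∨ τ = 4› with h0 | h2 | h4
      · subst h0; subst hm
        exact isAdmissible_mk 0 (2*m+1) B b hgram m (2*m + 2) (-(2*m) - 1)
          ⟨1, 1, by ring⟩ (by ring)
      · subst h2; subst hm
        exact isAdmissible_mk 2 (2*m+1) B b hgram (m - 3) (2*m - 1) (5 - 2*m)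
          ⟨m^2 - 2*m - 1, m^2, by ring⟩ (by ring)
      · subst h4; subst hm
        exact isAdmissible_mk 4 (2*m+1) B b hgram (m - 3) (2*m - 1) (2 - 2*m)
          ⟨1, 1, by ring⟩ (by ring)
end
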